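/- arXiv:funct-an/9707009 — 5 statements merged into one kernel-verified Lean document; each statement's English description precedes it below -/
import Mathlib

section
/- Let α be a strongly continuous one-parameter isometric representation on a Banach space E and z ∈ ℂ. Then for every a ∈ D(α_z) and every y ∈ S(z), one has ‖α_y(a)‖ ≤ max{‖a‖, ‖α_z(a)‖}. -/
open Complex MeasureTheory Filter Topology Set

noncomputable section

/-- The closed horizontal strip between the real axis and the line `Im = z.im`. -/
def hStrip (z : ℂ) : Set ℂ := {y : ℂ | y.im ∈ Set.uIcc 0 z.im}

/-- A strongly continuous one-parameter (contractive, hence isometric) representation. -/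
structure IsOneParamRep {E : Type*} [NormedAddCommGroup E] [NormedSpace ℂ E]
    (α : ℝ → E →L[ℂ] E) : Prop where
  map_add : ∀ s t : ℝ, α (s + t) = (α s).comp (α t)
  map_zero : α 0 = ContinuousLinearMap.id ℂ E
  norm_le : ∀ t : ℝ, ‖α t‖ ≤ 1
  strong_cont : ∀ a : E, Continuous fun t : ℝ => α t a

/-- `(a, b)` lies in the graph of the analytic continuation `α_z`:  there is a function `f`,
continuous on the strip `S(z)`, analytic in its interior, agreeing with `t ↦ α_t a` on `ℝ`,
with `f z = b`. -/
def HasContVal {E : Type*} [NormedAddCommGroup E] [NormedSpace ℂ E]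
    (α : ℝ → E →L[ℂ] E) (z : ℂ) (a b : E) : Prop :=
  ∃ f : ℂ → E, ContinuousOn f (hStrip z) ∧
    DifferentiableOn ℂ f (interior (hStrip z)) ∧
    (∀ t : ℝ, f t = α t a) ∧ f z = b

/-- Transfer of derivatives through double conjugation. -/
lemma hasDerivAt_conj_conj {f : ℂ → ℂ} {d w : ℂ} (h : HasDerivAt f d ((starRingEnd ℂ) w)) :
    HasDerivAt (fun ζ => (starRingEnd ℂ) (f ((starRingEnd ℂ) ζ))) ((starRingEnd ℂ) d) w := by
  rw [hasDerivAt_iff_tendsto_slope] at h ⊢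
  have hconj : Tendsto (fun ζ : ℂ => (starRingEnd ℂ) ζ) (𝓝[≠] w) (𝓝[≠] ((starRingEnd ℂ) w)) := by
    rw [tendsto_nhdsWithin_iff]
    constructor
    · exact tendsto_nhdsWithin_of_tendsto_nhds ((Complex.continuous_conj.tendsto w))
    · filter_upwards [self_mem_nhdsWithin] with ζ (hζ : ζ ≠ w)
      simpa [mem_compl_iff, mem_singleton_iff] using fun hc => hζ ((starRingEnd ℂ).injective hc)
  have := (Complex.continuous_conj.tendsto d).comp (h.comp hconj)
  refine this.congr' ?_
  filter_upwards [self_mem_nhdsWithin] with ζ (hζ : ζ ≠ w)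
  simp only [Function.comp_apply, slope_def_field]
  simp [map_div₀, map_sub]


lemma aux_abs_mem {a t s : ℝ} (hs : s ∈ Set.uIcc a t) : |s - a| ≤ |t - a| := by
  rcases Set.mem_uIcc.mp hs with ⟨h1, h2⟩ | ⟨h1, h2⟩
  · rw [_root_.abs_of_nonneg (by linarith)]
    exact le_trans (by linarith) (le_abs_self _)
  · rw [_root_.abs_of_nonpos (by linarith)]
    exact le_trans (by linarith) (neg_le_abs _)

section Morera
variable {b : ℝ} {H : ℂ → ℂ}

lemma morera_rect (hb : 0 < b)
    (hc : ContinuousOn H (Complex.im ⁻¹' Ioo (-b) b))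
    (hd : ∀ ζ : ℂ, ζ.im ∈ Ioo (-b) b → ζ.im ≠ 0 → DifferentiableAt ℂ H ζ)
    (x x' y' : ℝ) (hy' : y' ∈ Ioo (-b) b) :
    (∫ s in x..x', H s) + I • (∫ u in (0:ℝ)..y', H (x' + u * I)) =
      (∫ s in x..x', H (s + y' * I)) + I • ∫ u in (0:ℝ)..y', H (x + u * I) := by
  have h0 : (0:ℝ) ∈ Ioo (-b) b := by constructor <;> linarith [hb]
  have hsub : Set.uIcc (0:ℝ) y' ⊆ Ioo (-b) b := (Set.ordConnected_Ioo).uIcc_subset h0 hy'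
  have e1 : ((x:ℂ)).im = 0 := by simp
  have e2 : ((x':ℂ) + y' * I).im = y' := by simp
  have key := Complex.integral_boundary_rect_eq_zero_of_continuousOn_of_differentiableOn H
    (x : ℂ) ((x' : ℂ) + y' * I) ?_ ?_
  · simp only [smul_eq_mul] at key ⊢
    norm_num at key
    linear_combination key
  · refine hc.mono ?_
    intro ζ hζ
    rcases (Complex.mem_reProdIm.mp hζ) with ⟨_, h2⟩
    rw [e1, e2] at h2
    exact hsub h2
  · intro ζ hζ
    rcases (Complex.mem_reProdIm.mp hζ) with ⟨_, h2⟩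
    rw [e1, e2] at h2
    have him' : ζ.im ∈ Ioo (min 0 y') (max 0 y') := h2
    have hne : ζ.im ≠ 0 := by
      intro h0'
      rw [h0'] at him'
      rcases him' with ⟨hlt1, hlt2⟩
      rcases le_total y' 0 with hy | hy
      · rw [min_eq_right hy] at hlt1; rw [max_eq_left hy] at hlt2; linarith
      · rw [min_eq_left hy] at hlt1; rw [max_eq_right hy] at hlt2; linarith
    have hmem : ζ.im ∈ Ioo (-b) b := by
      apply hsub
      rw [Set.mem_uIcc]
      rcases him' with ⟨h1', h2'⟩
      rcases le_total 0 y' with hy | hy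
      · left; exact ⟨le_trans (by rw [min_eq_left hy]) h1'.le, h2'.le.trans (by rw [max_eq_right hy])⟩
      · right; exact ⟨le_trans (by rw [min_eq_right hy]) h1'.le, h2'.le.trans (by rw [max_eq_left hy])⟩
    exact (hd ζ hmem hne).differentiableWithinAt
end Morera

section Morera2
variable {b : ℝ} {H : ℂ → ℂ}

lemma morera_strip (hb : 0 < b)
    (hc : ContinuousOn H (Complex.im ⁻¹' Ioo (-b) b))
    (hd : ∀ ζ : ℂ, ζ.im ∈ Ioo (-b) b → ζ.im ≠ 0 → DifferentiableAt ℂ H ζ) :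
    DifferentiableOn ℂ H (Complex.im ⁻¹' Ioo (-b) b) := by
  set U : Set ℂ := Complex.im ⁻¹' Ioo (-b) b with hU_def
  have hU : IsOpen U := isOpen_Ioo.preimage Complex.continuous_im
  have h0b : (0:ℝ) ∈ Ioo (-b) b := by constructor <;> linarith [hb]
  -- integrability of slices
  have hint : ∀ (g : ℝ → ℂ) (x y : ℝ), Continuous g →
      (∀ s ∈ Set.uIcc x y, (g s).im ∈ Ioo (-b) b) →
      IntervalIntegrable (fun s => H (g s)) volume x y := fun g x y hg hgm =>
    (hc.comp hg.continuousOn (fun s hs => hgm s hs)).intervalIntegrable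
  have hintH : ∀ x y : ℝ, IntervalIntegrable (fun s : ℝ => H s) volume x y := fun x y =>
    hint _ x y Complex.continuous_ofReal (fun s _ => by simpa using h0b)
  have hintV : ∀ (r : ℝ) (x y : ℝ), x ∈ Ioo (-b) b → y ∈ Ioo (-b) b →
      IntervalIntegrable (fun u : ℝ => H (r + u * I)) volume x y := by
    intro r x y hx hy
    refine hint _ x y (continuous_const.add (Complex.continuous_ofReal.mul continuous_const))
      (fun s hs => ?_)
    have : s ∈ Ioo (-b) b := (Set.ordConnected_Ioo).uIcc_subset hx hy hs
    simpa using this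
  -- the primitive
  set P : ℂ → ℂ := fun ζ => (∫ s in (0:ℝ)..ζ.re, H s) + I • ∫ u in (0:ℝ)..ζ.im, H (ζ.re + u * I)
    with hP_def
  have hP : ∀ w ∈ U, HasDerivAt P (H w) w := by
    intro w hw
    rw [hasDerivAt_iff_isLittleO, Asymptotics.isLittleO_iff]
    intro c hc'
    -- pick δ so that ball w δ ⊆ U and H varies by at most c/2 there
    have hCA : ContinuousAt H w := hc.continuousAt (hU.mem_nhds hw)
    have hev : ∀ᶠ ζ in 𝓝 w, ζ ∈ U ∧ dist (H ζ) (H w) ≤ c / 2 := by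
      filter_upwards [hU.mem_nhds hw,
        hCA (Metric.closedBall_mem_nhds (H w) (show (0:ℝ) < c/2 by positivity))] with ζ h1 h2
      exact ⟨h1, by simpa [Metric.mem_closedBall] using h2⟩
    rcases Metric.eventually_nhds_iff_ball.mp hev with ⟨δ, hδ0, hδ⟩
    have hmain : ∀ ζ ∈ Metric.ball w (δ/2), ‖P ζ - P w - (ζ - w) • H w‖ ≤ c * ‖ζ - w‖ := by
      intro ζ hζ
      have hζU : ζ ∈ U := (hδ ζ (Metric.ball_subset_ball (by linarith) hζ)).1
      have hwim : w.im ∈ Ioo (-b) b := hw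
      have hζim : ζ.im ∈ Ioo (-b) b := hζU
      -- difference formula
      have key := morera_rect hb hc hd w.re ζ.re ζ.im hζim
      have hsplitH : (∫ s in (0:ℝ)..ζ.re, H s) - (∫ s in (0:ℝ)..w.re, H s)
          = ∫ s in w.re..ζ.re, H s :=
        intervalIntegral.integral_interval_sub_left (hintH 0 ζ.re) (hintH 0 w.re)
      have hsplitV : (∫ u in (0:ℝ)..ζ.im, H (w.re + u * I)) - (∫ u in (0:ℝ)..w.im, H (w.re + u * I))
          = ∫ u in w.im..ζ.im, H (w.re + u * I) :=
        intervalIntegral.integral_interval_sub_left (hintV w.re 0 ζ.im h0b hζim)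
          (hintV w.re 0 w.im h0b hwim)
      have hdiff : P ζ - P w = (∫ s in w.re..ζ.re, H (s + ζ.im * I))
          + I • ∫ u in w.im..ζ.im, H (w.re + u * I) := by
        simp only [hP_def]
        simp only [smul_eq_mul] at key hsplitH hsplitV ⊢
        linear_combination key + hsplitH + I * hsplitV
      -- the linear term
      have hconst1 : (∫ s in w.re..ζ.re, H w) = ((ζ.re - w.re : ℝ) : ℂ) * H w := by
        simp [intervalIntegral.integral_const, Complex.real_smul]
      have hconst2 : (∫ u in w.im..ζ.im, H w) = ((ζ.im - w.im : ℝ) : ℂ) * H w := by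
        simp [intervalIntegral.integral_const, Complex.real_smul]
      have hlin : (ζ - w) • H w = (∫ s in w.re..ζ.re, H w) + I • ∫ u in w.im..ζ.im, H w := by
        rw [hconst1, hconst2, smul_eq_mul, smul_eq_mul]
        have : ζ - w = ((ζ.re - w.re : ℝ) : ℂ) + ((ζ.im - w.im : ℝ) : ℂ) * I := by
          push_cast
          simp [Complex.ext_iff]
        rw [this]; ring
      rw [hdiff, hlin]
      have hintA := hint (fun s : ℝ => (s : ℂ) + ζ.im * I) w.re ζ.re
          (Complex.continuous_ofReal.add continuous_const)
          (fun s _ => by simpa using hζim)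
      have hintB := hintV w.re w.im ζ.im hwim hζim
      have hintCA : IntervalIntegrable (fun _ : ℝ => H w) volume w.re ζ.re :=
        intervalIntegrable_const
      have hintCB : IntervalIntegrable (fun _ : ℝ => H w) volume w.im ζ.im :=
        intervalIntegrable_const
      have step : (∫ s in w.re..ζ.re, H (s + ζ.im * I)) + I • (∫ u in w.im..ζ.im, H (w.re + u * I))
          - ((∫ s in w.re..ζ.re, H w) + I • ∫ u in w.im..ζ.im, H w)
          = (∫ s in w.re..ζ.re, (H (s + ζ.im * I) - H w))
            + I • ∫ u in w.im..ζ.im, (H (w.re + u * I) - H w) := by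
        rw [intervalIntegral.integral_sub hintA hintCA, intervalIntegral.integral_sub hintB hintCB]
        simp only [smul_eq_mul]
        ring
      rw [step]
      -- estimates
      have hdist2 : ∀ ξ : ℂ, ‖ξ - w‖ < δ → ‖H ξ - H w‖ ≤ c/2 := by
        intro ξ hξ'
        have := (hδ ξ (by simpa [Metric.mem_ball, dist_eq_norm] using hξ')).2
        simpa [dist_eq_norm] using this
      have hballζ : ‖ζ - w‖ < δ/2 := by simpa [Metric.mem_ball, dist_eq_norm] using hζ
      have hre : |ζ.re - w.re| ≤ ‖ζ - w‖ := by
        simpa [Complex.sub_re] using Complex.abs_re_le_norm (ζ - w)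
      have him : |ζ.im - w.im| ≤ ‖ζ - w‖ := by
        simpa [Complex.sub_im] using Complex.abs_im_le_norm (ζ - w)
      have hb1 : ‖∫ s in w.re..ζ.re, (H (s + ζ.im * I) - H w)‖ ≤ (c/2) * |ζ.re - w.re| := by
        apply intervalIntegral.norm_integral_le_of_norm_le_const
        intro s hs
        have hs' : s ∈ Set.uIcc w.re ζ.re := Set.uIoc_subset_uIcc hs
        apply hdist2
        have h1 : |s - w.re| ≤ |ζ.re - w.re| := aux_abs_mem hs'
        have : ((s:ℂ) + ζ.im * I - w) = ((s - w.re : ℝ) : ℂ) + ((ζ.im - w.im : ℝ)) * I := by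
          simp [Complex.ext_iff]
        rw [this]
        calc ‖((s - w.re : ℝ) : ℂ) + ((ζ.im - w.im : ℝ)) * I‖
            ≤ ‖((s - w.re : ℝ) : ℂ)‖ + ‖((ζ.im - w.im : ℝ) : ℂ) * I‖ := norm_add_le _ _
          _ = |s - w.re| + |ζ.im - w.im| := by
              simp [← Complex.ofReal_sub, Complex.norm_real]
          _ ≤ ‖ζ - w‖ + ‖ζ - w‖ := add_le_add (h1.trans hre) him
          _ < δ := by linarith
      have hb2 : ‖∫ u in w.im..ζ.im, (H (w.re + u * I) - H w)‖ ≤ (c/2) * |ζ.im - w.im| := by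
        apply intervalIntegral.norm_integral_le_of_norm_le_const
        intro u hu
        have hu' : u ∈ Set.uIcc w.im ζ.im := Set.uIoc_subset_uIcc hu
        apply hdist2
        have h1 : |u - w.im| ≤ |ζ.im - w.im| := aux_abs_mem hu'
        have : ((w.re:ℂ) + u * I - w) = ((u - w.im : ℝ) : ℂ) * I := by
          simp [Complex.ext_iff]
        rw [this]
        calc ‖((u - w.im : ℝ) : ℂ) * I‖ = |u - w.im| := by
              simp [← Complex.ofReal_sub, Complex.norm_real]
          _ ≤ ‖ζ - w‖ := h1.trans him
          _ < δ := by linarith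
      calc ‖(∫ s in w.re..ζ.re, (H (s + ζ.im * I) - H w))
            + I • ∫ u in w.im..ζ.im, (H (w.re + u * I) - H w)‖
          ≤ ‖∫ s in w.re..ζ.re, (H (s + ζ.im * I) - H w)‖
            + ‖I • ∫ u in w.im..ζ.im, (H (w.re + u * I) - H w)‖ := norm_add_le _ _
        _ = ‖∫ s in w.re..ζ.re, (H (s + ζ.im * I) - H w)‖
            + ‖∫ u in w.im..ζ.im, (H (w.re + u * I) - H w)‖ := by
              rw [smul_eq_mul, norm_mul, Complex.norm_I, one_mul]
        _ ≤ (c/2) * |ζ.re - w.re| + (c/2) * |ζ.im - w.im| := add_le_add hb1 hb2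
        _ ≤ (c/2) * ‖ζ - w‖ + (c/2) * ‖ζ - w‖ := by
              have : (0:ℝ) ≤ c/2 := by positivity
              exact add_le_add (mul_le_mul_of_nonneg_left hre this)
                (mul_le_mul_of_nonneg_left him this)
        _ = c * ‖ζ - w‖ := by ring
    -- turn into eventually
    filter_upwards [Metric.ball_mem_nhds w (by positivity : (0:ℝ) < δ/2)] with ζ hζ
    simpa [norm_sub_rev] using hmain ζ hζ
  -- conclude differentiability of H
  have hPdiff : DifferentiableOn ℂ P U := fun w hw => (hP w hw).differentiableAt.differentiableWithinAt
  have hPan : AnalyticOnNhd ℂ P U := hPdiff.analyticOnNhd hU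
  have hderiv : AnalyticOnNhd ℂ (deriv P) U := hPan.deriv
  have heq : ∀ w ∈ U, H w = deriv P w := fun w hw => ((hP w hw).deriv).symm
  exact (hderiv.differentiableOn).congr heq
end Morera2

/-- A function continuous on the closed strip `0 ≤ im ≤ b`, analytic inside, vanishing on the
real axis, vanishes identically (Schwarz reflection + identity theorem). -/
lemma vanish_upper {b : ℝ} (hb : 0 < b) {h : ℂ → ℂ}
    (hc : ContinuousOn h (Complex.im ⁻¹' Icc 0 b))
    (hd : DifferentiableOn ℂ h (Complex.im ⁻¹' Ioo 0 b))
    (h0 : ∀ t : ℝ, h t = 0) : ∀ w : ℂ, w.im ∈ Icc 0 b → h w = 0 := by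
  set H : ℂ → ℂ := fun ζ => if 0 ≤ ζ.im then h ζ else (starRingEnd ℂ) (h ((starRingEnd ℂ) ζ))
    with hH_def
  set U : Set ℂ := Complex.im ⁻¹' Ioo (-b) b with hU_def
  have hU : IsOpen U := isOpen_Ioo.preimage Complex.continuous_im
  have hHreal : ∀ t : ℝ, H t = 0 := by
    intro t
    have : ((t:ℂ)).im = 0 := by simp
    simp only [hH_def, this, le_refl, if_pos]
    exact h0 t
  -- continuity of H on U
  have hg_eq : ∀ ζ : ℂ, ζ.im ≤ 0 → H ζ = (starRingEnd ℂ) (h ((starRingEnd ℂ) ζ)) := by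
    intro ζ hζ
    rcases lt_or_eq_of_le hζ with hlt | heq
    · simp only [hH_def]; rw [if_neg (not_le.mpr hlt)]
    · have hζre : ζ = (ζ.re : ℂ) := Complex.ext (by simp) (by simp [← heq])
      simp only [hH_def, if_pos (le_of_eq heq)]
      rw [hζre, Complex.conj_ofReal]
      simp [h0]
  have hS2cont : ContinuousOn (fun ζ => (starRingEnd ℂ) (h ((starRingEnd ℂ) ζ)))
      (U ∩ {ζ : ℂ | ζ.im ≤ 0}) := by
    apply Complex.continuous_conj.comp_continuousOn
    apply hc.comp Complex.continuous_conj.continuousOn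
    intro ζ hζ
    rcases hζ with ⟨(hζU : ζ.im ∈ Ioo (-b) b), (hζ0 : ζ.im ≤ 0)⟩
    simp only [Set.mem_preimage, Complex.conj_im]
    constructor
    · linarith
    · linarith [hζU.1]
  have hS1cont : ContinuousOn H (U ∩ {ζ : ℂ | 0 ≤ ζ.im}) := by
    refine ContinuousOn.congr (hc.mono ?_) ?_
    · intro ζ hζ
      rcases hζ with ⟨(hζU : ζ.im ∈ Ioo (-b) b), (hζ0 : 0 ≤ ζ.im)⟩
      exact ⟨hζ0, hζU.2.le⟩
    · intro ζ hζ
      simp only [hH_def]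
      exact if_pos hζ.2
  have hS2cont' : ContinuousOn H (U ∩ {ζ : ℂ | ζ.im ≤ 0}) :=
    hS2cont.congr (fun ζ hζ => hg_eq ζ hζ.2)
  have hHcont : ContinuousOn H U := by
    intro x hx
    have hsub : U ⊆ (U ∩ {ζ : ℂ | 0 ≤ ζ.im}) ∪ (U ∩ {ζ : ℂ | ζ.im ≤ 0}) := by
      intro ζ hζ
      rcases le_total 0 ζ.im with hle | hle
      · exact Or.inl ⟨hζ, hle⟩
      · exact Or.inr ⟨hζ, hle⟩
    have hclosed1 : IsClosed {ζ : ℂ | 0 ≤ ζ.im} := isClosed_le continuous_const Complex.continuous_im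
    have hclosed2 : IsClosed {ζ : ℂ | ζ.im ≤ 0} := isClosed_le Complex.continuous_im continuous_const
    have cwa : ContinuousWithinAt H ((U ∩ {ζ : ℂ | 0 ≤ ζ.im}) ∪ (U ∩ {ζ : ℂ | ζ.im ≤ 0})) x := by
      rcases lt_trichotomy x.im 0 with hlt | heq | hgt
      · refine ContinuousWithinAt.union ?_ (hS2cont' x ⟨hx, hlt.le⟩)
        apply continuousWithinAt_of_notMem_closure
        intro hmem
        have := hclosed1.closure_subset_iff.mpr (Set.inter_subset_right) hmem
        exact absurd this (not_le.mpr hlt)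
      · exact (hS1cont x ⟨hx, heq.ge⟩).union (hS2cont' x ⟨hx, heq.le⟩)
      · refine ContinuousWithinAt.union (hS1cont x ⟨hx, hgt.le⟩) ?_
        apply continuousWithinAt_of_notMem_closure
        intro hmem
        have := hclosed2.closure_subset_iff.mpr (Set.inter_subset_right) hmem
        exact absurd this (not_le.mpr hgt)
    exact cwa.mono hsub
  -- differentiability of H off the real axis
  have hHdiff : ∀ ζ : ℂ, ζ.im ∈ Ioo (-b) b → ζ.im ≠ 0 → DifferentiableAt ℂ H ζ := by
    intro ζ hζ hne
    rcases hne.lt_or_gt with hlt | hgt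
    · -- lower half: use reflection
      have hconjmem : ((starRingEnd ℂ) ζ).im ∈ Ioo 0 b := by
        simp only [Complex.conj_im]
        exact ⟨by linarith, by linarith [hζ.1]⟩
      have hdat : DifferentiableAt ℂ h ((starRingEnd ℂ) ζ) :=
        hd.differentiableAt ((isOpen_Ioo.preimage Complex.continuous_im).mem_nhds hconjmem)
      have hder := hasDerivAt_conj_conj hdat.hasDerivAt
      apply hder.differentiableAt.congr_of_eventuallyEq
      have hopen : IsOpen {ξ : ℂ | ξ.im < 0} := isOpen_lt Complex.continuous_im continuous_const
      filter_upwards [hopen.mem_nhds hlt] with ξ (hξ : ξ.im < 0)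
      simp only [hH_def]
      rw [if_neg (not_le.mpr hξ)]
    · -- upper half: H = h near ζ
      have hdat : DifferentiableAt ℂ h ζ :=
        hd.differentiableAt ((isOpen_Ioo.preimage Complex.continuous_im).mem_nhds
          ⟨hgt, hζ.2⟩)
      apply hdat.congr_of_eventuallyEq
      have hopen : IsOpen {ξ : ℂ | 0 < ξ.im} := isOpen_lt continuous_const Complex.continuous_im
      filter_upwards [hopen.mem_nhds hgt] with ξ (hξ : 0 < ξ.im)
      simp only [hH_def]
      rw [if_pos hξ.le]
  -- H is analytic on U and vanishes frequently near 0, so H ≡ 0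
  have hHan : AnalyticOnNhd ℂ H U := (morera_strip hb hHcont hHdiff).analyticOnNhd hU
  have hUconv : Convex ℝ U := by
    have : U = Complex.imLm ⁻¹' Ioo (-b) b := rfl
    rw [this]
    exact (convex_Ioo (-b) b).linear_preimage _
  have h0U : (0:ℂ) ∈ U := by
    simp only [hU_def, Set.mem_preimage, Complex.zero_im]
    exact ⟨by linarith, hb⟩
  have hfreq : ∃ᶠ ζ in 𝓝[≠] (0:ℂ), H ζ = 0 := by
    have hseq : Tendsto (fun n : ℕ => (((1:ℝ)/(n+1) : ℝ) : ℂ)) atTop (𝓝[≠] 0) := by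
      rw [tendsto_nhdsWithin_iff]
      constructor
      · have h2 := (Complex.continuous_ofReal.tendsto 0).comp
          tendsto_one_div_add_atTop_nhds_zero_nat
        rw [Complex.ofReal_zero] at h2
        exact h2.congr fun n => rfl
      · filter_upwards with n
        simp only [Set.mem_compl_iff, Set.mem_singleton_iff]
        intro hcon
        have : (1:ℝ)/(n+1) = 0 := by exact_mod_cast hcon
        have : (0:ℝ) < 1/(n+1) := by positivity
        linarith
    exact hseq.frequently ((Eventually.of_forall (fun n : ℕ => hHreal ((1:ℝ)/((n:ℝ)+1)))).frequently)
  have hHzero : Set.EqOn H 0 U :=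
    hHan.eqOn_zero_of_preconnected_of_frequently_eq_zero hUconv.isPreconnected h0U hfreq
  -- transfer back to h
  have hzero_lt : ∀ w : ℂ, w.im ∈ Set.Ico 0 b → h w = 0 := by
    intro w hw
    have hwU : w ∈ U := by
      simp only [hU_def, Set.mem_preimage]
      exact ⟨by linarith [hw.1], hw.2⟩
    have := hHzero hwU
    simp only [hH_def] at this
    rw [if_pos hw.1] at this
    exact this
  intro w hw
  rcases lt_or_eq_of_le hw.2 with hlt | heq
  · exact hzero_lt w ⟨hw.1, hlt⟩
  · -- top boundary: limit from inside
    have him : ∀ r : ℝ, (w - (r:ℂ) * I).im = b - r := by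
      intro r
      simp [Complex.sub_im, Complex.mul_im, heq]
    have hmem' : ∀ n : ℕ, (w - ((b/((n:ℝ)+1) : ℝ) : ℂ) * I).im ∈ Set.Ico 0 b := by
      intro n
      rw [him]
      have hpos : 0 < b/((n:ℝ)+1) := by positivity
      have hle : b/((n:ℝ)+1) ≤ b := by
        rw [div_le_iff₀ (by positivity)]
        nlinarith
      exact ⟨by linarith, by linarith⟩
    have hseq : Tendsto (fun n : ℕ => w - ((b/((n:ℝ)+1) : ℝ) : ℂ) * I) atTop
        (𝓝[Complex.im ⁻¹' Icc 0 b] w) := by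
      rw [tendsto_nhdsWithin_iff]
      constructor
      · have h1 : Tendsto (fun n : ℕ => (b/((n:ℝ)+1) : ℝ)) atTop (𝓝 0) := by
          have h2 := tendsto_one_div_add_atTop_nhds_zero_nat.const_mul b
          rw [mul_zero] at h2
          exact h2.congr fun n => by rw [mul_one_div]
        have h2 := ((Complex.continuous_ofReal.tendsto 0).comp h1).mul_const I
        rw [Complex.ofReal_zero, zero_mul] at h2
        have h3 := (tendsto_const_nhds (x := w) (f := atTop (α := ℕ))).sub h2
        rw [sub_zero] at h3
        exact h3.congr fun n => rfl
      · filter_upwards with n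
        have := hmem' n
        simp only [Set.mem_preimage]
        exact ⟨this.1, this.2.le⟩
    have hcw : ContinuousWithinAt h (Complex.im ⁻¹' Icc 0 b) w := hc w hw
    have hlim := hcw.tendsto.comp hseq
    have hval : ∀ n : ℕ, h (w - ((b/((n:ℝ)+1) : ℝ) : ℂ) * I) = 0 := fun n =>
      hzero_lt _ (hmem' n)
    have hzero : Tendsto (fun _ : ℕ => (0:ℂ)) atTop (𝓝 (h w)) := by
      refine hlim.congr fun n => ?_
      have hv := hval n
      simp only [Function.comp]
      push_cast at hv ⊢
      exact hv
    exact tendsto_nhds_unique hzero tendsto_const_nhds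

lemma ioo_subset_interior_hStrip (z : ℂ) :
    Complex.im ⁻¹' Ioo (min 0 z.im) (max 0 z.im) ⊆ interior (hStrip z) := by
  apply interior_maximal
  · intro w hw
    have : w.im ∈ Set.uIcc 0 z.im := by
      rw [Set.uIcc]
      exact ⟨(hw.1).le, (hw.2).le⟩
    exact this
  · exact isOpen_Ioo.preimage Complex.continuous_im

lemma vanish_hStrip {z : ℂ} (hz : z.im ≠ 0) {h : ℂ → ℂ}
    (hc : ContinuousOn h (hStrip z))
    (hdiff : DifferentiableOn ℂ h (Complex.im ⁻¹' Ioo (min 0 z.im) (max 0 z.im)))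
    (h0 : ∀ t : ℝ, h t = 0) : ∀ w ∈ hStrip z, h w = 0 := by
  rcases Ne.lt_or_gt hz with hneg | hpos
  · -- z.im < 0 : reflect
    have hb : 0 < -z.im := by linarith
    have hset : hStrip z = Complex.im ⁻¹' Icc z.im 0 := by
      ext w
      simp only [hStrip, Set.mem_setOf_eq, Set.mem_preimage]
      rw [Set.uIcc_of_ge hneg.le]
    have key := vanish_upper hb (h := fun ζ => (starRingEnd ℂ) (h ((starRingEnd ℂ) ζ)))
      ?_ ?_ ?_
    · intro w hw
      have hw' : ((starRingEnd ℂ) w).im ∈ Icc 0 (-z.im) := by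
        rw [hset] at hw
        simp only [Complex.conj_im]
        exact ⟨by linarith [hw.2], by linarith [hw.1]⟩
      have := key ((starRingEnd ℂ) w) hw'
      rw [Complex.conj_conj] at this
      exact star_eq_zero.mp this
    · apply Complex.continuous_conj.comp_continuousOn
      apply hc.comp Complex.continuous_conj.continuousOn
      intro ζ hζ
      rw [hset]
      simp only [Set.mem_preimage, Complex.conj_im]
      rcases hζ with ⟨h1, h2⟩
      exact ⟨by linarith, by linarith⟩
    · intro ζ hζ
      have hζ' : ζ.im ∈ Ioo 0 (-z.im) := hζ
      have hconjmem : (starRingEnd ℂ) ζ ∈ Complex.im ⁻¹' Ioo (min 0 z.im) (max 0 z.im) := by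
        simp only [Set.mem_preimage, Complex.conj_im]
        rw [min_eq_right hneg.le, max_eq_left hneg.le]
        exact ⟨by linarith [hζ'.2], by linarith [hζ'.1]⟩
      have hdat : DifferentiableAt ℂ h ((starRingEnd ℂ) ζ) :=
        hdiff.differentiableAt ((isOpen_Ioo.preimage Complex.continuous_im).mem_nhds hconjmem)
      exact (hasDerivAt_conj_conj hdat.hasDerivAt).differentiableAt.differentiableWithinAt
    · intro t
      show (starRingEnd ℂ) (h ((starRingEnd ℂ) (t:ℂ))) = 0
      rw [Complex.conj_ofReal, h0, map_zero]
  · -- z.im > 0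
    have hset : hStrip z = Complex.im ⁻¹' Icc 0 z.im := by
      ext w
      simp only [hStrip, Set.mem_setOf_eq, Set.mem_preimage]
      rw [Set.uIcc_of_le hpos.le]
    have hd' : DifferentiableOn ℂ h (Complex.im ⁻¹' Ioo 0 z.im) := by
      apply hdiff.mono
      intro w hw
      simp only [Set.mem_preimage] at *
      rw [min_eq_left hpos.le, max_eq_right hpos.le]
      exact hw
    have key := vanish_upper hpos (hset ▸ hc) hd' h0
    intro w hw
    exact key w (by rwa [hset] at hw)

lemma vanish_hStrip_vec {E : Type*} [NormedAddCommGroup E] [NormedSpace ℂ E]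
    {z : ℂ} (hz : z.im ≠ 0) {g : ℂ → E}
    (hc : ContinuousOn g (hStrip z))
    (hdiff : DifferentiableOn ℂ g (Complex.im ⁻¹' Ioo (min 0 z.im) (max 0 z.im)))
    (h0 : ∀ t : ℝ, g t = 0) : ∀ w ∈ hStrip z, g w = 0 := by
  intro w hw
  apply NormedSpace.eq_zero_of_forall_dual_eq_zero ℂ
  intro φ
  exact vanish_hStrip hz (φ.continuous.comp_continuousOn hc)
    (φ.differentiable.comp_differentiableOn hdiff) (fun t => by show φ (g t) = 0; rw [h0 t, map_zero]) w hw

lemma rep_translate {E : Type*} [NormedAddCommGroup E] [NormedSpace ℂ E]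
    {α : ℝ → E →L[ℂ] E} (hα : IsOneParamRep α) {z : ℂ} (hz : z.im ≠ 0) {a : E} {f : ℂ → E}
    (hf1 : ContinuousOn f (hStrip z))
    (hf2 : DifferentiableOn ℂ f (interior (hStrip z)))
    (hf3 : ∀ t : ℝ, f t = α t a) :
    ∀ w ∈ hStrip z, ∀ t : ℝ, f (w + (t:ℂ)) = α t (f w) := by
  intro w hw t
  have hmaps : ∀ s : Set ℝ, ∀ ζ : ℂ, ζ.im ∈ s → (ζ + (t:ℂ)).im ∈ s := by
    intro s ζ hζ
    simpa using hζ
  have hg := vanish_hStrip_vec (g := fun ζ => f (ζ + (t:ℂ)) - α t (f ζ)) hz ?_ ?_ ?_ w hw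
  · exact sub_eq_zero.mp hg
  · apply ContinuousOn.sub
    · exact hf1.comp (continuous_id.add continuous_const).continuousOn
        (fun ζ hζ => hmaps _ ζ hζ)
    · exact (α t).continuous.comp_continuousOn hf1
  · apply DifferentiableOn.sub
    · apply DifferentiableOn.comp (hf2.mono (ioo_subset_interior_hStrip z))
        ((differentiable_id.add_const _).differentiableOn)
      intro ζ hζ
      exact hmaps _ ζ hζ
    · exact (α t).differentiable.comp_differentiableOn
        (hf2.mono (ioo_subset_interior_hStrip z))
  · intro s
    show f ((s:ℂ) + (t:ℂ)) - α t (f (s:ℂ)) = 0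
    have hcast : ((s:ℂ) + (t:ℂ)) = ((s + t : ℝ) : ℂ) := by push_cast; ring
    rw [hcast, hf3, hf3]
    rw [show s + t = t + s from add_comm s t, hα.map_add t s]
    simp


/-- Phragmén–Lindelöf bound: for `a ∈ D(α_z)` and `y ∈ S(z)`,
`‖α_y a‖ ≤ max ‖a‖ ‖α_z a‖` (here `f` is the analytic extension, so `f y = α_y a` and
`f z = α_z a`). -/
theorem cont_norm_bound
    {E : Type*} [NormedAddCommGroup E] [NormedSpace ℂ E] [CompleteSpace E]
    {α : ℝ → E →L[ℂ] E} (hα : IsOneParamRep α) (z : ℂ) (a : E) (f : ℂ → E)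
    (hf1 : ContinuousOn f (hStrip z))
    (hf2 : DifferentiableOn ℂ f (interior (hStrip z)))
    (hf3 : ∀ t : ℝ, f t = α t a) :
    ∀ y ∈ hStrip z, ‖f y‖ ≤ max ‖a‖ ‖f z‖ := by
  intro y hy
  have hcontr : ∀ (t : ℝ) (x : E), ‖α t x‖ ≤ ‖x‖ := by
    intro t x
    calc ‖α t x‖ ≤ ‖α t‖ * ‖x‖ := (α t).le_opNorm x
      _ ≤ 1 * ‖x‖ := mul_le_mul_of_nonneg_right (hα.norm_le t) (norm_nonneg x)
      _ = ‖x‖ := one_mul _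
  by_cases hz : z.im = 0
  · -- degenerate strip
    have : y.im = 0 := by
      have := hy
      simp only [hStrip, Set.mem_setOf_eq, hz, Set.uIcc_self, Set.mem_singleton_iff] at this
      exact this
    have hyre : y = (y.re : ℂ) := Complex.ext (by simp) (by simp [this])
    rw [hyre, hf3]
    exact le_max_of_le_left (hcontr _ _)
  · -- main case
    have htrans := rep_translate hα hz hf1 hf2 hf3
    -- bound on the imaginary segment
    have hK : IsCompact ((fun r : ℝ => (r : ℂ) * I) '' Set.uIcc 0 z.im) :=
      (isCompact_uIcc).image (Complex.continuous_ofReal.mul continuous_const)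
    have hKsub : ((fun r : ℝ => (r : ℂ) * I) '' Set.uIcc 0 z.im) ⊆ hStrip z := by
      rintro - ⟨r, hr, rfl⟩
      show ((r:ℂ) * I).im ∈ Set.uIcc 0 z.im
      simpa using hr
    obtain ⟨C₀, hC₀⟩ := hK.exists_bound_of_continuousOn (hf1.mono hKsub)
    -- f is bounded on the strip
    have hbdd : ∀ w ∈ hStrip z, ‖f w‖ ≤ C₀ := by
      intro w hw
      have hw0 : ((w.im : ℂ) * I) ∈ hStrip z := by
        show ((w.im:ℂ) * I).im ∈ Set.uIcc 0 z.im
        have hw' : w.im ∈ Set.uIcc 0 z.im := hw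
        simpa using hw'
      have hsplit : w = ((w.im : ℂ) * I) + (w.re : ℂ) := by
        rw [add_comm]; exact (Complex.re_add_im w).symm
      rw [hsplit, htrans _ hw0 w.re]
      exact le_trans (hcontr _ _) (hC₀ _ ⟨w.im, hw, rfl⟩)
    -- boundary bounds
    have hb0 : ∀ w : ℂ, w.im = 0 → ‖f w‖ ≤ max ‖a‖ ‖f z‖ := by
      intro w hw
      have hwre : w = (w.re : ℂ) := Complex.ext (by simp) (by simp [hw])
      rw [hwre, hf3]
      exact le_max_of_le_left (hcontr _ _)
    have hbz : ∀ w : ℂ, w.im = z.im → ‖f w‖ ≤ max ‖a‖ ‖f z‖ := by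
      intro w hw
      have hzmem : z ∈ hStrip z := by
        show z.im ∈ Set.uIcc 0 z.im
        exact Set.right_mem_uIcc
      have hsplit : w = z + ((w.re - z.re : ℝ) : ℂ) := by
        apply Complex.ext
        · simp
        · simp [hw]
      rw [hsplit, htrans _ hzmem _]
      exact le_max_of_le_right (hcontr _ _)
    -- apply Phragmén–Lindelöf on the horizontal strip
    have hym : y.im ∈ Set.uIcc 0 z.im := hy
    rcases Ne.lt_or_gt hz with hneg | hpos
    · -- strip between z.im and 0
      have hset : Complex.im ⁻¹' Icc z.im 0 = hStrip z := by
        ext w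
        simp only [hStrip, Set.mem_setOf_eq, Set.mem_preimage]
        rw [Set.uIcc_of_ge hneg.le]
      apply PhragmenLindelof.horizontal_strip (a := z.im) (b := (0:ℝ))
        (C := max ‖a‖ ‖f z‖) (f := f) ?_ ?_ (fun w hw => hbz w hw) (fun w hw => hb0 w hw) ?_ ?_
      · constructor
        · apply hf2.mono
          refine subset_trans ?_ (ioo_subset_interior_hStrip z)
          intro w hw
          simp only [Set.mem_preimage] at *
          rwa [min_eq_right hneg.le, max_eq_left hneg.le]
        · apply hf1.mono
          refine subset_trans (closure_minimal ?_ ?_) hset.subset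
          · exact fun w hw => ⟨(hw : w.im ∈ Ioo z.im 0).1.le, (hw : w.im ∈ Ioo z.im 0).2.le⟩
          · exact (isClosed_Icc).preimage Complex.continuous_im
      · refine ⟨0, div_pos Real.pi_pos (by linarith), 0, ?_⟩
        apply Asymptotics.IsBigO.of_bound (max C₀ 1)
        have : ∀ w ∈ Complex.im ⁻¹' Ioo z.im 0,
            ‖f w‖ ≤ max C₀ 1 * ‖Real.exp (0 * Real.exp (0 * |w.re|))‖ := by
          intro w hw
          have : ‖f w‖ ≤ C₀ := hbdd w (hset ▸ Set.mem_of_mem_of_subset hw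
            (fun x hx => ⟨(hx : x.im ∈ Ioo z.im 0).1.le, (hx : x.im ∈ Ioo z.im 0).2.le⟩))
          simp only [zero_mul, Real.exp_zero, norm_one, mul_one]
          exact this.trans (le_max_left _ _)
        exact (Filter.eventually_principal.mpr this).filter_mono inf_le_right
      · exact (Set.uIcc_of_ge hneg.le ▸ hym).1
      · exact (Set.uIcc_of_ge hneg.le ▸ hym).2
    · -- strip between 0 and z.im
      have hset : Complex.im ⁻¹' Icc 0 z.im = hStrip z := by
        ext w
        simp only [hStrip, Set.mem_setOf_eq, Set.mem_preimage]
        rw [Set.uIcc_of_le hpos.le]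
      apply PhragmenLindelof.horizontal_strip (a := (0:ℝ)) (b := z.im)
        (C := max ‖a‖ ‖f z‖) (f := f) ?_ ?_ (fun w hw => hb0 w hw) (fun w hw => hbz w hw) ?_ ?_
      · constructor
        · apply hf2.mono
          refine subset_trans ?_ (ioo_subset_interior_hStrip z)
          intro w hw
          simp only [Set.mem_preimage] at *
          rwa [min_eq_left hpos.le, max_eq_right hpos.le]
        · apply hf1.mono
          refine subset_trans (closure_minimal ?_ ?_) hset.subset
          · exact fun w hw => ⟨(hw : w.im ∈ Ioo 0 z.im).1.le, (hw : w.im ∈ Ioo 0 z.im).2.le⟩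
          · exact (isClosed_Icc).preimage Complex.continuous_im
      · refine ⟨0, div_pos Real.pi_pos (by linarith), 0, ?_⟩
        apply Asymptotics.IsBigO.of_bound (max C₀ 1)
        have : ∀ w ∈ Complex.im ⁻¹' Ioo 0 z.im,
            ‖f w‖ ≤ max C₀ 1 * ‖Real.exp (0 * Real.exp (0 * |w.re|))‖ := by
          intro w hw
          have : ‖f w‖ ≤ C₀ := hbdd w (hset ▸ Set.mem_of_mem_of_subset hw
            (fun x hx => ⟨(hx : x.im ∈ Ioo 0 z.im).1.le, (hx : x.im ∈ Ioo 0 z.im).2.le⟩))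
          simp only [zero_mul, Real.exp_zero, norm_one, mul_one]
          exact this.trans (le_max_left _ _)
        exact (Filter.eventually_principal.mpr this).filter_mono inf_le_right
      · exact (Set.uIcc_of_le hpos.le ▸ hym).1
      · exact (Set.uIcc_of_le hpos.le ▸ hym).2
end
end

section
/- Let α be a strongly continuous one-parameter isometric representation on a Banach space E, and let y, z ∈ ℂ lie on the same side of the real axis (Im y and Im z have the same sign, or one is zero). Then α_y ∘ α_z = α_{y+z} as unbounded operators, i.e. D(α_y α_z) = D(α_{y+z}) and they agree there. -/
open Complex MeasureTheory Filter Topology Set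

noncomputable section

namespace CCAux

variable {E : Type*} [NormedAddCommGroup E] [NormedSpace ℂ E] [CompleteSpace E]
set_option linter.unusedSectionVars false

/-- Rectangle contour integral (same shape as in mathlib's Cauchy–Goursat theorem). -/
def rectInt (f : ℂ → E) (x₁ x₂ y₁ y₂ : ℝ) : E :=
  (∫ x : ℝ in x₁..x₂, f (x + y₁ * I)) - (∫ x : ℝ in x₁..x₂, f (x + y₂ * I)) +
    I • (∫ y : ℝ in y₁..y₂, f (x₂ + y * I)) - I • ∫ y : ℝ in y₁..y₂, f (x₁ + y * I)

lemma rectInt_eq_zero (f : ℂ → E) {x₁ x₂ y₁ y₂ : ℝ}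
    (Hc : ContinuousOn f (uIcc x₁ x₂ ×ℂ uIcc y₁ y₂))
    (Hd : DifferentiableOn ℂ f (Ioo (min x₁ x₂) (max x₁ x₂) ×ℂ Ioo (min y₁ y₂) (max y₁ y₂))) :
    rectInt f x₁ x₂ y₁ y₂ = 0 :=
  integral_boundary_rect_eq_zero_of_continuousOn_of_differentiableOn f ⟨x₁, y₁⟩ ⟨x₂, y₂⟩ Hc Hd

lemma mem_uIcc' {a b c : ℝ} : a ∈ uIcc b c ↔ min b c ≤ a ∧ a ≤ max b c := by
  simp [Set.uIcc]

lemma horizII (f : ℂ → E) {X₁ X₂ Y₁ Y₂ a b c : ℝ}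
    (Hc : ContinuousOn f (uIcc X₁ X₂ ×ℂ uIcc Y₁ Y₂))
    (ha : a ∈ uIcc X₁ X₂) (hb : b ∈ uIcc X₁ X₂) (hc : c ∈ uIcc Y₁ Y₂) :
    IntervalIntegrable (fun x : ℝ => f (x + c * I)) volume a b := by
  apply ContinuousOn.intervalIntegrable
  apply Hc.comp (Continuous.continuousOn (by continuity))
  intro x hx
  rw [Complex.mem_reProdIm]
  constructor
  · simpa using uIcc_subset_uIcc ha hb hx
  · simpa using hc

lemma vertII (f : ℂ → E) {X₁ X₂ Y₁ Y₂ a b c : ℝ}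
    (Hc : ContinuousOn f (uIcc X₁ X₂ ×ℂ uIcc Y₁ Y₂))
    (ha : a ∈ uIcc Y₁ Y₂) (hb : b ∈ uIcc Y₁ Y₂) (hc : c ∈ uIcc X₁ X₂) :
    IntervalIntegrable (fun y : ℝ => f (c + y * I)) volume a b := by
  apply ContinuousOn.intervalIntegrable
  apply Hc.comp (Continuous.continuousOn (by continuity))
  intro y hy
  rw [Complex.mem_reProdIm]
  constructor
  · simpa using hc
  · simpa using uIcc_subset_uIcc ha hb hy

lemma rectInt_zero_offLine (f : ℂ → E) {m x₁ x₂ y₁ y₂ : ℝ}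
    (Hc : ContinuousOn f (uIcc x₁ x₂ ×ℂ uIcc y₁ y₂))
    (Hd : ∀ w : ℂ, w.re ∈ Ioo (min x₁ x₂) (max x₁ x₂) → w.im ∈ Ioo (min y₁ y₂) (max y₁ y₂) →
      w.im ≠ m → DifferentiableAt ℂ f w) :
    rectInt f x₁ x₂ y₁ y₂ = 0 := by
  by_cases hm : m ∈ uIcc y₁ y₂
  · -- split the rectangle at height m
    rw [mem_uIcc'] at hm
    have I1 : IntervalIntegrable (fun y : ℝ => f (x₂ + y * I)) volume y₁ m :=
      vertII f Hc left_mem_uIcc (mem_uIcc'.2 hm) right_mem_uIcc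
    have I1' : IntervalIntegrable (fun y : ℝ => f (x₂ + y * I)) volume m y₂ :=
      vertII f Hc (mem_uIcc'.2 hm) right_mem_uIcc right_mem_uIcc
    have I2 : IntervalIntegrable (fun y : ℝ => f (x₁ + y * I)) volume y₁ m :=
      vertII f Hc left_mem_uIcc (mem_uIcc'.2 hm) left_mem_uIcc
    have I2' : IntervalIntegrable (fun y : ℝ => f (x₁ + y * I)) volume m y₂ :=
      vertII f Hc (mem_uIcc'.2 hm) right_mem_uIcc left_mem_uIcc
    have hsplit : rectInt f x₁ x₂ y₁ y₂ = rectInt f x₁ x₂ y₁ m + rectInt f x₁ x₂ m y₂ := by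
      unfold rectInt
      rw [← intervalIntegral.integral_add_adjacent_intervals I1 I1',
        ← intervalIntegral.integral_add_adjacent_intervals I2 I2', smul_add, smul_add]
      abel
    have hsub1 : uIcc y₁ m ⊆ uIcc y₁ y₂ :=
      uIcc_subset_uIcc left_mem_uIcc (mem_uIcc'.2 hm)
    have hsub2 : uIcc m y₂ ⊆ uIcc y₁ y₂ :=
      uIcc_subset_uIcc (mem_uIcc'.2 hm) right_mem_uIcc
    have hIoo1 : Ioo (min y₁ m) (max y₁ m) ⊆ Ioo (min y₁ y₂) (max y₁ y₂) := by
      apply Ioo_subset_Ioo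
      · exact le_min (min_le_left _ _) hm.1
      · exact max_le (le_max_left _ _) hm.2
    have hIoo2 : Ioo (min m y₂) (max m y₂) ⊆ Ioo (min y₁ y₂) (max y₁ y₂) := by
      apply Ioo_subset_Ioo
      · exact le_min hm.1 (min_le_right _ _)
      · exact max_le hm.2 (le_max_right _ _)
    have hne1 : ∀ t ∈ Ioo (min y₁ m) (max y₁ m), t ≠ m := by
      rintro t ⟨h1, h2⟩ rfl
      rcases le_total y₁ t with h | h
      · rw [max_eq_right h] at h2; exact lt_irrefl _ h2
      · rw [min_eq_right h] at h1; exact lt_irrefl _ h1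
    have hne2 : ∀ t ∈ Ioo (min m y₂) (max m y₂), t ≠ m := by
      rintro t ⟨h1, h2⟩ rfl
      rcases le_total t y₂ with h | h
      · rw [min_eq_left h] at h1; exact lt_irrefl _ h1
      · rw [max_eq_left h] at h2; exact lt_irrefl _ h2
    have z1 : rectInt f x₁ x₂ y₁ m = 0 := by
      apply rectInt_eq_zero f (Hc.mono ?_) ?_
      · intro w hw
        rw [Complex.mem_reProdIm] at hw ⊢
        exact ⟨hw.1, hsub1 hw.2⟩
      · intro w hw
        rw [Complex.mem_reProdIm] at hw
        exact (Hd w hw.1 (hIoo1 hw.2) (hne1 _ hw.2)).differentiableWithinAt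
    have z2 : rectInt f x₁ x₂ m y₂ = 0 := by
      apply rectInt_eq_zero f (Hc.mono ?_) ?_
      · intro w hw
        rw [Complex.mem_reProdIm] at hw ⊢
        exact ⟨hw.1, hsub2 hw.2⟩
      · intro w hw
        rw [Complex.mem_reProdIm] at hw
        exact (Hd w hw.1 (hIoo2 hw.2) (hne2 _ hw.2)).differentiableWithinAt
    rw [hsplit, z1, z2, add_zero]
  · apply rectInt_eq_zero f Hc
    intro w hw
    rw [Complex.mem_reProdIm] at hw
    refine (Hd w hw.1 hw.2 ?_).differentiableWithinAt
    rintro rfl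
    exact hm (mem_uIcc'.2 ⟨le_of_lt hw.2.1, le_of_lt hw.2.2⟩)


/-- **Morera-type removable line singularity.** If `f` is continuous on an open set and complex
differentiable at every point off a horizontal line, it is differentiable everywhere on the set. -/
lemma moreraLine {f : ℂ → E} {U : Set ℂ} {m : ℝ} (hU : IsOpen U) (hc : ContinuousOn f U)
    (hd : ∀ w ∈ U, w.im ≠ m → DifferentiableAt ℂ f w) :
    ∀ p ∈ U, DifferentiableAt ℂ f p := by
  intro p hp
  rcases ne_or_eq p.im m with him | him
  · exact hd p hp him
  -- `p` lies on the line; build a primitive on a square around `p`.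
  obtain ⟨ε, hε, hball⟩ := Metric.isOpen_iff.1 hU p hp
  set r : ℝ := ε / 4 with hr
  have hr0 : 0 < r := by positivity
  set Q : Set ℂ := uIcc (p.re - r) (p.re + r) ×ℂ uIcc (p.im - r) (p.im + r) with hQ
  have hresub : ∀ x : ℝ, x ∈ uIcc (p.re - r) (p.re + r) → |x - p.re| ≤ r := by
    intro x hx
    rw [uIcc_of_le (by linarith), mem_Icc] at hx
    rw [abs_le]; constructor <;> linarith [hx.1, hx.2]
  have himsub : ∀ x : ℝ, x ∈ uIcc (p.im - r) (p.im + r) → |x - p.im| ≤ r := by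
    intro x hx
    rw [uIcc_of_le (by linarith), mem_Icc] at hx
    rw [abs_le]; constructor <;> linarith [hx.1, hx.2]
  have hQU : Q ⊆ U := by
    intro w hw
    rw [hQ, Complex.mem_reProdIm] at hw
    apply hball
    rw [Metric.mem_ball, Complex.dist_eq]
    calc ‖w - p‖ ≤ |(w - p).re| + |(w - p).im| := Complex.norm_le_abs_re_add_abs_im _
      _ ≤ r + r := by
          simp only [sub_re, sub_im]
          exact add_le_add (hresub _ hw.1) (himsub _ hw.2)
      _ < ε := by rw [hr]; linarith
  have hmemre : ∀ w : ℂ, w ∈ Q → w.re ∈ uIcc (p.re - r) (p.re + r) := by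
    intro w hw; rw [hQ, Complex.mem_reProdIm] at hw; exact hw.1
  have hmemim : ∀ w : ℂ, w ∈ Q → w.im ∈ uIcc (p.im - r) (p.im + r) := by
    intro w hw; rw [hQ, Complex.mem_reProdIm] at hw; exact hw.2
  have hpre : p.re ∈ uIcc (p.re - r) (p.re + r) := by
    rw [uIcc_of_le (by linarith), mem_Icc]; constructor <;> linarith
  have hpim : p.im ∈ uIcc (p.im - r) (p.im + r) := by
    rw [uIcc_of_le (by linarith), mem_Icc]; constructor <;> linarith
  have hcQ : ContinuousOn f Q := hc.mono hQU
  set F : ℂ → E := fun w =>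
    (∫ x : ℝ in p.re..w.re, f (x + p.im * I)) + I • ∫ y : ℝ in p.im..w.im, f (w.re + y * I)
    with hF
  -- The path-independence identity for increments of `F`.
  have key : ∀ v w : ℂ, v ∈ Q → w ∈ Q →
      F v - F w = (∫ x : ℝ in w.re..v.re, f (x + w.im * I)) +
        I • ∫ y : ℝ in w.im..v.im, f (v.re + y * I) := by
    intro v w hv hw
    have J1 : IntervalIntegrable (fun x : ℝ => f (x + p.im * I)) volume p.re w.re :=
      horizII f hcQ hpre (hmemre w hw) hpim
    have J2 : IntervalIntegrable (fun x : ℝ => f (x + p.im * I)) volume w.re v.re :=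
      horizII f hcQ (hmemre w hw) (hmemre v hv) hpim
    have J3 : IntervalIntegrable (fun y : ℝ => f (v.re + y * I)) volume p.im w.im :=
      vertII f hcQ hpim (hmemim w hw) (hmemre v hv)
    have J4 : IntervalIntegrable (fun y : ℝ => f (v.re + y * I)) volume w.im v.im :=
      vertII f hcQ (hmemim w hw) (hmemim v hv) (hmemre v hv)
    have h0 : rectInt f w.re v.re p.im w.im = 0 := by
      apply rectInt_zero_offLine f (m := m)
      · apply hcQ.mono
        intro u hu
        rw [Complex.mem_reProdIm] at hu ⊢
        exact ⟨uIcc_subset_uIcc (hmemre w hw) (hmemre v hv) hu.1,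
          uIcc_subset_uIcc hpim (hmemim w hw) hu.2⟩
      · intro u hu1 hu2 hune
        apply hd u _ hune
        apply hQU
        rw [hQ, Complex.mem_reProdIm]
        constructor
        · exact uIcc_subset_uIcc (hmemre w hw) (hmemre v hv) (mem_uIcc'.2
            ⟨le_of_lt hu1.1, le_of_lt hu1.2⟩)
        · exact uIcc_subset_uIcc hpim (hmemim w hw) (mem_uIcc'.2 ⟨le_of_lt hu2.1, le_of_lt hu2.2⟩)
    have e1 : (∫ x : ℝ in p.re..v.re, f (x + p.im * I)) =
        (∫ x : ℝ in p.re..w.re, f (x + p.im * I)) + ∫ x : ℝ in w.re..v.re, f (x + p.im * I) :=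
      (intervalIntegral.integral_add_adjacent_intervals J1 J2).symm
    have e2 : (∫ y : ℝ in p.im..v.im, f (v.re + y * I)) =
        (∫ y : ℝ in p.im..w.im, f (v.re + y * I)) + ∫ y : ℝ in w.im..v.im, f (v.re + y * I) :=
      (intervalIntegral.integral_add_adjacent_intervals J3 J4).symm
    refine sub_eq_zero.mp (Eq.trans ?_ h0)
    rw [hF]
    simp only []
    rw [e1, e2, smul_add]
    unfold rectInt
    abel
  -- `F` has derivative `f w` at every `w` in the open ball.
  have hball_sub : Metric.ball p r ⊆ Q := by
    intro w hw
    rw [Metric.mem_ball, Complex.dist_eq] at hw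
    rw [hQ, Complex.mem_reProdIm]
    constructor
    · rw [uIcc_of_le (by linarith), mem_Icc]
      have := (Complex.abs_re_le_norm (w - p)).trans hw.le
      rw [sub_re, abs_le] at this
      constructor <;> linarith [this.1, this.2]
    · rw [uIcc_of_le (by linarith), mem_Icc]
      have := (Complex.abs_im_le_norm (w - p)).trans hw.le
      rw [sub_im, abs_le] at this
      constructor <;> linarith [this.1, this.2]
  have hder : ∀ w ∈ Metric.ball p r, HasDerivAt F (f w) w := by
    intro w hw
    rw [hasDerivAt_iff_isLittleO, Asymptotics.isLittleO_iff]
    intro c hc0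
    have hcw : ContinuousAt f w := hc.continuousAt (hU.mem_nhds (hQU (hball_sub hw)))
    obtain ⟨δ, hδ0, hδ⟩ := Metric.continuousAt_iff.1 hcw (c / 2) (by positivity)
    have hwp : dist w p < r := Metric.mem_ball.1 hw
    set δ' : ℝ := min (δ / 2) (r - dist w p) with hδ'
    have hδ'0 : 0 < δ' := lt_min (by positivity) (by linarith)
    filter_upwards [Metric.ball_mem_nhds w hδ'0] with v hv
    have hvw : dist v w < δ' := Metric.mem_ball.1 hv
    have hvball : v ∈ Metric.ball p r := by
      rw [Metric.mem_ball]
      calc dist v p ≤ dist v w + dist w p := dist_triangle _ _ _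
        _ < δ' + dist w p := by linarith
        _ ≤ (r - dist w p) + dist w p := by
            have := min_le_right (δ / 2) (r - dist w p); linarith [this]
        _ = r := by ring
    have hkey := key v w (hball_sub hvball) (hball_sub hw)
    -- rewrite the remainder
    have hsum : F v - F w - (v - w) • f w =
        (∫ x : ℝ in w.re..v.re, (f (x + w.im * I) - f w)) +
          I • ∫ y : ℝ in w.im..v.im, (f (v.re + y * I) - f w) := by
      have c1 : (∫ x : ℝ in w.re..v.re, (f (x + w.im * I) - f w)) =
          (∫ x : ℝ in w.re..v.re, f (x + w.im * I)) - (v.re - w.re) • f w := by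
        rw [intervalIntegral.integral_sub (horizII f hcQ (hmemre w (hball_sub hw))
            (hmemre v (hball_sub hvball)) (hmemim w (hball_sub hw))) intervalIntegrable_const,
          intervalIntegral.integral_const]
      have c2 : (∫ y : ℝ in w.im..v.im, (f (v.re + y * I) - f w)) =
          (∫ y : ℝ in w.im..v.im, f (v.re + y * I)) - (v.im - w.im) • f w := by
        rw [intervalIntegral.integral_sub (vertII f hcQ (hmemim w (hball_sub hw))
            (hmemim v (hball_sub hvball)) (hmemre v (hball_sub hvball))) intervalIntegrable_const,
          intervalIntegral.integral_const]
      rw [c1, c2, hkey, smul_sub]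
      have hvw2 : (v - w) • f w = (v.re - w.re) • f w + I • (v.im - w.im) • f w := by
        have hsplit : (v - w : ℂ) = ((v.re - w.re : ℝ) : ℂ) + ((v.im - w.im : ℝ) : ℂ) * I := by
          apply Complex.ext <;> simp
        rw [hsplit, add_smul, Complex.coe_smul, mul_comm, mul_smul, Complex.coe_smul]
      rw [hvw2]
      abel
    rw [hsum]
    have hb1 : ‖∫ x : ℝ in w.re..v.re, (f (x + w.im * I) - f w)‖ ≤ (c / 2) * |v.re - w.re| := by
      apply intervalIntegral.norm_integral_le_of_norm_le_const
      intro x hx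
      have hx' : x ∈ uIcc w.re v.re := uIoc_subset_uIcc hx
      rw [← dist_eq_norm]
      apply le_of_lt (hδ _)
      have hdd : dist (↑x + ↑w.im * I) w = |x - w.re| := by
        rw [Complex.dist_of_im_eq (by simp)]; simp [Real.dist_eq]
      rw [hdd]
      rw [mem_uIcc'] at hx'
      have habs : |x - w.re| ≤ |v.re - w.re| := by
        rw [abs_le]
        rcases le_total w.re v.re with h | h
        · rw [min_eq_left h, max_eq_right h] at hx'
          rw [_root_.abs_of_nonneg (by linarith : (0:ℝ) ≤ v.re - w.re)]
          constructor <;> linarith [hx'.1, hx'.2]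
        · rw [min_eq_right h, max_eq_left h] at hx'
          rw [_root_.abs_of_nonpos (by linarith : v.re - w.re ≤ 0)]
          constructor <;> linarith [hx'.1, hx'.2]
      have hre : |v.re - w.re| ≤ dist v w := by
        rw [Complex.dist_eq]
        simpa using Complex.abs_re_le_norm (v - w)
      calc |x - w.re| ≤ dist v w := habs.trans hre
        _ < δ' := hvw
        _ ≤ δ := by
          have h1 : δ' ≤ δ / 2 := hδ' ▸ inf_le_left
          linarith
    have hb2 : ‖∫ y : ℝ in w.im..v.im, (f (v.re + y * I) - f w)‖ ≤ (c / 2) * |v.im - w.im| := by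
      apply intervalIntegral.norm_integral_le_of_norm_le_const
      intro y hy
      have hy' : y ∈ uIcc w.im v.im := uIoc_subset_uIcc hy
      rw [← dist_eq_norm]
      apply le_of_lt (hδ _)
      rw [mem_uIcc'] at hy'
      have habs : |y - w.im| ≤ |v.im - w.im| := by
        rw [abs_le]
        rcases le_total w.im v.im with h | h
        · rw [min_eq_left h, max_eq_right h] at hy'
          rw [_root_.abs_of_nonneg (by linarith : (0:ℝ) ≤ v.im - w.im)]
          constructor <;> linarith [hy'.1, hy'.2]
        · rw [min_eq_right h, max_eq_left h] at hy'
          rw [_root_.abs_of_nonpos (by linarith : v.im - w.im ≤ 0)]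
          constructor <;> linarith [hy'.1, hy'.2]
      have him' : |v.im - w.im| ≤ dist v w := by
        rw [Complex.dist_eq]
        simpa using Complex.abs_im_le_norm (v - w)
      have hre : |v.re - w.re| ≤ dist v w := by
        rw [Complex.dist_eq]
        simpa using Complex.abs_re_le_norm (v - w)
      calc dist (↑v.re + ↑y * I) w ≤ |v.re - w.re| + |y - w.im| := by
            rw [Complex.dist_eq]
            have := Complex.norm_le_abs_re_add_abs_im (↑v.re + ↑y * I - w)
            simpa using this
        _ ≤ dist v w + dist v w := add_le_add hre (habs.trans him')
        _ < δ' + δ' := by linarith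
        _ ≤ δ := by
          have h1 : δ' ≤ δ / 2 := hδ' ▸ inf_le_left
          linarith
    have hre : |v.re - w.re| ≤ ‖v - w‖ := by simpa using Complex.abs_re_le_norm (v - w)
    have him2 : |v.im - w.im| ≤ ‖v - w‖ := by simpa using Complex.abs_im_le_norm (v - w)
    calc ‖(∫ x : ℝ in w.re..v.re, (f (x + w.im * I) - f w)) +
            I • ∫ y : ℝ in w.im..v.im, (f (v.re + y * I) - f w)‖
        ≤ ‖∫ x : ℝ in w.re..v.re, (f (x + w.im * I) - f w)‖ +
            ‖I • ∫ y : ℝ in w.im..v.im, (f (v.re + y * I) - f w)‖ := norm_add_le _ _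
      _ = ‖∫ x : ℝ in w.re..v.re, (f (x + w.im * I) - f w)‖ +
            ‖∫ y : ℝ in w.im..v.im, (f (v.re + y * I) - f w)‖ := by
          rw [norm_smul, Complex.norm_I, one_mul]
      _ ≤ (c / 2) * |v.re - w.re| + (c / 2) * |v.im - w.im| := add_le_add hb1 hb2
      _ ≤ (c / 2) * ‖v - w‖ + (c / 2) * ‖v - w‖ := by
          apply add_le_add <;> apply mul_le_mul_of_nonneg_left (by assumption) (by positivity)
      _ = c * ‖v - w‖ := by ring
  -- conclude: `F` is analytic on the ball, hence so is `deriv F = f`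
  have hFd : DifferentiableOn ℂ F (Metric.ball p r) := fun w hw =>
    ((hder w hw).differentiableAt).differentiableWithinAt
  have hFa : AnalyticOnNhd ℂ F (Metric.ball p r) := hFd.analyticOnNhd Metric.isOpen_ball
  have hdiff : DifferentiableAt ℂ (deriv F) p :=
    (hFa.deriv p (Metric.mem_ball_self hr0)).differentiableAt
  apply hdiff.congr_of_eventuallyEq
  filter_upwards [Metric.isOpen_ball.mem_nhds (Metric.mem_ball_self hr0)] with w hw
  exact ((hder w hw).deriv).symm


lemma interior_hStrip (z : ℂ) :
    interior (hStrip z) = {w : ℂ | w.im ∈ Ioo (min 0 z.im) (max 0 z.im)} := by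
  have h1 : hStrip z = Complex.im ⁻¹' (Icc (min 0 z.im) (max 0 z.im)) := by
    ext w; simp [hStrip, mem_uIcc', Set.mem_Icc]
  rw [h1, ← isOpenMap_im.preimage_interior_eq_interior_preimage Complex.continuous_im,
    interior_Icc]
  rfl

lemma diffAt_conj_conj {u : ℂ → ℂ} {w : ℂ} (h : DifferentiableAt ℂ u ((starRingEnd ℂ) w)) :
    DifferentiableAt ℂ (fun x => (starRingEnd ℂ) (u ((starRingEnd ℂ) x))) w := by
  have hu := h.hasDerivAt
  set d := deriv u ((starRingEnd ℂ) w) with hdd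
  apply HasDerivAt.differentiableAt (f' := (starRingEnd ℂ) d)
  rw [hasDerivAt_iff_isLittleO] at hu ⊢
  have ht : Tendsto (fun x : ℂ => (starRingEnd ℂ) x) (𝓝 w) (𝓝 ((starRingEnd ℂ) w)) :=
    Complex.continuous_conj.tendsto w
  have H := hu.comp_tendsto ht
  rw [Asymptotics.isLittleO_iff] at H ⊢
  intro c hc
  filter_upwards [H hc] with x hx
  have e1 : (starRingEnd ℂ) (u ((starRingEnd ℂ) x)) - (starRingEnd ℂ) (u ((starRingEnd ℂ) w)) -
      (x - w) • (starRingEnd ℂ) d =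
      (starRingEnd ℂ) (u ((starRingEnd ℂ) x) - u ((starRingEnd ℂ) w) -
        ((starRingEnd ℂ) x - (starRingEnd ℂ) w) • d) := by
    simp only [map_sub, smul_eq_mul, map_mul, Complex.conj_conj]
  rw [e1, RCLike.norm_conj]
  have e2 : ‖(starRingEnd ℂ) x - (starRingEnd ℂ) w‖ = ‖x - w‖ := by
    rw [← map_sub, RCLike.norm_conj]
  calc ‖u ((starRingEnd ℂ) x) - u ((starRingEnd ℂ) w) -
        ((starRingEnd ℂ) x - (starRingEnd ℂ) w) • d‖
      ≤ c * ‖(starRingEnd ℂ) x - (starRingEnd ℂ) w‖ := hx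
    _ = c * ‖x - w‖ := by rw [e2]

/-- Uniqueness on an upper strip for `ℂ`-valued functions, via Schwarz reflection. -/
lemma strip_core {h : ℝ} (hpos : 0 < h) {u : ℂ → ℂ}
    (hc : ContinuousOn u {w : ℂ | w.im ∈ Icc 0 h})
    (hd : DifferentiableOn ℂ u {w : ℂ | w.im ∈ Ioo 0 h})
    (h0 : ∀ t : ℝ, u t = 0) : ∀ w : ℂ, w.im ∈ Icc 0 h → u w = 0 := by
  set D : Set ℂ := {w : ℂ | w.im ∈ Ioo (-h) h} with hD
  have hDo : IsOpen D := Complex.continuous_im.isOpen_preimage _ isOpen_Ioo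
  set v : ℂ → ℂ := fun w =>
    if 0 ≤ w.im then u w else (starRingEnd ℂ) (u ((starRingEnd ℂ) w)) with hv
  have hreal : ∀ w : ℂ, w.im = 0 → u w = 0 := by
    intro w hw
    have hww : w = (w.re : ℂ) := Complex.ext rfl (by simp [hw])
    rw [hww]; exact h0 w.re
  have hvc : ContinuousOn v D := by
    apply ContinuousOn.if
    · rintro a ⟨haD, hafr⟩
      have ha0 : a.im = 0 :=
        (frontier_le_subset_eq continuous_const Complex.continuous_im hafr).symm
      rw [hreal a ha0, show (starRingEnd ℂ) a = a from Complex.conj_eq_iff_im.mpr ha0,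
        hreal a ha0, map_zero]
    · have hcl : IsClosed {a : ℂ | 0 ≤ a.im} := isClosed_le continuous_const Complex.continuous_im
      rw [hcl.closure_eq]
      apply hc.mono
      rintro w ⟨hw1, hw2⟩
      exact ⟨hw2, le_of_lt (hw1 : w.im ∈ Ioo (-h) h).2⟩
    · apply ContinuousOn.mono (s := D ∩ {a : ℂ | a.im ≤ 0})
      · apply Complex.continuous_conj.comp_continuousOn
        apply hc.comp Complex.continuous_conj.continuousOn
        rintro w ⟨hw1, hw2⟩
        have hw1' : w.im ∈ Ioo (-h) h := hw1
        constructor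
        · simpa using hw2
        · simp only [Complex.conj_im]
          linarith [hw1'.1]
      · rintro w ⟨hw1, hw2⟩
        refine ⟨hw1, ?_⟩
        have : closure {a : ℂ | a.im < 0} ⊆ {a : ℂ | a.im ≤ 0} :=
          closure_lt_subset_le Complex.continuous_im continuous_const
        apply this
        simpa only [not_le] using hw2
  have hvd : ∀ w ∈ D, w.im ≠ 0 → DifferentiableAt ℂ v w := by
    intro w hwD hne
    have hwD' : w.im ∈ Ioo (-h) h := hwD
    rcases hne.lt_or_gt with hlt | hgt
    · have hdq : DifferentiableAt ℂ (fun x => (starRingEnd ℂ) (u ((starRingEnd ℂ) x))) w := by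
        apply diffAt_conj_conj
        apply hd.differentiableAt
        apply (Complex.continuous_im.isOpen_preimage _ isOpen_Ioo).mem_nhds
        simp only [Complex.conj_im, Set.mem_preimage, Set.mem_Ioo]
        constructor <;> [linarith; linarith [hwD'.1]]
      apply hdq.congr_of_eventuallyEq
      filter_upwards [(isOpen_lt Complex.continuous_im continuous_const).mem_nhds
        (show w ∈ {x : ℂ | x.im < 0} from hlt)] with x hx
      exact if_neg (not_le.mpr hx)
    · have hdq : DifferentiableAt ℂ u w :=
        hd.differentiableAt ((Complex.continuous_im.isOpen_preimage _ isOpen_Ioo).mem_nhds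
          (show w.im ∈ Ioo 0 h from ⟨hgt, hwD'.2⟩))
      apply hdq.congr_of_eventuallyEq
      filter_upwards [(isOpen_lt continuous_const Complex.continuous_im).mem_nhds hgt] with x hx
      exact if_pos (le_of_lt hx)
  have hva := moreraLine hDo hvc hvd
  have hvD : DifferentiableOn ℂ v D := fun w hw => (hva w hw).differentiableWithinAt
  have hAn : AnalyticOnNhd ℂ v D := hvD.analyticOnNhd hDo
  have hpre2 : IsPreconnected D := by
    have hDeq : D = {z : ℂ | -h < z.im} ∩ {z : ℂ | z.im < h} := by
      ext w; simp [hD, Set.mem_Ioo, and_comm]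
    rw [hDeq]
    exact ((convex_halfSpace_im_gt (-h)).inter (convex_halfSpace_im_lt h)).isPreconnected
  have h0D : (0 : ℂ) ∈ D := by
    simp only [hD, Set.mem_setOf_eq, Complex.zero_im, Set.mem_Ioo]
    constructor <;> linarith
  have hclosmem : (0 : ℂ) ∈ closure ({z : ℂ | v z = 0} \ {0}) := by
    apply mem_closure_of_tendsto (f := fun n : ℕ => (((1 : ℝ) / (n + 1) : ℝ) : ℂ)) (b := atTop)
    · rw [show (0 : ℂ) = ((0 : ℝ) : ℂ) by simp]
      exact (Complex.continuous_ofReal.tendsto (0 : ℝ)).comp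
        tendsto_one_div_add_atTop_nhds_zero_nat
    · apply Filter.Eventually.of_forall
      intro n
      constructor
      · have him : ((((1 : ℝ) / (n + 1) : ℝ) : ℂ)).im = 0 := by simp
        simp only [Set.mem_setOf_eq, hv]
        rw [if_pos (by rw [him])]
        exact h0 _
      · simp only [Set.mem_singleton_iff]
        intro hcon
        rw [Complex.ofReal_eq_zero] at hcon
        have : (0 : ℝ) < 1 / (n + 1) := by positivity
        linarith
  have hv0 : EqOn v 0 D := hAn.eqOn_zero_of_preconnected_of_mem_closure hpre2 h0D hclosmem
  have huIoo : EqOn u 0 {w : ℂ | w.im ∈ Ioo 0 h} := by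
    intro w hw
    have hw' : w.im ∈ Ioo 0 h := hw
    have hz : v w = 0 := hv0 (show w ∈ D from ⟨by linarith [hw'.1], hw'.2⟩)
    rw [hv] at hz
    simp only at hz
    rwa [if_pos (le_of_lt hw'.1)] at hz
  have hclos : closure {w : ℂ | w.im ∈ Ioo 0 h} = {w : ℂ | w.im ∈ Icc 0 h} := by
    have h1 : {w : ℂ | w.im ∈ Ioo 0 h} = Complex.im ⁻¹' (Ioo 0 h) := rfl
    rw [h1, ← isOpenMap_im.preimage_closure_eq_closure_preimage Complex.continuous_im,
      closure_Ioo hpos.ne]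
    rfl
  intro w hw
  have hIooIcc : {w : ℂ | w.im ∈ Ioo 0 h} ⊆ {w : ℂ | w.im ∈ Icc 0 h} := by
    intro x hx; exact ⟨le_of_lt (hx : x.im ∈ Ioo 0 h).1, le_of_lt (hx : x.im ∈ Ioo 0 h).2⟩
  exact huIoo.of_subset_closure hc continuousOn_const hIooIcc (hclos ▸ subset_rfl) hw


lemma mem_hStrip' {z w : ℂ} : w ∈ hStrip z ↔ min 0 z.im ≤ w.im ∧ w.im ≤ max 0 z.im := by
  simp [hStrip, mem_uIcc']

lemma c_strip_zero {z : ℂ} {u : ℂ → ℂ} (hc : ContinuousOn u (hStrip z))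
    (hd : DifferentiableOn ℂ u (interior (hStrip z)))
    (h0 : ∀ t : ℝ, u t = 0) : EqOn u 0 (hStrip z) := by
  rcases lt_trichotomy z.im 0 with hneg | hzero | hpos
  · -- the strip lies below the axis: reflect everything
    have hmin : min 0 z.im = z.im := min_eq_right hneg.le
    have hmax : max 0 z.im = 0 := max_eq_left hneg.le
    have core := strip_core (h := -z.im) (by linarith) (u := fun w =>
      (starRingEnd ℂ) (u ((starRingEnd ℂ) w))) ?_ ?_ ?_
    · intro w hw
      rw [mem_hStrip', hmin, hmax] at hw
      have hmem : ((starRingEnd ℂ) w).im ∈ Icc 0 (-z.im) := by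
        simp only [Complex.conj_im, Set.mem_Icc]
        constructor <;> linarith [hw.1, hw.2]
      have h1 := core ((starRingEnd ℂ) w) hmem
      simp only [Complex.conj_conj] at h1
      show u w = 0
      have := congrArg (starRingEnd ℂ) h1
      simpa using this
    · apply Complex.continuous_conj.comp_continuousOn
      apply hc.comp Complex.continuous_conj.continuousOn
      intro w hw
      have hw' : w.im ∈ Icc 0 (-z.im) := hw
      rw [mem_hStrip', hmin, hmax]
      simp only [Complex.conj_im]
      constructor <;> linarith [hw'.1, hw'.2]
    · intro w hw
      have hw' : w.im ∈ Ioo 0 (-z.im) := hw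
      apply DifferentiableAt.differentiableWithinAt
      apply diffAt_conj_conj
      apply hd.differentiableAt
      apply isOpen_interior.mem_nhds
      rw [interior_hStrip, hmin, hmax]
      simp only [Set.mem_setOf_eq, Complex.conj_im, Set.mem_Ioo]
      constructor <;> linarith [hw'.1, hw'.2]
    · intro t
      show (starRingEnd ℂ) (u ((starRingEnd ℂ) (t : ℂ))) = 0
      rw [Complex.conj_ofReal, h0 t, map_zero]
  · -- degenerate strip: it is the real axis
    intro w hw
    rw [mem_hStrip', hzero] at hw
    simp only [min_self, max_self] at hw
    have h1 : w.im = 0 := le_antisymm hw.2 hw.1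
    have h2 : w = (w.re : ℂ) := Complex.ext rfl (by simp [h1])
    show u w = 0
    rw [h2]; exact h0 w.re
  · have hmin : min 0 z.im = 0 := min_eq_left hpos.le
    have hmax : max 0 z.im = z.im := max_eq_right hpos.le
    have core := strip_core hpos (u := u) ?_ ?_ h0
    · intro w hw
      rw [mem_hStrip', hmin, hmax] at hw
      exact core w hw
    · apply hc.mono; intro w hw
      rw [mem_hStrip', hmin, hmax]
      exact ⟨(hw : w.im ∈ Icc 0 z.im).1, (hw : w.im ∈ Icc 0 z.im).2⟩
    · apply hd.mono; intro w hw
      rw [interior_hStrip, hmin, hmax]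
      exact hw

/-- Uniqueness for vector-valued functions on the strip. -/
lemma strip_zero {z : ℂ} {f : ℂ → E} (hc : ContinuousOn f (hStrip z))
    (hd : DifferentiableOn ℂ f (interior (hStrip z))) (h0 : ∀ t : ℝ, f t = 0) :
    EqOn f 0 (hStrip z) := by
  intro w hw
  show f w = 0
  apply NormedSpace.eq_zero_of_forall_dual_eq_zero ℂ
  intro φ
  have hcz := c_strip_zero (u := fun x => φ (f x)) (φ.continuous.comp_continuousOn hc)
      ((ContinuousLinearMap.differentiable φ).comp_differentiableOn hd)
      (fun t => by show φ (f t) = 0; rw [h0 t, map_zero])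
  exact hcz hw

/-- The key commutation identity : an analytic continuation of an orbit is equivariant under
real translations. -/
lemma shift {α : ℝ → E →L[ℂ] E} (hα : IsOneParamRep α) {z : ℂ} {a : E} {f : ℂ → E}
    (hc : ContinuousOn f (hStrip z)) (hd : DifferentiableOn ℂ f (interior (hStrip z)))
    (hf : ∀ t : ℝ, f t = α t a) (s : ℝ) :
    ∀ w ∈ hStrip z, f (w + s) = α s (f w) := by
  have him : ∀ w : ℂ, (w + (s : ℂ)).im = w.im := by intro w; simp
  have hmaps : MapsTo (fun w : ℂ => w + (s : ℂ)) (hStrip z) (hStrip z) := by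
    intro w hw; simp only [hStrip, Set.mem_setOf_eq, him]; exact hw
  have hmapsi : MapsTo (fun w : ℂ => w + (s : ℂ)) (interior (hStrip z)) (interior (hStrip z)) := by
    intro w hw
    rw [interior_hStrip] at hw ⊢
    simp only [Set.mem_setOf_eq, him]; exact hw
  have hc2 : ContinuousOn (fun w : ℂ => f (w + s) - α s (f w)) (hStrip z) := by
    apply ContinuousOn.sub
    · exact hc.comp (Continuous.continuousOn (by continuity)) hmaps
    · exact (α s).continuous.comp_continuousOn hc
  have hd2 : DifferentiableOn ℂ (fun w : ℂ => f (w + s) - α s (f w)) (interior (hStrip z)) := by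
    apply DifferentiableOn.sub
    · exact hd.comp ((differentiable_id.add_const _).differentiableOn) hmapsi
    · exact ((α s).differentiable).comp_differentiableOn hd
  have h0 : ∀ t : ℝ, f ((t : ℂ) + s) - α s (f t) = 0 := by
    intro t
    have hcast : ((t : ℂ) + (s : ℂ)) = ((t + s : ℝ) : ℂ) := by push_cast; ring
    rw [hcast, hf (t + s), hf t, show t + s = s + t from add_comm t s, hα.map_add s t]
    simp
  have hz := strip_zero hc2 hd2 h0
  intro w hw
  have h3 : f (w + s) - α s (f w) = 0 := hz hw
  exact sub_eq_zero.mp h3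


lemma glue_pos {α : ℝ → E →L[ℂ] E} (hα : IsOneParamRep α) {y z : ℂ}
    (hy : 0 ≤ y.im) (hz : 0 ≤ z.im) {a b c : E}
    (h1 : HasContVal α z a b) (h2 : HasContVal α y b c) : HasContVal α (y + z) a c := by
  obtain ⟨f, hfc, hfd, hf0, hfz⟩ := h1
  obtain ⟨g, hgc, hgd, hg0, hgy⟩ := h2
  have hshift := shift hα hfc hfd hf0
  have hyz : (y + z).im = y.im + z.im := by simp
  have hminz : min 0 z.im = 0 := min_eq_left hz
  have hmaxz : max 0 z.im = z.im := max_eq_right hz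
  have hminy : min 0 y.im = 0 := min_eq_left hy
  have hmaxy : max 0 y.im = y.im := max_eq_right hy
  have hminyz : min 0 (y + z).im = 0 := min_eq_left (by rw [hyz]; linarith)
  have hmaxyz : max 0 (y + z).im = (y + z).im := max_eq_right (by rw [hyz]; linarith)
  have hzz : z ∈ hStrip z := right_mem_uIcc
  have hbd : ∀ w : ℂ, w.im = z.im → f w = g (w - z) := by
    intro w hwim
    have hwz : w = z + ((w.re - z.re : ℝ) : ℂ) := by
      apply Complex.ext <;> simp [hwim]
    have hw2 : w - z = ((w.re - z.re : ℝ) : ℂ) := by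
      apply Complex.ext <;> simp [hwim]
    rw [hw2, hg0, ← hfz]
    calc f w = f (z + ((w.re - z.re : ℝ) : ℂ)) := by rw [← hwz]
      _ = α (w.re - z.re) (f z) := hshift (w.re - z.re) z hzz
  have hHc : ContinuousOn (fun w : ℂ => if w.im ≤ z.im then f w else g (w - z))
      (hStrip (y + z)) := by
    apply ContinuousOn.if
    · rintro a' ⟨ha1, ha2⟩
      exact hbd a' (frontier_le_subset_eq Complex.continuous_im continuous_const ha2)
    · have hclosed : IsClosed {a' : ℂ | a'.im ≤ z.im} :=
        isClosed_le Complex.continuous_im continuous_const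
      rw [hclosed.closure_eq]
      apply hfc.mono
      rintro w ⟨hw1, hw2⟩
      rw [mem_hStrip', hminyz, hmaxyz, hyz] at hw1
      rw [mem_hStrip', hminz, hmaxz]
      exact ⟨hw1.1, hw2⟩
    · apply ContinuousOn.mono (s := hStrip (y + z) ∩ {w : ℂ | z.im ≤ w.im})
      · apply hgc.comp (Continuous.continuousOn (by continuity))
        rintro w ⟨hw1, hw2⟩
        rw [mem_hStrip', hminyz, hmaxyz, hyz] at hw1
        rw [mem_hStrip', hminy, hmaxy]
        have hw2' : z.im ≤ w.im := hw2
        constructor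
        · simp only [Complex.sub_im]; linarith
        · simp only [Complex.sub_im]; linarith [hw1.2]
      · rintro w ⟨hw1, hw2⟩
        refine ⟨hw1, ?_⟩
        have hsub : closure {w : ℂ | ¬ w.im ≤ z.im} ⊆ {w : ℂ | z.im ≤ w.im} := by
          have he : {w : ℂ | ¬ w.im ≤ z.im} = {w : ℂ | z.im < w.im} := by ext; simp [not_le]
          rw [he]
          exact closure_lt_subset_le continuous_const Complex.continuous_im
        exact hsub hw2
  have hHd : DifferentiableOn ℂ (fun w : ℂ => if w.im ≤ z.im then f w else g (w - z))
      (interior (hStrip (y + z))) := by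
    have hd' : ∀ w ∈ interior (hStrip (y + z)), w.im ≠ z.im →
        DifferentiableAt ℂ (fun w : ℂ => if w.im ≤ z.im then f w else g (w - z)) w := by
      intro w hw hne
      rw [interior_hStrip, hminyz, hmaxyz] at hw
      have hw' : w.im ∈ Ioo 0 ((y + z).im) := hw
      rw [hyz] at hw'
      rcases hne.lt_or_gt with hlt | hgt
      · have hdf : DifferentiableAt ℂ f w := by
          apply hfd.differentiableAt
          apply isOpen_interior.mem_nhds
          rw [interior_hStrip, hminz, hmaxz]
          exact ⟨hw'.1, hlt⟩
        apply hdf.congr_of_eventuallyEq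
        filter_upwards [(isOpen_lt Complex.continuous_im continuous_const).mem_nhds
          (show w ∈ {x : ℂ | x.im < z.im} from hlt)] with x hx
        exact if_pos (le_of_lt hx)
      · have hdg : DifferentiableAt ℂ (fun x : ℂ => g (x - z)) w := by
          have hg' : DifferentiableAt ℂ g (w - z) := by
            apply hgd.differentiableAt
            apply isOpen_interior.mem_nhds
            rw [interior_hStrip, hminy, hmaxy]
            constructor
            · simp only [Complex.sub_im]; linarith
            · simp only [Complex.sub_im]; linarith [hw'.2]
          exact hg'.comp w ((differentiable_id.sub_const z).differentiableAt)
        apply hdg.congr_of_eventuallyEq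
        filter_upwards [(isOpen_lt continuous_const Complex.continuous_im).mem_nhds hgt] with x hx
        exact if_neg (not_le.mpr hx)
    intro w hw
    exact (moreraLine isOpen_interior (hHc.mono interior_subset) hd' w hw).differentiableWithinAt
  refine ⟨fun w : ℂ => if w.im ≤ z.im then f w else g (w - z), hHc, hHd, ?_, ?_⟩
  · intro t
    show (if ((t : ℂ)).im ≤ z.im then f t else g ((t : ℂ) - z)) = α t a
    rw [if_pos (show ((t : ℂ)).im ≤ z.im by simpa using hz)]
    exact hf0 t
  · show (if (y + z).im ≤ z.im then f (y + z) else g (y + z - z)) = c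
    by_cases hcase : (y + z).im ≤ z.im
    · rw [if_pos hcase]
      have hy0 : y.im = 0 := le_antisymm (by rw [hyz] at hcase; linarith) hy
      have h3 : y + z = z + ((y.re : ℝ) : ℂ) := by
        apply Complex.ext <;> simp [hy0, add_comm]
      have h4 : y = ((y.re : ℝ) : ℂ) := Complex.ext rfl (by simp [hy0])
      rw [h3, hshift y.re z hzz, hfz, ← hg0 y.re, ← h4, hgy]
    · rw [if_neg hcase, add_sub_cancel_right, hgy]

lemma glue_neg {α : ℝ → E →L[ℂ] E} (hα : IsOneParamRep α) {y z : ℂ}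
    (hy : y.im ≤ 0) (hz : z.im ≤ 0) {a b c : E}
    (h1 : HasContVal α z a b) (h2 : HasContVal α y b c) : HasContVal α (y + z) a c := by
  obtain ⟨f, hfc, hfd, hf0, hfz⟩ := h1
  obtain ⟨g, hgc, hgd, hg0, hgy⟩ := h2
  have hshift := shift hα hfc hfd hf0
  have hyz : (y + z).im = y.im + z.im := by simp
  have hminz : min 0 z.im = z.im := min_eq_right hz
  have hmaxz : max 0 z.im = 0 := max_eq_left hz
  have hminy : min 0 y.im = y.im := min_eq_right hy
  have hmaxy : max 0 y.im = 0 := max_eq_left hy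
  have hminyz : min 0 (y + z).im = (y + z).im := min_eq_right (by rw [hyz]; linarith)
  have hmaxyz : max 0 (y + z).im = 0 := max_eq_left (by rw [hyz]; linarith)
  have hzz : z ∈ hStrip z := right_mem_uIcc
  have hbd : ∀ w : ℂ, w.im = z.im → f w = g (w - z) := by
    intro w hwim
    have hwz : w = z + ((w.re - z.re : ℝ) : ℂ) := by
      apply Complex.ext <;> simp [hwim]
    have hw2 : w - z = ((w.re - z.re : ℝ) : ℂ) := by
      apply Complex.ext <;> simp [hwim]
    rw [hw2, hg0, ← hfz]
    calc f w = f (z + ((w.re - z.re : ℝ) : ℂ)) := by rw [← hwz]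
      _ = α (w.re - z.re) (f z) := hshift (w.re - z.re) z hzz
  have hHc : ContinuousOn (fun w : ℂ => if z.im ≤ w.im then f w else g (w - z))
      (hStrip (y + z)) := by
    apply ContinuousOn.if
    · rintro a' ⟨ha1, ha2⟩
      exact hbd a' (frontier_le_subset_eq continuous_const Complex.continuous_im ha2).symm
    · have hclosed : IsClosed {a' : ℂ | z.im ≤ a'.im} :=
        isClosed_le continuous_const Complex.continuous_im
      rw [hclosed.closure_eq]
      apply hfc.mono
      rintro w ⟨hw1, hw2⟩
      rw [mem_hStrip', hminyz, hmaxyz, hyz] at hw1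
      rw [mem_hStrip', hminz, hmaxz]
      exact ⟨hw2, hw1.2⟩
    · apply ContinuousOn.mono (s := hStrip (y + z) ∩ {w : ℂ | w.im ≤ z.im})
      · apply hgc.comp (Continuous.continuousOn (by continuity))
        rintro w ⟨hw1, hw2⟩
        rw [mem_hStrip', hminyz, hmaxyz, hyz] at hw1
        rw [mem_hStrip', hminy, hmaxy]
        have hw2' : w.im ≤ z.im := hw2
        constructor
        · simp only [Complex.sub_im]; linarith [hw1.1]
        · simp only [Complex.sub_im]; linarith
      · rintro w ⟨hw1, hw2⟩
        refine ⟨hw1, ?_⟩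
        have hsub : closure {w : ℂ | ¬ z.im ≤ w.im} ⊆ {w : ℂ | w.im ≤ z.im} := by
          have he : {w : ℂ | ¬ z.im ≤ w.im} = {w : ℂ | w.im < z.im} := by ext; simp [not_le]
          rw [he]
          exact closure_lt_subset_le Complex.continuous_im continuous_const
        exact hsub hw2
  have hHd : DifferentiableOn ℂ (fun w : ℂ => if z.im ≤ w.im then f w else g (w - z))
      (interior (hStrip (y + z))) := by
    have hd' : ∀ w ∈ interior (hStrip (y + z)), w.im ≠ z.im →
        DifferentiableAt ℂ (fun w : ℂ => if z.im ≤ w.im then f w else g (w - z)) w := by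
      intro w hw hne
      rw [interior_hStrip, hminyz, hmaxyz] at hw
      have hw' : w.im ∈ Ioo ((y + z).im) 0 := hw
      rw [hyz] at hw'
      rcases hne.lt_or_gt with hlt | hgt
      · -- w.im < z.im : the g-branch
        have hdg : DifferentiableAt ℂ (fun x : ℂ => g (x - z)) w := by
          have hg' : DifferentiableAt ℂ g (w - z) := by
            apply hgd.differentiableAt
            apply isOpen_interior.mem_nhds
            rw [interior_hStrip, hminy, hmaxy]
            constructor
            · simp only [Complex.sub_im]; linarith [hw'.1]
            · simp only [Complex.sub_im]; linarith
          exact hg'.comp w ((differentiable_id.sub_const z).differentiableAt)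
        apply hdg.congr_of_eventuallyEq
        filter_upwards [(isOpen_lt Complex.continuous_im continuous_const).mem_nhds
          (show w ∈ {x : ℂ | x.im < z.im} from hlt)] with x hx
        exact if_neg (not_le.mpr hx)
      · -- z.im < w.im : the f-branch
        have hdf : DifferentiableAt ℂ f w := by
          apply hfd.differentiableAt
          apply isOpen_interior.mem_nhds
          rw [interior_hStrip, hminz, hmaxz]
          exact ⟨hgt, hw'.2⟩
        apply hdf.congr_of_eventuallyEq
        filter_upwards [(isOpen_lt continuous_const Complex.continuous_im).mem_nhds hgt] with x hx
        exact if_pos (le_of_lt hx)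
    intro w hw
    exact (moreraLine isOpen_interior (hHc.mono interior_subset) hd' w hw).differentiableWithinAt
  refine ⟨fun w : ℂ => if z.im ≤ w.im then f w else g (w - z), hHc, hHd, ?_, ?_⟩
  · intro t
    show (if z.im ≤ ((t : ℂ)).im then f t else g ((t : ℂ) - z)) = α t a
    rw [if_pos (show z.im ≤ ((t : ℂ)).im by simpa using hz)]
    exact hf0 t
  · show (if z.im ≤ (y + z).im then f (y + z) else g (y + z - z)) = c
    by_cases hcase : z.im ≤ (y + z).im
    · rw [if_pos hcase]
      have hy0 : y.im = 0 := le_antisymm hy (by rw [hyz] at hcase; linarith)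
      have h3 : y + z = z + ((y.re : ℝ) : ℂ) := by
        apply Complex.ext <;> simp [hy0, add_comm]
      have h4 : y = ((y.re : ℝ) : ℂ) := Complex.ext rfl (by simp [hy0])
      rw [h3, hshift y.re z hzz, hfz, ← hg0 y.re, ← h4, hgy]
    · rw [if_neg hcase, add_sub_cancel_right, hgy]

lemma split_rev {α : ℝ → E →L[ℂ] E} (hα : IsOneParamRep α) {y z : ℂ}
    (hside : (0 ≤ y.im ∧ 0 ≤ z.im) ∨ (y.im ≤ 0 ∧ z.im ≤ 0)) {a c : E}
    (h : HasContVal α (y + z) a c) : ∃ b, HasContVal α z a b ∧ HasContVal α y b c := by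
  obtain ⟨F, hFc, hFd, hF0, hFv⟩ := h
  have hshift := shift hα hFc hFd hF0
  have hyz : (y + z).im = y.im + z.im := by simp
  have hsub : hStrip z ⊆ hStrip (y + z) := by
    intro w hw
    rw [mem_hStrip'] at hw ⊢
    rw [hyz] at *
    rcases hside with ⟨hy2, hz2⟩ | ⟨hy2, hz2⟩
    · rw [min_eq_left hz2, max_eq_right hz2] at hw
      rw [min_eq_left (by linarith), max_eq_right (by linarith)]
      constructor <;> linarith [hw.1, hw.2]
    · rw [min_eq_right hz2, max_eq_left hz2] at hw
      rw [min_eq_right (by linarith), max_eq_left (by linarith)]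
      constructor <;> linarith [hw.1, hw.2]
  have hsubi : interior (hStrip z) ⊆ interior (hStrip (y + z)) := interior_mono hsub
  have hmaps : MapsTo (fun w : ℂ => w + z) (hStrip y) (hStrip (y + z)) := by
    intro w hw
    rw [mem_hStrip'] at hw ⊢
    simp only [Complex.add_im]
    rcases hside with ⟨hy2, hz2⟩ | ⟨hy2, hz2⟩
    · rw [min_eq_left hy2, max_eq_right hy2] at hw
      rw [min_eq_left (by linarith), max_eq_right (by linarith)]
      constructor <;> linarith [hw.1, hw.2]
    · rw [min_eq_right hy2, max_eq_left hy2] at hw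
      rw [min_eq_right (by linarith), max_eq_left (by linarith)]
      constructor <;> linarith [hw.1, hw.2]
  have hmapsi : MapsTo (fun w : ℂ => w + z) (interior (hStrip y)) (interior (hStrip (y + z))) := by
    intro w hw
    rw [interior_hStrip] at hw ⊢
    have hw' : w.im ∈ Ioo (min 0 y.im) (max 0 y.im) := hw
    show ((fun w : ℂ => w + z) w).im ∈ Ioo (min 0 ((y + z).im)) (max 0 ((y + z).im))
    simp only [Complex.add_im]
    rcases hside with ⟨hy2, hz2⟩ | ⟨hy2, hz2⟩
    · rw [min_eq_left hy2, max_eq_right hy2] at hw'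
      rw [min_eq_left (by linarith), max_eq_right (by linarith)]
      constructor <;> linarith [hw'.1, hw'.2]
    · rw [min_eq_right hy2, max_eq_left hy2] at hw'
      rw [min_eq_right (by linarith), max_eq_left (by linarith)]
      constructor <;> linarith [hw'.1, hw'.2]
  refine ⟨F z, ⟨F, hFc.mono hsub, hFd.mono hsubi, hF0, rfl⟩,
    ⟨fun w => F (w + z), ?_, ?_, ?_, ?_⟩⟩
  · exact hFc.comp (Continuous.continuousOn (by continuity)) hmaps
  · exact hFd.comp ((differentiable_id.add_const z).differentiableOn) hmapsi
  · intro t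
    show F ((t : ℂ) + z) = α t (F z)
    rw [show (t : ℂ) + z = z + (t : ℂ) from add_comm _ _]
    exact hshift t z (hsub right_mem_uIcc)
  · show F (y + z) = c
    exact hFv

end CCAux

/-- If `y` and `z` lie on the same side of the real axis then `α_y ∘ α_z = α_{y+z}`
(equality of unbounded operators, i.e. of graphs). -/
theorem cont_comp_same_side
    {E : Type*} [NormedAddCommGroup E] [NormedSpace ℂ E] [CompleteSpace E]
    {α : ℝ → E →L[ℂ] E} (hα : IsOneParamRep α) {y z : ℂ}
    (hside : (0 ≤ y.im ∧ 0 ≤ z.im) ∨ (y.im ≤ 0 ∧ z.im ≤ 0)) :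
    ∀ a c : E, (∃ b, HasContVal α z a b ∧ HasContVal α y b c) ↔
      HasContVal α (y + z) a c := by
  intro a c
  constructor
  · rintro ⟨b, h1, h2⟩
    rcases hside with ⟨hy, hz⟩ | ⟨hy, hz⟩
    · exact CCAux.glue_pos hα hy hz h1 h2
    · exact CCAux.glue_neg hα hy hz h1 h2
  · exact fun h => CCAux.split_rev hα hside h
end
end

section
/- Let α be a strongly continuous one-parameter isometric representation on a Banach space E, and y, z ∈ ℂ arbitrary. Then α_y α_z ⊆ α_{y+z}; moreover D(α_y α_z) = D(α_z) ∩ D(α_{y+z}) and Ran(α_y α_z) = Ran(α_y) ∩ Ran(α_{y+z}). -/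
open Complex MeasureTheory Filter Topology Set

noncomputable section

namespace OPR
set_option linter.unusedSectionVars false

variable {E : Type*} [NormedAddCommGroup E] [NormedSpace ℂ E]

/-! ### Interval helpers -/

lemma mem_uIcc_iff {v a b : ℝ} : v ∈ Set.uIcc a b ↔ min a b ≤ v ∧ v ≤ max a b := by
  rw [Set.uIcc]; simp [Set.mem_Icc]

lemma mem_uIoo_iff {v a b : ℝ} : v ∈ Set.uIoo a b ↔ min a b < v ∧ v < max a b := by
  rw [Set.uIoo]; simp [Set.mem_Ioo]

lemma mem_uIcc_add {v a b : ℝ} (c : ℝ) (h : v ∈ Set.uIcc a b) :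
    v + c ∈ Set.uIcc (a + c) (b + c) := by
  simp only [Set.mem_uIcc] at h ⊢
  rcases h with ⟨h1, h2⟩ | ⟨h1, h2⟩
  · exact Or.inl ⟨by linarith, by linarith⟩
  · exact Or.inr ⟨by linarith, by linarith⟩

lemma mem_uIoo_add {v a b : ℝ} (c : ℝ) (h : v ∈ Set.uIoo a b) :
    v + c ∈ Set.uIoo (a + c) (b + c) := by
  rw [mem_uIoo_iff] at h ⊢
  rcases le_total a b with hab | hab <;>
    rw [min_def, max_def] at * <;> simp only [add_le_add_iff_right] <;>
    split_ifs at * <;> constructor <;> linarith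

lemma uIoo_subset_uIoo_of_mem {x y a b : ℝ} (hx : x ∈ Set.uIcc a b) (hy : y ∈ Set.uIcc a b) :
    Set.uIoo x y ⊆ Set.uIoo a b := by
  intro v hv
  rw [mem_uIoo_iff] at hv ⊢
  rw [mem_uIcc_iff] at hx hy
  exact ⟨lt_of_le_of_lt (le_min hx.1 hy.1) hv.1, lt_of_lt_of_le hv.2 (max_le hx.2 hy.2)⟩

lemma tri (u v : ℝ) : u ∈ Set.uIcc 0 v ∨ v ∈ Set.uIcc 0 u ∨ (0:ℝ) ∈ Set.uIcc u v := by
  rcases le_total 0 u with h1 | h1 <;> rcases le_total 0 v with h2 | h2 <;>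
    rcases le_total u v with h3 | h3 <;> simp only [Set.mem_uIcc] <;> tauto

lemma neg_mem_of {u v : ℝ} (h : (0:ℝ) ∈ Set.uIcc u (u + v)) : -u ∈ Set.uIcc 0 v := by
  simp only [Set.mem_uIcc] at h ⊢
  rcases h with ⟨h1, h2⟩ | ⟨h1, h2⟩
  · left; constructor <;> linarith
  · right; constructor <;> linarith

/-! ### Topology of strips -/

lemma interior_preim_uIcc (a b : ℝ) :
    interior (Complex.im ⁻¹' Set.uIcc a b) = Complex.im ⁻¹' Set.uIoo a b := by
  rw [Complex.interior_preimage_im, Set.uIcc, Set.uIoo, interior_Icc]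

lemma hStrip_eq (z : ℂ) : hStrip z = Complex.im ⁻¹' Set.uIcc 0 z.im := rfl

lemma interior_hStrip (z : ℂ) :
    interior (hStrip z) = Complex.im ⁻¹' Set.uIoo 0 z.im := by
  rw [hStrip_eq, interior_preim_uIcc]

lemma contOn_comp_add {f : ℂ → E} {s t : Set ℝ} (hf : ContinuousOn f (Complex.im ⁻¹' s))
    (c : ℂ) (h : ∀ v ∈ t, v + c.im ∈ s) :
    ContinuousOn (fun w => f (w + c)) (Complex.im ⁻¹' t) :=
  hf.comp (continuous_add_right c).continuousOn fun w hw => by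
    simpa [Complex.add_im] using h w.im hw

lemma diffOn_comp_add {f : ℂ → E} {s t : Set ℝ} (hf : DifferentiableOn ℂ f (Complex.im ⁻¹' s))
    (c : ℂ) (h : ∀ v ∈ t, v + c.im ∈ s) :
    DifferentiableOn ℂ (fun w => f (w + c)) (Complex.im ⁻¹' t) :=
  hf.comp ((differentiable_id.add_const c).differentiableOn) fun w hw => by
    simpa [Complex.add_im] using h w.im hw

/-! ### Morera-type theorem: continuous on an open set, complex differentiable off a
horizontal line, implies differentiable. -/

theorem morera [CompleteSpace E] {f : ℂ → E} {U : Set ℂ} (hU : IsOpen U) (q : ℝ)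
    (hc : ContinuousOn f U) (hd : ∀ w ∈ U, w.im ≠ q → DifferentiableAt ℂ f w) :
    DifferentiableOn ℂ f U := by
  intro w₀ hw₀
  rcases ne_or_eq w₀.im q with him | him
  · exact (hd w₀ hw₀ him).differentiableWithinAt
  obtain ⟨ε, hε, hball⟩ := Metric.isOpen_iff.mp hU w₀ hw₀
  set r : ℝ := ε / 3 with hrdef
  have hrpos : 0 < r := by positivity
  set x₀ : ℝ := w₀.re with hx₀
  have key : ∀ u : ℂ, |u.re - x₀| ≤ r → |u.im - q| ≤ r → u ∈ U := by
    intro u h1 h2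
    apply hball
    rw [Metric.mem_ball, Complex.dist_eq]
    have h3 : (u - w₀).re = u.re - x₀ := by simp [hx₀]
    have h4 : (u - w₀).im = u.im - q := by simp [him]
    calc ‖u - w₀‖ ≤ |(u - w₀).re| + |(u - w₀).im| :=
          Complex.norm_le_abs_re_add_abs_im _
      _ ≤ r + r := by rw [h3, h4]; exact add_le_add h1 h2
      _ < ε := by rw [hrdef]; linarith
  have habs : ∀ (d t x1 x2 : ℝ), t ∈ Set.uIcc x1 x2 → |x1 - d| ≤ r → |x2 - d| ≤ r →
      |t - d| ≤ r := by
    intro d t x1 x2 ht h1 h2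
    rw [mem_uIcc_iff] at ht
    rw [abs_le] at h1 h2 ⊢
    rcases min_cases x1 x2 with ⟨hm, _⟩ | ⟨hm, _⟩ <;>
      rcases max_cases x1 x2 with ⟨hM, _⟩ | ⟨hM, _⟩ <;> constructor <;> linarith
  have habs2 : ∀ t a b : ℝ, t ∈ Set.uIcc a b → |t - a| ≤ |b - a| := by
    intro t a b ht
    rw [mem_uIcc_iff] at ht
    rcases le_total a b with hab | hab
    · rw [min_eq_left hab, max_eq_right hab] at ht
      rw [_root_.abs_of_nonneg (by linarith : (0:ℝ) ≤ b - a), abs_le]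
      constructor <;> linarith
    · rw [min_eq_right hab, max_eq_left hab] at ht
      rw [_root_.abs_of_nonpos (by linarith : b - a ≤ 0), abs_le]
      constructor <;> linarith
  have hretriv : |x₀ - x₀| ≤ r := by simpa using hrpos.le
  have hqtriv : |q - q| ≤ r := by simpa using hrpos.le
  have hcre : ∀ y : ℝ, Continuous fun t : ℝ => (t : ℂ) + (y : ℂ) * I := by
    intro y; fun_prop
  have hcim : ∀ x : ℝ, Continuous fun s : ℝ => (x : ℂ) + (s : ℂ) * I := by
    intro x; fun_prop
  have hseg : ∀ x1 x2 y : ℝ, |x1 - x₀| ≤ r → |x2 - x₀| ≤ r → |y - q| ≤ r →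
      IntervalIntegrable (fun t : ℝ => f (t + y * I)) volume x1 x2 := by
    intro x1 x2 y h1 h2 h3
    apply ContinuousOn.intervalIntegrable
    apply hc.comp (hcre y).continuousOn
    intro t ht
    apply key <;> simp only [Complex.add_re, Complex.add_im, Complex.ofReal_re,
      Complex.ofReal_im, Complex.mul_re, Complex.mul_im, Complex.I_re, Complex.I_im]
    · exact (by simpa using habs x₀ t x1 x2 ht h1 h2)
    · exact (by simpa using h3)
  have hvseg : ∀ x y1 y2 : ℝ, |x - x₀| ≤ r → |y1 - q| ≤ r → |y2 - q| ≤ r →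
      IntervalIntegrable (fun s : ℝ => f (x + s * I)) volume y1 y2 := by
    intro x y1 y2 h1 h2 h3
    apply ContinuousOn.intervalIntegrable
    apply hc.comp (hcim x).continuousOn
    intro t ht
    apply key <;> simp only [Complex.add_re, Complex.add_im, Complex.ofReal_re,
      Complex.ofReal_im, Complex.mul_re, Complex.mul_im, Complex.I_re, Complex.I_im]
    · exact (by simpa using h1)
    · exact (by simpa using habs q t y1 y2 ht h2 h3)
  set F : ℂ → E := fun w =>
    (∫ t in x₀..w.re, f (t + q * I)) + I • ∫ s in q..w.im, f (w.re + s * I) with hFdef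
  have stepA : ∀ x y : ℝ, |x - x₀| ≤ r → |y - q| ≤ r →
      (∫ t in x₀..x, f (t + q * I)) + I • (∫ s in q..y, f (x + s * I))
        = (∫ t in x₀..x, f (t + y * I)) + I • ∫ s in q..y, f (x₀ + s * I) := by
    intro x y hx hy
    have hzre : ((x₀ : ℂ) + (q : ℂ) * I).re = x₀ := by simp
    have hzim : ((x₀ : ℂ) + (q : ℂ) * I).im = q := by simp
    have hwre : ((x : ℂ) + (y : ℂ) * I).re = x := by simp
    have hwim : ((x : ℂ) + (y : ℂ) * I).im = y := by simp
    have hrect := Complex.integral_boundary_rect_eq_zero_of_continuousOn_of_differentiableOn f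
      ((x₀ : ℂ) + (q : ℂ) * I) ((x : ℂ) + (y : ℂ) * I) ?_ ?_
    · rw [hzre, hzim, hwre, hwim] at hrect
      have h2 : ((∫ t in x₀..x, f (t + q * I)) + I • (∫ s in q..y, f (x + s * I)))
          - ((∫ t in x₀..x, f (t + y * I)) + I • ∫ s in q..y, f (x₀ + s * I))
          = (∫ t in x₀..x, f (t + q * I)) - (∫ t in x₀..x, f (t + y * I))
            + I • (∫ s in q..y, f (x + s * I)) - I • ∫ s in q..y, f (x₀ + s * I) := by
        abel
      rw [hrect] at h2
      exact sub_eq_zero.mp h2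
    · rw [hzre, hzim, hwre, hwim]
      apply hc.mono
      intro u hu
      rw [Complex.mem_reProdIm] at hu
      exact key u (habs x₀ u.re x₀ x hu.1 hretriv hx) (habs q u.im q y hu.2 hqtriv hy)
    · rw [hzre, hzim, hwre, hwim]
      intro u hu
      rw [Complex.mem_reProdIm] at hu
      have hu1 := hu.1
      have hu2 := hu.2
      have hUmem : u ∈ U := by
        apply key
        · exact habs x₀ u.re x₀ x (by rw [mem_uIcc_iff]; exact ⟨hu1.1.le, hu1.2.le⟩) hretriv hx
        · exact habs q u.im q y (by rw [mem_uIcc_iff]; exact ⟨hu2.1.le, hu2.2.le⟩) hqtriv hy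
      have hne : u.im ≠ q := by
        intro heq
        rcases le_total q y with hqy | hqy
        · rw [min_eq_left hqy] at hu2
          exact absurd (heq ▸ hu2.1) (lt_irrefl q)
        · rw [max_eq_left hqy] at hu2
          exact absurd (heq ▸ hu2.2) (lt_irrefl q)
      exact (hd u hUmem hne).differentiableWithinAt
  have hFderiv : ∀ w : ℂ, |w.re - x₀| < r → |w.im - q| < r → HasDerivAt F (f w) w := by
    intro w hw1 hw2
    rw [hasDerivAt_iff_isLittleO, Asymptotics.isLittleO_iff]
    intro c hc0
    have hcw : ContinuousAt f w := hc.continuousAt (hU.mem_nhds (key w hw1.le hw2.le))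
    obtain ⟨δ, hδ, hδf⟩ := Metric.continuousAt_iff.mp hcw (c / 2) (by positivity)
    have e1 : 0 < r - |w.re - x₀| := by linarith
    have e2 : 0 < r - |w.im - q| := by linarith
    set ρ := min (δ / 2) (min ((r - |w.re - x₀|) / 2) ((r - |w.im - q|) / 2)) with hρdef
    have hρpos : 0 < ρ := lt_min (by linarith) (lt_min (by linarith) (by linarith))
    rw [Metric.eventually_nhds_iff]
    refine ⟨ρ, hρpos, ?_⟩
    intro w' hw'
    have hxx' : |w'.re - w.re| ≤ dist w' w := by
      rw [Complex.dist_eq, show w'.re - w.re = (w' - w).re from by simp]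
      exact Complex.abs_re_le_norm _
    have hyy' : |w'.im - w.im| ≤ dist w' w := by
      rw [Complex.dist_eq, show w'.im - w.im = (w' - w).im from by simp]
      exact Complex.abs_im_le_norm _
    have hρ1 : ρ ≤ δ / 2 := min_le_left _ _
    have hρ2 : ρ ≤ (r - |w.re - x₀|) / 2 := le_trans (min_le_right _ _) (min_le_left _ _)
    have hρ3 : ρ ≤ (r - |w.im - q|) / 2 := le_trans (min_le_right _ _) (min_le_right _ _)
    have hx'b : |w'.re - x₀| ≤ r := by
      have h5 := abs_sub_le w'.re w.re x₀
      have h6 : |w'.re - w.re| < ρ := lt_of_le_of_lt hxx' hw'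
      linarith
    have hy'b : |w'.im - q| ≤ r := by
      have h5 := abs_sub_le w'.im w.im q
      have h6 : |w'.im - w.im| < ρ := lt_of_le_of_lt hyy' hw'
      linarith
    have int2 : IntervalIntegrable (fun t : ℝ => f (t + w'.im * I)) volume x₀ w.re :=
      hseg _ _ _ hretriv hw1.le hy'b
    have int3 : IntervalIntegrable (fun t : ℝ => f (t + w'.im * I)) volume w.re w'.re :=
      hseg _ _ _ hw1.le hx'b hy'b
    have int5 : IntervalIntegrable (fun s : ℝ => f (w.re + s * I)) volume q w.im :=
      hvseg _ _ _ hw1.le hqtriv hw2.le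
    have int6 : IntervalIntegrable (fun s : ℝ => f (w.re + s * I)) volume w.im w'.im :=
      hvseg _ _ _ hw1.le hw2.le hy'b
    have hsplit1 : (∫ t in x₀..w'.re, f (t + w'.im * I))
        = (∫ t in x₀..w.re, f (t + w'.im * I)) + ∫ t in w.re..w'.re, f (t + w'.im * I) :=
      (intervalIntegral.integral_add_adjacent_intervals int2 int3).symm
    have hsplit2 : (∫ s in q..w'.im, f (w.re + s * I))
        = (∫ s in q..w.im, f (w.re + s * I)) + ∫ s in w.im..w'.im, f (w.re + s * I) :=
      (intervalIntegral.integral_add_adjacent_intervals int5 int6).symm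
    have hFw' : F w' = (∫ t in x₀..w'.re, f (t + w'.im * I))
        + I • ∫ s in q..w'.im, f (x₀ + s * I) := stepA w'.re w'.im hx'b hy'b
    have hFmid : (∫ t in x₀..w.re, f (t + w'.im * I)) + I • (∫ s in q..w'.im, f (x₀ + s * I))
        = (∫ t in x₀..w.re, f (t + q * I)) + I • ∫ s in q..w'.im, f (w.re + s * I) :=
      (stepA w.re w'.im hw1.le hy'b).symm
    have hdecomp : F w' - F w
        = (∫ t in w.re..w'.re, f (t + w'.im * I)) + I • ∫ s in w.im..w'.im, f (w.re + s * I) := by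
      have hFw : F w = (∫ t in x₀..w.re, f (t + q * I))
          + I • ∫ s in q..w.im, f (w.re + s * I) := rfl
      rw [hFw', hFw, hsplit1]
      rw [show (∫ t in x₀..w.re, f (t + w'.im * I))
          = (∫ t in x₀..w.re, f (t + q * I)) + I • (∫ s in q..w'.im, f (w.re + s * I))
            - I • (∫ s in q..w'.im, f (x₀ + s * I)) from by rw [← hFmid]; abel]
      rw [hsplit2, smul_add]
      abel
    have hgoal : F w' - F w - (w' - w) • f w
        = (∫ t in w.re..w'.re, f (t + w'.im * I) - f w)
          + I • ∫ s in w.im..w'.im, f (w.re + s * I) - f w := by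
      rw [intervalIntegral.integral_sub int3 intervalIntegrable_const,
          intervalIntegral.integral_sub int6 intervalIntegrable_const,
          intervalIntegral.integral_const, intervalIntegral.integral_const, hdecomp, smul_sub]
      have hsc : (w' - w) • f w
          = ((w'.re - w.re : ℝ) • f w) + I • ((w'.im - w.im : ℝ) • f w) := by
        rw [← Complex.coe_smul, ← Complex.coe_smul, smul_smul, ← add_smul]
        congr 1
        apply Complex.ext <;> simp
      rw [hsc]
      abel
    have hb1 : ‖∫ t in w.re..w'.re, f (t + w'.im * I) - f w‖ ≤ (c / 2) * |w'.re - w.re| := by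
      apply intervalIntegral.norm_integral_le_of_norm_le_const
      intro t ht
      have ht' : t ∈ Set.uIcc w.re w'.re := Set.uIoc_subset_uIcc ht
      rw [← dist_eq_norm]
      apply le_of_lt (hδf ?_)
      rw [Complex.dist_eq]
      have h7 : |t - w.re| ≤ |w'.re - w.re| := habs2 _ _ _ ht'
      have h8 : |w'.re - w.re| < ρ := lt_of_le_of_lt hxx' hw'
      have h9 : |w'.im - w.im| < ρ := lt_of_le_of_lt hyy' hw'
      calc ‖((t : ℂ) + w'.im * I) - w‖
          ≤ |(((t : ℂ) + w'.im * I) - w).re| + |(((t : ℂ) + w'.im * I) - w).im| :=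
            Complex.norm_le_abs_re_add_abs_im _
        _ = |t - w.re| + |w'.im - w.im| := by simp
        _ < δ := by linarith
    have hb2 : ‖∫ s in w.im..w'.im, f (w.re + s * I) - f w‖ ≤ (c / 2) * |w'.im - w.im| := by
      apply intervalIntegral.norm_integral_le_of_norm_le_const
      intro s hs
      have hs' : s ∈ Set.uIcc w.im w'.im := Set.uIoc_subset_uIcc hs
      rw [← dist_eq_norm]
      apply le_of_lt (hδf ?_)
      rw [Complex.dist_eq]
      have h7 : |s - w.im| ≤ |w'.im - w.im| := habs2 _ _ _ hs'
      have h9 : |w'.im - w.im| < ρ := lt_of_le_of_lt hyy' hw'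
      calc ‖((w.re : ℂ) + s * I) - w‖
          ≤ |(((w.re : ℂ) + s * I) - w).re| + |(((w.re : ℂ) + s * I) - w).im| :=
            Complex.norm_le_abs_re_add_abs_im _
        _ = |s - w.im| := by simp
        _ < δ := by linarith
    have hnw : |w'.re - w.re| ≤ ‖w' - w‖ := by rw [← dist_eq_norm]; exact hxx'
    have hnw2 : |w'.im - w.im| ≤ ‖w' - w‖ := by rw [← dist_eq_norm]; exact hyy'
    calc ‖F w' - F w - (w' - w) • f w‖
        = ‖(∫ t in w.re..w'.re, f (t + w'.im * I) - f w)
            + I • ∫ s in w.im..w'.im, f (w.re + s * I) - f w‖ := by rw [hgoal]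
      _ ≤ ‖∫ t in w.re..w'.re, f (t + w'.im * I) - f w‖
            + ‖I • ∫ s in w.im..w'.im, f (w.re + s * I) - f w‖ := norm_add_le _ _
      _ = ‖∫ t in w.re..w'.re, f (t + w'.im * I) - f w‖
            + ‖∫ s in w.im..w'.im, f (w.re + s * I) - f w‖ := by
          rw [norm_smul, Complex.norm_I, one_mul]
      _ ≤ (c / 2) * |w'.re - w.re| + (c / 2) * |w'.im - w.im| := add_le_add hb1 hb2
      _ ≤ (c / 2) * ‖w' - w‖ + (c / 2) * ‖w' - w‖ := by
          have hc2 : (0:ℝ) ≤ c / 2 := by positivity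
          exact add_le_add (mul_le_mul_of_nonneg_left hnw hc2)
            (mul_le_mul_of_nonneg_left hnw2 hc2)
      _ = c * ‖w' - w‖ := by ring
  set S₀ : Set ℂ := {u : ℂ | |u.re - x₀| < r} ∩ {u : ℂ | |u.im - q| < r} with hS₀def
  have hS₀ : IsOpen S₀ := by
    apply IsOpen.inter
    · exact isOpen_lt (continuous_abs.comp (Complex.continuous_re.sub continuous_const))
        continuous_const
    · exact isOpen_lt (continuous_abs.comp (Complex.continuous_im.sub continuous_const))
        continuous_const
  have hFd : DifferentiableOn ℂ F S₀ := fun u hu =>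
    (hFderiv u hu.1 hu.2).differentiableAt.differentiableWithinAt
  have hFan : AnalyticOnNhd ℂ F S₀ := hFd.analyticOnNhd hS₀
  have hderivan : AnalyticOnNhd ℂ (deriv F) S₀ := hFan.deriv
  have hw₀S : w₀ ∈ S₀ := ⟨by simpa [hx₀] using hrpos, by simpa [him] using hrpos⟩
  have hev : f =ᶠ[𝓝 w₀] deriv F := by
    filter_upwards [hS₀.mem_nhds hw₀S] with u hu
    exact ((hFderiv u hu.1 hu.2).deriv).symm
  exact (hev.differentiableAt_iff.mpr (hderivan w₀ hw₀S).differentiableAt).differentiableWithinAt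

/-! ### Differentiability of the Schwarz reflection -/

lemma differentiableAt_conj_comp {F : ℂ → ℂ} {w : ℂ}
    (h : DifferentiableAt ℂ F ((starRingEnd ℂ) w)) :
    DifferentiableAt ℂ (fun u => (starRingEnd ℂ) (F ((starRingEnd ℂ) u))) w := by
  set J : ℂ →L[ℝ] ℂ := (Complex.conjCLE : ℂ ≃L[ℝ] ℂ).toContinuousLinearMap with hJdef
  have hJapp : ∀ u : ℂ, J u = (starRingEnd ℂ) u := fun u => rfl
  set d := deriv F ((starRingEnd ℂ) w) with hddef
  have hd : HasDerivAt F d ((starRingEnd ℂ) w) := h.hasDerivAt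
  have hA : HasFDerivAt F ((ContinuousLinearMap.smulRight (1 : ℂ →L[ℂ] ℂ) d).restrictScalars ℝ)
      ((starRingEnd ℂ) w) := (hd.hasFDerivAt).restrictScalars ℝ
  have hJ1 : HasFDerivAt (fun u : ℂ => (starRingEnd ℂ) u) J w := J.hasFDerivAt
  have hJ2 : HasFDerivAt (fun u : ℂ => (starRingEnd ℂ) u) J (F ((starRingEnd ℂ) w)) :=
    J.hasFDerivAt
  have hcomp : HasFDerivAt (fun u => (starRingEnd ℂ) (F ((starRingEnd ℂ) u)))
      (J.comp (((ContinuousLinearMap.smulRight (1 : ℂ →L[ℂ] ℂ) d).restrictScalars ℝ).comp J))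
      w := by
    have h1 : HasFDerivAt (fun u : ℂ => F ((starRingEnd ℂ) u))
        (((ContinuousLinearMap.smulRight (1 : ℂ →L[ℂ] ℂ) d).restrictScalars ℝ).comp J) w :=
      hA.comp w hJ1
    exact hJ2.comp w h1
  have heq : (ContinuousLinearMap.smulRight (1 : ℂ →L[ℂ] ℂ)
        ((starRingEnd ℂ) d)).restrictScalars ℝ
      = J.comp (((ContinuousLinearMap.smulRight (1 : ℂ →L[ℂ] ℂ) d).restrictScalars ℝ).comp J) := by
    apply ContinuousLinearMap.ext
    intro v
    simp only [ContinuousLinearMap.coe_restrictScalars', ContinuousLinearMap.coe_comp',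
      Function.comp_apply, ContinuousLinearMap.smulRight_apply, ContinuousLinearMap.one_apply,
      smul_eq_mul, hJapp, map_mul, Complex.conj_conj]
  exact (hasFDerivAt_of_restrictScalars (𝕜 := ℝ) hcomp heq).differentiableAt

/-! ### Uniqueness: a function continuous on a strip, analytic inside, vanishing on one
boundary line, vanishes identically. -/

lemma eq_zero_scalar {F : ℂ → ℂ} {h : ℝ}
    (hc : ContinuousOn F (Complex.im ⁻¹' Set.uIcc 0 h))
    (hd : DifferentiableOn ℂ F (Complex.im ⁻¹' Set.uIoo 0 h))
    (h0 : ∀ t : ℝ, F t = 0) : ∀ w : ℂ, w.im ∈ Set.uIcc 0 h → F w = 0 := by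
  by_cases hh : h = 0
  · subst hh
    intro w hw
    rw [Set.uIcc_self, Set.mem_singleton_iff] at hw
    have hwre : w = ((w.re : ℝ) : ℂ) := by apply Complex.ext <;> simp [hw]
    rw [hwre, h0]
  classical
  set m := |h| with hmdef
  have hmpos : 0 < m := abs_pos.mpr hh
  set G : ℂ → ℂ := fun u => (starRingEnd ℂ) (F ((starRingEnd ℂ) u)) with hGdef
  set H : ℂ → ℂ := fun u => if u.im ∈ Set.uIcc 0 h then F u else G u with hHdef
  set U : Set ℂ := Complex.im ⁻¹' Set.Ioo (-m) m with hUdef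
  have hUopen : IsOpen U := isOpen_Ioo.preimage Complex.continuous_im
  have hsign : ∀ v : ℝ, v ∈ Set.uIcc 0 h → |v| ≤ m := by
    intro v hv
    rw [hmdef]
    rcases le_total 0 h with h1 | h1
    · rw [Set.uIcc_of_le h1, Set.mem_Icc] at hv
      rw [_root_.abs_of_nonneg h1, abs_le]
      exact ⟨by linarith, hv.2⟩
    · rw [Set.uIcc_of_ge h1, Set.mem_Icc] at hv
      rw [_root_.abs_of_nonpos h1, abs_le]
      exact ⟨by linarith [hv.1], by linarith⟩
  have hneg_uIcc : ∀ (c : ℝ), ∀ v ∈ Set.uIcc (0:ℝ) c, -v ∈ Set.uIcc 0 (-c) := by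
    intro c v hv
    simp only [Set.mem_uIcc] at hv ⊢
    rcases hv with ⟨h1, h2⟩ | ⟨h1, h2⟩
    · right; constructor <;> linarith
    · left; constructor <;> linarith
  have hneg_uIoo : ∀ (c : ℝ), ∀ v ∈ Set.uIoo (0:ℝ) c, -v ∈ Set.uIoo 0 (-c) := by
    intro c v hv
    rw [mem_uIoo_iff] at hv ⊢
    rcases le_total 0 c with h1 | h1
    · rw [min_eq_left h1, max_eq_right h1] at hv
      rw [min_eq_right (by linarith), max_eq_left (by linarith)]
      exact ⟨by linarith, by linarith⟩
    · rw [min_eq_right h1, max_eq_left h1] at hv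
      rw [min_eq_left (by linarith), max_eq_right (by linarith)]
      exact ⟨by linarith, by linarith⟩
  have hdisj : ∀ v : ℝ, v ∈ Set.uIoo 0 (-h) → v ∉ Set.uIcc 0 h := by
    intro v hv hvmem
    rw [mem_uIoo_iff] at hv
    rcases le_total 0 h with h1 | h1
    · rw [min_eq_right (by linarith : -h ≤ 0), max_eq_left (by linarith : -h ≤ 0)] at hv
      rw [Set.uIcc_of_le h1, Set.mem_Icc] at hvmem
      linarith [hv.2, hvmem.1]
    · rw [min_eq_left (by linarith : (0:ℝ) ≤ -h), max_eq_right (by linarith : (0:ℝ) ≤ -h)] at hv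
      rw [Set.uIcc_of_ge h1, Set.mem_Icc] at hvmem
      linarith [hv.1, hvmem.2]
  have hcases : ∀ v : ℝ, -m < v → v < m → v ≠ 0 →
      v ∈ Set.uIoo 0 h ∨ v ∈ Set.uIoo 0 (-h) := by
    intro v h1 h2 h3
    rcases le_total 0 h with hsgn | hsgn
    · have hm : m = h := by rw [hmdef, _root_.abs_of_nonneg hsgn]
      rcases lt_or_gt_of_ne h3 with hv | hv
      · right
        rw [mem_uIoo_iff, min_eq_right (by linarith : -h ≤ 0),
          max_eq_left (by linarith : -h ≤ 0)]
        exact ⟨by linarith, hv⟩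
      · left
        rw [mem_uIoo_iff, min_eq_left hsgn, max_eq_right hsgn]
        exact ⟨hv, by linarith⟩
    · have hm : m = -h := by rw [hmdef, _root_.abs_of_nonpos hsgn]
      rcases lt_or_gt_of_ne h3 with hv | hv
      · left
        rw [mem_uIoo_iff, min_eq_right hsgn, max_eq_left hsgn]
        exact ⟨by linarith, hv⟩
      · right
        rw [mem_uIoo_iff, min_eq_left (by linarith : (0:ℝ) ≤ -h),
          max_eq_right (by linarith : (0:ℝ) ≤ -h)]
        exact ⟨hv, by linarith⟩
  have hGcont : ContinuousOn G (Complex.im ⁻¹' Set.uIcc 0 (-h)) := by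
    have hmaps : Set.MapsTo (fun u : ℂ => (starRingEnd ℂ) u)
        (Complex.im ⁻¹' Set.uIcc 0 (-h)) (Complex.im ⁻¹' Set.uIcc 0 h) := by
      intro u hu
      rw [Set.mem_preimage, Complex.conj_im]
      have h2 := hneg_uIcc (-h) u.im hu
      rwa [neg_neg] at h2
    exact continuous_star.comp_continuousOn (hc.comp continuous_star.continuousOn hmaps)
  have hHcont : ContinuousOn H U := by
    apply ContinuousOn.if
    · intro u hu
      have h2 := hu.2
      have hfr : frontier {a : ℂ | a.im ∈ Set.uIcc 0 h}
          = Complex.im ⁻¹' frontier (Set.uIcc 0 h) := Complex.frontier_preimage_im _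
      rw [hfr] at h2
      have him0 : u.im = 0 := by
        have hfi : frontier (Set.uIcc (0:ℝ) h) ⊆ {0, h} := by
          rcases le_total 0 h with h1 | h1
          · rw [Set.uIcc_of_le h1, frontier_Icc h1]
          · rw [Set.uIcc_of_ge h1, frontier_Icc h1]
            intro v hv
            rcases hv with hv | hv
            · exact Or.inr hv
            · exact Or.inl hv
        rcases hfi h2 with h3 | h3
        · exact h3
        · exfalso
          have hu1 : u.im ∈ Set.Ioo (-m) m := hu.1
          have := hsign h Set.right_mem_uIcc
          rw [Set.mem_Ioo] at hu1
          rw [h3] at hu1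
          rw [abs_le] at this
          rw [hmdef] at hu1
          rcases le_total 0 h with h4 | h4
          · rw [_root_.abs_of_nonneg h4] at hu1; linarith [hu1.2]
          · rw [_root_.abs_of_nonpos h4] at hu1; linarith [hu1.1]
      have hureal : (starRingEnd ℂ) u = u := Complex.conj_eq_iff_im.mpr him0
      have hu0 : F u = 0 := by
        have hwre : u = ((u.re : ℝ) : ℂ) := by apply Complex.ext <;> simp [him0]
        rw [hwre, h0]
      show F u = G u
      rw [hGdef]
      simp only []
      rw [hureal, hu0, map_zero]
    · apply hc.mono
      rintro u ⟨_, hu2⟩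
      have hclosed : IsClosed {a : ℂ | a.im ∈ Set.uIcc 0 h} := by
        have : IsClosed (Set.uIcc (0:ℝ) h) := by rw [Set.uIcc]; exact isClosed_Icc
        exact this.preimage Complex.continuous_im
      rwa [hclosed.closure_eq] at hu2
    · apply hGcont.mono
      rintro u ⟨hu1, hu2⟩
      have hset : {a : ℂ | ¬ a.im ∈ Set.uIcc 0 h} = Complex.im ⁻¹' ((Set.uIcc 0 h)ᶜ) := rfl
      rw [hset, Complex.closure_preimage_im] at hu2
      have hu1' : u.im ∈ Set.Ioo (-m) m := hu1
      rw [Set.mem_Ioo] at hu1'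
      rw [Set.mem_preimage] at hu2 ⊢
      rcases le_total 0 h with h1 | h1
      · have hmm : m = h := by rw [hmdef, _root_.abs_of_nonneg h1]
        rw [Set.uIcc_of_le h1, ← Set.Ici_inter_Iic, Set.compl_inter, Set.compl_Ici,
          Set.compl_Iic, closure_union, closure_Iio, closure_Ioi] at hu2
        have h5 : u.im ≤ 0 := by
          rcases hu2 with h6 | h6
          · exact h6
          · exfalso; rw [Set.mem_Ici] at h6; linarith [hu1'.2]
        rw [Set.uIcc_of_ge (by linarith : -h ≤ 0), Set.mem_Icc]
        constructor <;> [linarith [hu1'.1]; exact h5]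
      · have hmm : m = -h := by rw [hmdef, _root_.abs_of_nonpos h1]
        rw [Set.uIcc_of_ge h1, ← Set.Ici_inter_Iic, Set.compl_inter, Set.compl_Ici,
          Set.compl_Iic, closure_union, closure_Iio, closure_Ioi] at hu2
        have h5 : 0 ≤ u.im := by
          rcases hu2 with h6 | h6
          · exfalso; rw [Set.mem_Iic] at h6; linarith [hu1'.1]
          · exact h6
        rw [Set.uIcc_of_le (by linarith : (0:ℝ) ≤ -h), Set.mem_Icc]
        constructor <;> [exact h5; linarith [hu1'.2]]
  have hHdiff : DifferentiableOn ℂ H U := by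
    apply morera hUopen 0 hHcont
    intro u hu hne
    have hu1 : u.im ∈ Set.Ioo (-m) m := hu
    rw [Set.mem_Ioo] at hu1
    have hopen1 : IsOpen (Complex.im ⁻¹' Set.uIoo 0 h) := by
      rw [Set.uIoo]; exact isOpen_Ioo.preimage Complex.continuous_im
    have hopen2 : IsOpen (Complex.im ⁻¹' Set.uIoo 0 (-h)) := by
      rw [Set.uIoo]; exact isOpen_Ioo.preimage Complex.continuous_im
    rcases hcases u.im hu1.1 hu1.2 hne with hcase | hcase
    · have hev : H =ᶠ[𝓝 u] F := by
        filter_upwards [hopen1.mem_nhds hcase] with v hv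
        exact if_pos (Set.uIoo_subset_uIcc_self hv)
      exact hev.differentiableAt_iff.mpr (hd.differentiableAt (hopen1.mem_nhds hcase))
    · have hev : H =ᶠ[𝓝 u] G := by
        filter_upwards [hopen2.mem_nhds hcase] with v hv
        exact if_neg (hdisj _ hv)
      apply hev.differentiableAt_iff.mpr
      apply differentiableAt_conj_comp
      apply hd.differentiableAt
      apply hopen1.mem_nhds
      rw [Set.mem_preimage]
      have h1 : ((starRingEnd ℂ) u).im = -u.im := Complex.conj_im u
      rw [h1]
      have := hneg_uIoo (-h) u.im hcase
      rwa [neg_neg] at this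
  have hHan : AnalyticOnNhd ℂ H U := hHdiff.analyticOnNhd hUopen
  have hpre : IsPreconnected U := by
    apply Convex.isPreconnected
    exact (convex_Ioo (-m) m).linear_preimage Complex.imLm
  have h0U : (0:ℂ) ∈ U := by
    rw [hUdef, Set.mem_preimage]
    simp only [Complex.zero_im, Set.mem_Ioo]
    exact ⟨by linarith, hmpos⟩
  have hfreq : ∃ᶠ ζ in 𝓝[≠] (0:ℂ), H ζ = 0 := by
    have htend : Tendsto (fun n : ℕ => (((1:ℝ)/(n+1) : ℝ) : ℂ)) atTop (𝓝[≠] 0) := by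
      apply tendsto_nhdsWithin_of_tendsto_nhds_of_eventually_within
      · have h2 : Tendsto (fun n : ℕ => (((1:ℝ)/(n+1) : ℝ) : ℂ)) atTop (𝓝 ((0:ℝ):ℂ)) :=
          (Complex.continuous_ofReal.tendsto 0).comp tendsto_one_div_add_atTop_nhds_zero_nat
        simpa using h2
      · filter_upwards with n
        simp only [Set.mem_compl_iff, Set.mem_singleton_iff]
        intro hcon
        have h3 : (1:ℝ)/(n+1) = 0 := Complex.ofReal_eq_zero.mp hcon
        have hpos : 0 < (1:ℝ)/((n:ℝ)+1) := by positivity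
        rw [h3] at hpos
        exact lt_irrefl 0 hpos
    apply htend.frequently
    apply Frequently.of_forall
    intro n
    have hmem : ((((1:ℝ)/(n+1) : ℝ) : ℂ)).im ∈ Set.uIcc (0:ℝ) h := by
      simp only [Complex.ofReal_im]
      exact Set.left_mem_uIcc
    show H _ = 0
    rw [hHdef]
    simp only []
    rw [if_pos hmem, h0]
  have hH0 : Set.EqOn H 0 U :=
    hHan.eqOn_zero_of_preconnected_of_frequently_eq_zero hpre h0U hfreq
  have hFU : ∀ w : ℂ, w.im ∈ Set.uIcc 0 h → |w.im| < m → F w = 0 := by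
    intro w hw hwm
    have hwU : w ∈ U := by
      rw [hUdef, Set.mem_preimage, Set.mem_Ioo]
      rw [abs_lt] at hwm
      exact hwm
    have h1 := hH0 hwU
    rw [hHdef] at h1
    simp only [] at h1
    rw [if_pos hw] at h1
    simpa using h1
  intro w hw
  rcases lt_or_eq_of_le (hsign w.im hw) with hlt | heq
  · exact hFU w hw hlt
  · have hwim : w.im = h := by
      rcases le_total 0 h with h1 | h1
      · rw [Set.uIcc_of_le h1, Set.mem_Icc] at hw
        rw [_root_.abs_of_nonneg hw.1, hmdef, _root_.abs_of_nonneg h1] at heq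
        exact heq
      · rw [Set.uIcc_of_ge h1, Set.mem_Icc] at hw
        rw [_root_.abs_of_nonpos hw.2, hmdef, _root_.abs_of_nonpos h1] at heq
        linarith
    have hone : ∀ n : ℕ, (0:ℝ) < 1/((n:ℝ)+1) ∧ 1/((n:ℝ)+1) ≤ 1 := by
      intro n
      constructor
      · positivity
      · rw [div_le_one (by positivity)]
        have : (0:ℝ) ≤ (n:ℝ) := Nat.cast_nonneg n
        linarith
    set wn : ℕ → ℂ := fun n => w - ((h/(n+1) : ℝ) : ℂ) * I with hwndef
    have hterm : ∀ n : ℕ, (wn n).im = h - h/(n+1) := by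
      intro n
      rw [hwndef]
      have e : (w - ((h/((n:ℝ)+1) : ℝ) : ℂ) * I).im = w.im - h/((n:ℝ)+1) := by
        rw [Complex.sub_im, Complex.mul_im, Complex.ofReal_re, Complex.ofReal_im,
          Complex.I_re, Complex.I_im]
        ring
      rw [e, hwim]
    have hwn_mem : ∀ n : ℕ, (wn n).im ∈ Set.uIcc 0 h ∧ |(wn n).im| < m := by
      intro n
      obtain ⟨hp1, hp2⟩ := hone n
      have hfrac : h - h/(n+1) = h * (1 - 1/((n:ℝ)+1)) := by ring
      constructor
      · rw [hterm n]
        rcases le_total 0 h with h1 | h1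
        · rw [Set.uIcc_of_le h1, Set.mem_Icc]
          have e1 : 0 ≤ h/((n:ℝ)+1) := by positivity
          have e2 : h/((n:ℝ)+1) = h * (1/((n:ℝ)+1)) := by ring
          have e3 : h * (1/((n:ℝ)+1)) ≤ h * 1 := mul_le_mul_of_nonneg_left hp2 h1
          constructor <;> [nlinarith [e2, e3]; linarith]
        · rw [Set.uIcc_of_ge h1, Set.mem_Icc]
          have e2 : h/((n:ℝ)+1) = h * (1/((n:ℝ)+1)) := by ring
          have e1 : h/((n:ℝ)+1) ≤ 0 := by rw [e2]; nlinarith [hp1, h1]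
          have e3 : h * 1 ≤ h * (1/((n:ℝ)+1)) := mul_le_mul_of_nonpos_left hp2 h1
          constructor <;> [nlinarith [e2, e3]; linarith]
      · rw [hterm n, hfrac, hmdef, abs_mul]
        have h3 : |1 - 1/((n:ℝ)+1)| < 1 := by
          rw [abs_lt]
          constructor <;> [linarith; linarith]
        calc |h| * |1 - 1/((n:ℝ)+1)| < |h| * 1 :=
              mul_lt_mul_of_pos_left h3 (abs_pos.mpr hh)
          _ = |h| := mul_one _
    have hFn : ∀ n, F (wn n) = 0 := fun n => hFU _ (hwn_mem n).1 (hwn_mem n).2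
    have htw : Tendsto wn atTop (𝓝[Complex.im ⁻¹' Set.uIcc 0 h] w) := by
      apply tendsto_nhdsWithin_of_tendsto_nhds_of_eventually_within
      · have h5 : Tendsto (fun n : ℕ => h/((n:ℝ)+1)) atTop (𝓝 0) := by
          have h6 := tendsto_one_div_add_atTop_nhds_zero_nat.const_mul h
          simpa [div_eq_mul_inv] using h6
        have h7 : Tendsto (fun n : ℕ => ((h/((n:ℝ)+1) : ℝ) : ℂ)) atTop (𝓝 ((0:ℝ):ℂ)) :=
          (Complex.continuous_ofReal.tendsto 0).comp h5
        have h8 := h7.mul_const I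
        have h9 := (tendsto_const_nhds :
          Tendsto (fun _ : ℕ => w) atTop (𝓝 w)).sub h8
        rw [hwndef]
        simpa using h9
      · filter_upwards with n
        exact (hwn_mem n).1
    have hlim : Tendsto (fun n : ℕ => F (wn n)) atTop (𝓝 (F w)) := (hc w hw).tendsto.comp htw
    rw [show (fun n : ℕ => F (wn n)) = fun _ : ℕ => (0:ℂ) from funext hFn] at hlim
    exact tendsto_nhds_unique hlim tendsto_const_nhds

lemma strip_eq_zero [CompleteSpace E] {f : ℂ → E} {a b : ℝ}
    (hc : ContinuousOn f (Complex.im ⁻¹' Set.uIcc a b))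
    (hd : DifferentiableOn ℂ f (Complex.im ⁻¹' Set.uIoo a b))
    (h0 : ∀ w : ℂ, w.im = a → f w = 0) : ∀ w : ℂ, w.im ∈ Set.uIcc a b → f w = 0 := by
  intro w hw
  apply NormedSpace.eq_zero_of_forall_dual_eq_zero ℂ
  intro φ
  have hmem : ∀ v ∈ Set.uIcc (0:ℝ) (b - a), v + ((a:ℂ) * I).im ∈ Set.uIcc a b := by
    intro v hv
    have := mem_uIcc_add a hv
    rw [zero_add, sub_add_cancel] at this
    simpa using this
  have hmem' : ∀ v ∈ Set.uIoo (0:ℝ) (b - a), v + ((a:ℂ) * I).im ∈ Set.uIoo a b := by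
    intro v hv
    have := mem_uIoo_add a hv
    rw [zero_add, sub_add_cancel] at this
    simpa using this
  have hFc : ContinuousOn (fun u => φ (f (u + (a:ℂ) * I))) (Complex.im ⁻¹' Set.uIcc 0 (b - a)) :=
    φ.continuous.comp_continuousOn (contOn_comp_add hc ((a:ℂ) * I) hmem)
  have hFd : DifferentiableOn ℂ (fun u => φ (f (u + (a:ℂ) * I)))
      (Complex.im ⁻¹' Set.uIoo 0 (b - a)) :=
    φ.differentiable.comp_differentiableOn (diffOn_comp_add hd ((a:ℂ) * I) hmem')
  have hF0 : ∀ t : ℝ, φ (f ((t:ℂ) + (a:ℂ) * I)) = 0 := by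
    intro t
    rw [h0 _ (by simp), map_zero]
  have key := eq_zero_scalar hFc hFd hF0 (w - (a:ℂ) * I)
    (by
      have h1 : (w - (a:ℂ) * I).im = w.im + -a := by simp; ring
      rw [h1]
      have := mem_uIcc_add (-a) hw
      simpa [sub_eq_add_neg] using this)
  simpa using key

lemma strip_unique [CompleteSpace E] {f g : ℂ → E} {a b : ℝ}
    (hfc : ContinuousOn f (Complex.im ⁻¹' Set.uIcc a b))
    (hfd : DifferentiableOn ℂ f (Complex.im ⁻¹' Set.uIoo a b))
    (hgc : ContinuousOn g (Complex.im ⁻¹' Set.uIcc a b))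
    (hgd : DifferentiableOn ℂ g (Complex.im ⁻¹' Set.uIoo a b))
    (hedge : ∀ w : ℂ, w.im = a → f w = g w) :
    ∀ w : ℂ, w.im ∈ Set.uIcc a b → f w = g w := by
  intro w hw
  have := strip_eq_zero (f := f - g) (a := a) (b := b) (hfc.sub hgc) (hfd.sub hgd)
    (fun w hw => by simpa [sub_eq_zero] using hedge w hw) w hw
  simpa [sub_eq_zero] using this

/-! ### Gluing two analytic continuations along a line -/

lemma strip_glue_core [CompleteSpace E] {f g : ℂ → E} {p q r : ℝ} (hpq : p ≤ q) (hqr : q ≤ r)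
    (hfc : ContinuousOn f (Complex.im ⁻¹' Set.uIcc p q))
    (hfd : DifferentiableOn ℂ f (Complex.im ⁻¹' Set.uIoo p q))
    (hgc : ContinuousOn g (Complex.im ⁻¹' Set.uIcc q r))
    (hgd : DifferentiableOn ℂ g (Complex.im ⁻¹' Set.uIoo q r))
    (hm : ∀ w : ℂ, w.im = q → f w = g w) :
    ∃ F : ℂ → E, ContinuousOn F (Complex.im ⁻¹' Set.uIcc p r) ∧
      DifferentiableOn ℂ F (Complex.im ⁻¹' Set.uIoo p r) ∧
      (∀ w : ℂ, w.im ∈ Set.uIcc p q → F w = f w) ∧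
      (∀ w : ℂ, w.im ∈ Set.uIcc q r → F w = g w) := by
  classical
  have hpr : p ≤ r := hpq.trans hqr
  set F : ℂ → E := fun w => if w.im ≤ q then f w else g w with hFdef
  have hFc : ContinuousOn F (Complex.im ⁻¹' Set.uIcc p r) := by
    apply ContinuousOn.if
    · intro w hw
      have : w.im = q := by
        have h2 := hw.2
        rw [show {u : ℂ | u.im ≤ q} = {u : ℂ | u.im ≤ q} from rfl,
          Complex.frontier_setOf_im_le] at h2
        exact h2
      exact hm w this
    · apply hfc.mono
      rintro w ⟨hw1, hw2⟩
      have hcl : closure {u : ℂ | u.im ≤ q} = {u : ℂ | u.im ≤ q} :=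
        (isClosed_le Complex.continuous_im continuous_const).closure_eq
      rw [hcl] at hw2
      rw [Set.mem_preimage, Set.uIcc_of_le hpr, Set.mem_Icc] at hw1
      rw [Set.mem_preimage, Set.uIcc_of_le hpq, Set.mem_Icc]
      exact ⟨hw1.1, hw2⟩
    · apply hgc.mono
      rintro w ⟨hw1, hw2⟩
      have : {u : ℂ | ¬ u.im ≤ q} = {u : ℂ | q < u.im} := by
        ext u; simp [not_le]
      rw [this, Complex.closure_setOf_lt_im] at hw2
      rw [Set.mem_preimage, Set.uIcc_of_le hpr, Set.mem_Icc] at hw1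
      rw [Set.mem_preimage, Set.uIcc_of_le hqr, Set.mem_Icc]
      exact ⟨hw2, hw1.2⟩
  have hUopen : IsOpen (Complex.im ⁻¹' Set.uIoo p r) := by
    rw [Set.uIoo]
    exact isOpen_Ioo.preimage Complex.continuous_im
  have hFd : DifferentiableOn ℂ F (Complex.im ⁻¹' Set.uIoo p r) := by
    apply morera hUopen q (hFc.mono (Set.preimage_mono (Set.uIoo_subset_uIcc_self (a := p) (b := r))))
    intro u hu him
    rw [Set.mem_preimage, mem_uIoo_iff, min_eq_left hpr, max_eq_right hpr] at hu
    rcases lt_or_gt_of_ne him with hlt | hgt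
    · have hmem : u ∈ Complex.im ⁻¹' Set.uIoo p q := by
        rw [Set.mem_preimage, mem_uIoo_iff, min_eq_left hpq, max_eq_right hpq]
        exact ⟨hu.1, hlt⟩
      have hopen : IsOpen (Complex.im ⁻¹' Set.uIoo p q) := by
        rw [Set.uIoo]; exact isOpen_Ioo.preimage Complex.continuous_im
      have hev : F =ᶠ[𝓝 u] f := by
        filter_upwards [(isOpen_lt Complex.continuous_im continuous_const).mem_nhds
          (show u ∈ {v : ℂ | v.im < q} from hlt)] with v hv
        exact if_pos (le_of_lt hv)
      exact (hev.differentiableAt_iff.mpr (hfd.differentiableAt (hopen.mem_nhds hmem)))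
    · have hmem : u ∈ Complex.im ⁻¹' Set.uIoo q r := by
        rw [Set.mem_preimage, mem_uIoo_iff, min_eq_left hqr, max_eq_right hqr]
        exact ⟨hgt, hu.2⟩
      have hopen : IsOpen (Complex.im ⁻¹' Set.uIoo q r) := by
        rw [Set.uIoo]; exact isOpen_Ioo.preimage Complex.continuous_im
      have hev : F =ᶠ[𝓝 u] g := by
        filter_upwards [(isOpen_lt continuous_const Complex.continuous_im).mem_nhds
          (show u ∈ {v : ℂ | q < v.im} from hgt)] with v hv
        exact if_neg (not_le.mpr hv)
      exact (hev.differentiableAt_iff.mpr (hgd.differentiableAt (hopen.mem_nhds hmem)))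
  refine ⟨F, hFc, hFd, ?_, ?_⟩
  · intro w hw
    rw [Set.uIcc_of_le hpq, Set.mem_Icc] at hw
    exact if_pos hw.2
  · intro w hw
    rw [Set.uIcc_of_le hqr, Set.mem_Icc] at hw
    by_cases h : w.im ≤ q
    · have : w.im = q := le_antisymm h hw.1
      rw [hFdef]
      simp only [if_pos h]
      exact hm w this
    · exact if_neg h

lemma strip_glue [CompleteSpace E] {f g : ℂ → E} {p q r : ℝ} (hq : q ∈ Set.uIcc p r)
    (hfc : ContinuousOn f (Complex.im ⁻¹' Set.uIcc p q))
    (hfd : DifferentiableOn ℂ f (Complex.im ⁻¹' Set.uIoo p q))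
    (hgc : ContinuousOn g (Complex.im ⁻¹' Set.uIcc q r))
    (hgd : DifferentiableOn ℂ g (Complex.im ⁻¹' Set.uIoo q r))
    (hm : ∀ w : ℂ, w.im = q → f w = g w) :
    ∃ F : ℂ → E, ContinuousOn F (Complex.im ⁻¹' Set.uIcc p r) ∧
      DifferentiableOn ℂ F (Complex.im ⁻¹' Set.uIoo p r) ∧
      (∀ w : ℂ, w.im ∈ Set.uIcc p q → F w = f w) ∧
      (∀ w : ℂ, w.im ∈ Set.uIcc q r → F w = g w) := by
  rcases le_total p r with hpr | hpr
  · have hq' : p ≤ q ∧ q ≤ r := by rwa [Set.uIcc_of_le hpr, Set.mem_Icc] at hq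
    exact strip_glue_core hq'.1 hq'.2 hfc hfd hgc hgd hm
  · have hq' : r ≤ q ∧ q ≤ p := by
      rw [Set.uIcc_comm, Set.uIcc_of_le hpr, Set.mem_Icc] at hq; exact hq
    obtain ⟨F, h1, h2, h3, h4⟩ := strip_glue_core hq'.1 hq'.2
      (by rwa [Set.uIcc_comm r q]) (by rwa [Set.uIoo_comm r q])
      (by rwa [Set.uIcc_comm q p]) (by rwa [Set.uIoo_comm q p])
      (fun w hw => (hm w hw).symm)
    refine ⟨F, ?_, ?_, ?_, ?_⟩
    · rwa [Set.uIcc_comm p r]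
    · rwa [Set.uIoo_comm p r]
    · intro w hw; exact h4 w (by rwa [Set.uIcc_comm q p])
    · intro w hw; exact h3 w (by rwa [Set.uIcc_comm r q])

/-! ### Continuations of one-parameter representations -/

def IsCont (α : ℝ → E →L[ℂ] E) (z : ℂ) (a : E) (f : ℂ → E) : Prop :=
  ContinuousOn f (Complex.im ⁻¹' Set.uIcc 0 z.im) ∧
  DifferentiableOn ℂ f (Complex.im ⁻¹' Set.uIoo 0 z.im) ∧ ∀ t : ℝ, f t = α t a

lemma hasContVal_iff {α : ℝ → E →L[ℂ] E} {z : ℂ} {a b : E} :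
    HasContVal α z a b ↔ ∃ f, IsCont α z a f ∧ f z = b := by
  constructor
  · rintro ⟨f, h1, h2, h3, h4⟩
    exact ⟨f, ⟨h1, by rw [← interior_hStrip]; exact h2, h3⟩, h4⟩
  · rintro ⟨f, ⟨h1, h2, h3⟩, h4⟩
    exact ⟨f, h1, by rw [interior_hStrip]; exact h2, h3, h4⟩

variable {α : ℝ → E →L[ℂ] E}


lemma IsCont.translate [CompleteSpace E] (hα : IsOneParamRep α) {z : ℂ} {a : E} {f : ℂ → E}
    (hf : IsCont α z a f) (t : ℝ) :
    ∀ w : ℂ, w.im ∈ Set.uIcc 0 z.im → f (↑t + w) = α t (f w) := by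
  have hmaps : ∀ v ∈ Set.uIcc 0 z.im, v + ((t : ℂ)).im ∈ Set.uIcc (0:ℝ) z.im := by
    intro v hv; simpa using hv
  apply strip_unique (f := fun w => f (↑t + w)) (g := fun w => α t (f w)) (a := 0) (b := z.im)
  · have := contOn_comp_add (f := f) (s := Set.uIcc 0 z.im) (t := Set.uIcc 0 z.im) hf.1
      (t : ℂ) hmaps
    simpa [add_comm] using this
  · have := diffOn_comp_add (f := f) (s := Set.uIoo 0 z.im) (t := Set.uIoo 0 z.im) hf.2.1
      (t : ℂ) (by intro v hv; simpa using hv)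
    simpa [add_comm] using this
  · exact (α t).continuous.comp_continuousOn hf.1
  · exact (α t).differentiable.comp_differentiableOn hf.2.1
  · intro w hw
    have hwre : w = ((w.re : ℝ) : ℂ) := by
      apply Complex.ext <;> simp [hw]
    rw [hwre]
    have h1 : (↑t + ((w.re : ℝ) : ℂ)) = ((t + w.re : ℝ) : ℂ) := by push_cast; ring
    rw [h1, hf.2.2, hf.2.2, hα.map_add]
    simp [ContinuousLinearMap.comp_apply]

lemma IsCont.mono {z z' : ℂ} {a : E} {f : ℂ → E} (hf : IsCont α z a f)
    (h : z'.im ∈ Set.uIcc 0 z.im) : IsCont α z' a f :=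
  ⟨hf.1.mono (Set.preimage_mono (Set.uIcc_subset_uIcc Set.left_mem_uIcc h)),
   hf.2.1.mono (Set.preimage_mono (uIoo_subset_uIoo_of_mem Set.left_mem_uIcc h)),
   hf.2.2⟩



lemma IsCont.shift [CompleteSpace E] (hα : IsOneParamRep α) {Z y : ℂ} (w₀ : ℂ) {a : E}
    {f : ℂ → E} (hf : IsCont α Z a f)
    (h1 : ∀ v ∈ Set.uIcc 0 y.im, v + w₀.im ∈ Set.uIcc 0 Z.im) :
    IsCont α y (f w₀) (fun w => f (w + w₀)) := by
  have h2 : w₀.im ∈ Set.uIcc 0 Z.im := by simpa using h1 0 Set.left_mem_uIcc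
  have h3 : y.im + w₀.im ∈ Set.uIcc 0 Z.im := h1 y.im Set.right_mem_uIcc
  refine ⟨contOn_comp_add hf.1 w₀ h1, diffOn_comp_add hf.2.1 w₀ ?_, ?_⟩
  · intro v hv
    have := mem_uIoo_add w₀.im hv
    rw [zero_add] at this
    exact uIoo_subset_uIoo_of_mem h2 h3 this
  · intro t
    exact hf.translate hα t w₀ h2

/-! ### The three cases -/

section Main

variable [CompleteSpace E]

/-- In the second and third lemmas below, the shifted function `w ↦ g (w - z)` appears;
this records its boundary comparison with `f` on the line `Im = z.im`. -/
lemma match_line (hα : IsOneParamRep α) {y z : ℂ} {a b : E} {f g : ℂ → E}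
    (hf : IsCont α z a f) (hg : IsCont α y b g) (hfz : f z = b) :
    ∀ w : ℂ, w.im = z.im → f w = g (w + -z) := by
  intro w hw
  have him0 : (w + -z).im = 0 := by
    simp only [Complex.add_im, Complex.neg_im, hw]; ring
  have ht : w + -z = (((w + -z).re : ℝ) : ℂ) := by
    apply Complex.ext
    · simp
    · simp only [Complex.ofReal_im, him0]
  have e1 : f w = α ((w + -z).re) b := by
    have htr := hf.translate hα ((w + -z).re) z Set.right_mem_uIcc
    rw [hfz] at htr
    rw [← htr]
    congr 1
    rw [← ht]; ring
  have e2 : g (w + -z) = α ((w + -z).re) b := by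
    conv_lhs => rw [ht]
    exact hg.2.2 _
  rw [e1, e2]

/-- Comparison of `h` (a continuation on `S (y+z)`) with `w ↦ g (w - z)` on the
line `Im = (y+z).im`, where `g` is a continuation of `b` on `S y` and `h (y+z) = g y`. -/
lemma match_top (hα : IsOneParamRep α) {y z : ℂ} {a' b : E} {g h : ℂ → E}
    (hg : IsCont α y b g) (hh : IsCont α (y + z) a' h) (hval : h (y + z) = g y) :
    ∀ w : ℂ, w.im = (y + z).im → h w = g (w + -z) := by
  intro w hw
  have him0 : (w + -(y + z)).im = 0 := by
    simp only [Complex.add_im, Complex.neg_im, hw]; ring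
  have ht : w + -(y + z) = (((w + -(y + z)).re : ℝ) : ℂ) := by
    apply Complex.ext
    · simp
    · simp only [Complex.ofReal_im, him0]
  set t := (w + -(y + z)).re with htdef
  have hwy : w + -z = (t : ℂ) + y := by rw [← ht]; ring
  have e1 : h w = α t (g y) := by
    have htr := hh.translate hα t (y + z) Set.right_mem_uIcc
    rw [hval] at htr
    rw [← htr]
    congr 1
    rw [← ht]; ring
  have e2 : g (w + -z) = α t (g y) := by
    rw [hwy]
    exact hg.translate hα t y Set.right_mem_uIcc
  rw [e1, e2]

lemma comp_subset (hα : IsOneParamRep α) (y z : ℂ) :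
    ∀ a b c : E, HasContVal α z a b → HasContVal α y b c → HasContVal α (y + z) a c := by
  intro a b c h1 h2
  rw [hasContVal_iff] at h1 h2 ⊢
  obtain ⟨f, hf, hfz⟩ := h1
  obtain ⟨g, hg, hgy⟩ := h2
  have hσ : (y + z).im = y.im + z.im := Complex.add_im y z
  have hmatch := match_line hα hf hg hfz
  rcases tri z.im ((y + z).im) with hS | hO1 | hO2
  · -- same-sign case : glue f with g (· - z)
    have hmapc : ∀ v ∈ Set.uIcc z.im ((y + z).im), v + (-z).im ∈ Set.uIcc 0 y.im := by
      intro v hv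
      have h1 := mem_uIcc_add (-z.im) hv
      rw [add_neg_cancel] at h1
      rw [show (y + z).im + -z.im = y.im by rw [hσ]; ring] at h1
      simpa [Set.uIcc_comm] using h1
    have hmapd : ∀ v ∈ Set.uIoo z.im ((y + z).im), v + (-z).im ∈ Set.uIoo 0 y.im := by
      intro v hv
      have h1 := mem_uIoo_add (-z.im) hv
      rw [add_neg_cancel] at h1
      rw [show (y + z).im + -z.im = y.im by rw [hσ]; ring] at h1
      simpa [Set.uIoo_comm] using h1
    obtain ⟨F, hc1, hd1, he1, he2⟩ := strip_glue (p := 0) (q := z.im) (r := (y + z).im) hS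
      hf.1 hf.2.1 (contOn_comp_add hg.1 (-z) hmapc) (diffOn_comp_add hg.2.1 (-z) hmapd) hmatch
    refine ⟨F, ⟨hc1, hd1, ?_⟩, ?_⟩
    · intro t
      rw [he1 _ (by simp only [Complex.ofReal_im]; exact Set.left_mem_uIcc), hf.2.2]
    · rw [he2 _ Set.right_mem_uIcc]
      rw [show y + z + -z = y from by ring, hgy]
  · -- |Im y| ≤ |Im z|, opposite signs : restrict f
    have hsh : ∀ v ∈ Set.uIcc 0 y.im, v + z.im ∈ Set.uIcc 0 z.im := by
      intro v hv
      have h1 := mem_uIcc_add z.im hv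
      rw [zero_add] at h1
      refine Set.uIcc_subset_uIcc Set.right_mem_uIcc ?_ h1
      rw [← hσ]; exact hO1
    have hk : IsCont α y b (fun w => f (w + z)) := by
      have := hf.shift hα z hsh
      rwa [hfz] at this
    have huniq := strip_unique (a := 0) (b := y.im) hk.1 hk.2.1 hg.1 hg.2.1
      (by
        intro w hw
        have hwre : w = ((w.re : ℝ) : ℂ) := by apply Complex.ext <;> simp [hw]
        rw [hwre]
        exact (hk.2.2 w.re).trans (hg.2.2 w.re).symm)
    have hcval : f (y + z) = c := by
      have h1 := huniq y Set.right_mem_uIcc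
      simpa [hgy] using h1
    exact ⟨f, hf.mono hO1, hcval⟩
  · -- |Im y| ≥ |Im z|, opposite signs
    have hneg : -z.im ∈ Set.uIcc 0 y.im := by
      apply neg_mem_of (u := z.im) (v := y.im)
      rwa [hσ, add_comm] at hO2
    have hmapc : ∀ v ∈ Set.uIcc 0 z.im, v + (-z).im ∈ Set.uIcc 0 y.im := by
      intro v hv
      have h1 := mem_uIcc_add (-z.im) hv
      rw [zero_add, add_neg_cancel] at h1
      have h2 := Set.uIcc_subset_uIcc hneg Set.left_mem_uIcc h1
      simpa using h2
    have hmapd : ∀ v ∈ Set.uIoo 0 z.im, v + (-z).im ∈ Set.uIoo 0 y.im := by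
      intro v hv
      have h1 := mem_uIoo_add (-z.im) hv
      rw [zero_add, add_neg_cancel] at h1
      have h2 := uIoo_subset_uIoo_of_mem hneg Set.left_mem_uIcc h1
      simpa using h2
    have hfp := strip_unique (a := z.im) (b := 0)
      (by rw [Set.uIcc_comm]; exact hf.1) (by rw [Set.uIoo_comm]; exact hf.2.1)
      (by rw [Set.uIcc_comm]; exact contOn_comp_add hg.1 (-z) hmapc)
      (by rw [Set.uIoo_comm]; exact diffOn_comp_add hg.2.1 (-z) hmapd)
      hmatch
    have hreal : ∀ t : ℝ, g ((t : ℂ) + -z) = α t a := by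
      intro t
      have h1 := hfp (t : ℂ) (by simp only [Complex.ofReal_im]; exact Set.right_mem_uIcc)
      rw [hf.2.2] at h1
      exact h1.symm
    have hmapc2 : ∀ v ∈ Set.uIcc 0 ((y + z).im), v + (-z).im ∈ Set.uIcc 0 y.im := by
      intro v hv
      have h1 := mem_uIcc_add (-z.im) hv
      rw [zero_add] at h1
      rw [show (y + z).im + -z.im = y.im by rw [hσ]; ring] at h1
      have h2 := Set.uIcc_subset_uIcc hneg Set.right_mem_uIcc h1
      simpa using h2
    have hmapd2 : ∀ v ∈ Set.uIoo 0 ((y + z).im), v + (-z).im ∈ Set.uIoo 0 y.im := by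
      intro v hv
      have h1 := mem_uIoo_add (-z.im) hv
      rw [zero_add] at h1
      rw [show (y + z).im + -z.im = y.im by rw [hσ]; ring] at h1
      have h2 := uIoo_subset_uIoo_of_mem hneg Set.right_mem_uIcc h1
      simpa using h2
    refine ⟨fun w => g (w + -z),
      ⟨contOn_comp_add hg.1 (-z) hmapc2, diffOn_comp_add hg.2.1 (-z) hmapd2, hreal⟩, ?_⟩
    show g (y + z + -z) = c
    rw [show y + z + -z = y from by ring, hgy]

lemma domain_sup (hα : IsOneParamRep α) (y z : ℂ) {a b c' : E}
    (h1 : HasContVal α z a b) (h2 : HasContVal α (y + z) a c') :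
    ∃ b' c, HasContVal α z a b' ∧ HasContVal α y b' c := by
  rw [hasContVal_iff] at h1 h2
  obtain ⟨f, hf, hfz⟩ := h1
  obtain ⟨h, hh, hhv⟩ := h2
  have hσ : (y + z).im = y.im + z.im := Complex.add_im y z
  rcases tri z.im ((y + z).im) with hS | hO1 | hO2
  · -- same-sign : b' = b = h z, shift h
    have hhz : h z = b := by
      have hmono : IsCont α z a h := hh.mono hS
      have huniq := strip_unique (a := 0) (b := z.im) hf.1 hf.2.1 hmono.1 hmono.2.1
        (by
          intro w hw
          have hwre : w = ((w.re : ℝ) : ℂ) := by apply Complex.ext <;> simp [hw]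
          rw [hwre]
          exact (hf.2.2 w.re).trans (hmono.2.2 w.re).symm)
      have h1 := huniq z Set.right_mem_uIcc
      rw [← h1, hfz]
    have hsh : ∀ v ∈ Set.uIcc 0 y.im, v + z.im ∈ Set.uIcc 0 ((y + z).im) := by
      intro v hv
      have h1 := mem_uIcc_add z.im hv
      rw [zero_add, show y.im + z.im = (y + z).im from hσ.symm] at h1
      exact Set.uIcc_subset_uIcc hS Set.right_mem_uIcc h1
    have hk : IsCont α y b (fun w => h (w + z)) := by
      have := hh.shift hα z hsh
      rwa [hhz] at this
    exact ⟨b, h (y + z), hasContVal_iff.mpr ⟨f, hf, hfz⟩,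
      hasContVal_iff.mpr ⟨fun w => h (w + z), hk, rfl⟩⟩
  · -- shift f
    have hsh : ∀ v ∈ Set.uIcc 0 y.im, v + z.im ∈ Set.uIcc 0 z.im := by
      intro v hv
      have h1 := mem_uIcc_add z.im hv
      rw [zero_add] at h1
      refine Set.uIcc_subset_uIcc Set.right_mem_uIcc ?_ h1
      rw [← hσ]; exact hO1
    have hk : IsCont α y b (fun w => f (w + z)) := by
      have := hf.shift hα z hsh
      rwa [hfz] at this
    exact ⟨b, f (y + z), hasContVal_iff.mpr ⟨f, hf, hfz⟩,
      hasContVal_iff.mpr ⟨fun w => f (w + z), hk, rfl⟩⟩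
  · -- glue f (· + z) with h (· + z)
    have hneg : -z.im ∈ Set.uIcc 0 y.im := by
      apply neg_mem_of (u := z.im) (v := y.im)
      rwa [hσ, add_comm] at hO2
    have hm1c : ∀ v ∈ Set.uIcc (0:ℝ) (-z.im), v + z.im ∈ Set.uIcc 0 z.im := by
      intro v hv
      have h1 := mem_uIcc_add z.im hv
      rw [zero_add, neg_add_cancel] at h1
      rwa [Set.uIcc_comm] at h1
    have hm1d : ∀ v ∈ Set.uIoo (0:ℝ) (-z.im), v + z.im ∈ Set.uIoo 0 z.im := by
      intro v hv
      have h1 := mem_uIoo_add z.im hv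
      rw [zero_add, neg_add_cancel] at h1
      rwa [Set.uIoo_comm] at h1
    have hm2c : ∀ v ∈ Set.uIcc (-z.im) y.im, v + z.im ∈ Set.uIcc 0 ((y + z).im) := by
      intro v hv
      have h1 := mem_uIcc_add z.im hv
      rwa [neg_add_cancel, show y.im + z.im = (y + z).im from hσ.symm] at h1
    have hm2d : ∀ v ∈ Set.uIoo (-z.im) y.im, v + z.im ∈ Set.uIoo 0 ((y + z).im) := by
      intro v hv
      have h1 := mem_uIoo_add z.im hv
      rwa [neg_add_cancel, show y.im + z.im = (y + z).im from hσ.symm] at h1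
    have hmatch : ∀ w : ℂ, w.im = -z.im → f (w + z) = h (w + z) := by
      intro w hw
      have him0 : (w + z).im = 0 := by
        simp only [Complex.add_im, hw]; ring
      have ht : w + z = (((w + z).re : ℝ) : ℂ) := by
        apply Complex.ext
        · simp
        · simp only [Complex.ofReal_im, him0]
      conv_lhs => rw [ht]
      conv_rhs => rw [ht]
      rw [hf.2.2, hh.2.2]
    obtain ⟨G, hc1, hd1, he1, he2⟩ := strip_glue (p := 0) (q := -z.im) (r := y.im) hneg
      (contOn_comp_add hf.1 z hm1c) (diffOn_comp_add hf.2.1 z hm1d)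
      (contOn_comp_add hh.1 z hm2c) (diffOn_comp_add hh.2.1 z hm2d) hmatch
    have hbnd : ∀ t : ℝ, G t = α t b := by
      intro t
      rw [he1 _ (by simp only [Complex.ofReal_im]; exact Set.left_mem_uIcc)]
      have h1 := hf.translate hα t z Set.right_mem_uIcc
      rw [hfz] at h1
      exact h1
    exact ⟨b, G y, hasContVal_iff.mpr ⟨f, hf, hfz⟩,
      hasContVal_iff.mpr ⟨G, ⟨hc1, hd1, hbnd⟩, rfl⟩⟩

lemma range_sup (hα : IsOneParamRep α) (y z : ℂ) {b c a' : E}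
    (h1 : HasContVal α y b c) (h2 : HasContVal α (y + z) a' c) :
    ∃ a'' b'', HasContVal α z a'' b'' ∧ HasContVal α y b'' c := by
  rw [hasContVal_iff] at h1 h2
  obtain ⟨g, hg, hgy⟩ := h1
  obtain ⟨h, hh, hhv⟩ := h2
  have hσ : (y + z).im = y.im + z.im := Complex.add_im y z
  have hmt := match_top hα hg hh (by rw [hhv, hgy])
  rcases tri z.im ((y + z).im) with hS | hO1 | hO2
  · -- same-sign : restrict and shift h
    have hmono : IsCont α z a' h := hh.mono hS
    have hsh : ∀ v ∈ Set.uIcc 0 y.im, v + z.im ∈ Set.uIcc 0 ((y + z).im) := by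
      intro v hv
      have h1 := mem_uIcc_add z.im hv
      rw [zero_add, show y.im + z.im = (y + z).im from hσ.symm] at h1
      exact Set.uIcc_subset_uIcc hS Set.right_mem_uIcc h1
    have hk : IsCont α y (h z) (fun w => h (w + z)) := hh.shift hα z hsh
    exact ⟨a', h z, hasContVal_iff.mpr ⟨h, hmono, rfl⟩,
      hasContVal_iff.mpr ⟨fun w => h (w + z), hk, hhv⟩⟩
  · -- glue h with g (· - z)
    have hm2c : ∀ v ∈ Set.uIcc ((y + z).im) z.im, v + (-z).im ∈ Set.uIcc 0 y.im := by
      intro v hv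
      have h1 := mem_uIcc_add (-z.im) hv
      rw [add_neg_cancel, show (y + z).im + -z.im = y.im from by rw [hσ]; ring] at h1
      rw [Set.uIcc_comm] at h1
      simpa using h1
    have hm2d : ∀ v ∈ Set.uIoo ((y + z).im) z.im, v + (-z).im ∈ Set.uIoo 0 y.im := by
      intro v hv
      have h1 := mem_uIoo_add (-z.im) hv
      rw [add_neg_cancel, show (y + z).im + -z.im = y.im from by rw [hσ]; ring] at h1
      rw [Set.uIoo_comm] at h1
      simpa using h1
    obtain ⟨G, hc1, hd1, he1, he2⟩ := strip_glue (p := 0) (q := (y + z).im) (r := z.im) hO1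
      hh.1 hh.2.1 (contOn_comp_add hg.1 (-z) hm2c) (diffOn_comp_add hg.2.1 (-z) hm2d) hmt
    have hbnd : ∀ t : ℝ, G t = α t a' := by
      intro t
      rw [he1 _ (by simp only [Complex.ofReal_im]; exact Set.left_mem_uIcc), hh.2.2]
    have hGz : G z = b := by
      rw [he2 _ Set.right_mem_uIcc,
        show z + -z = ((0 : ℝ) : ℂ) from by push_cast; ring, hg.2.2, hα.map_zero]
      rfl
    exact ⟨a', b, hasContVal_iff.mpr ⟨G, ⟨hc1, hd1, hbnd⟩, hGz⟩,
      hasContVal_iff.mpr ⟨g, hg, hgy⟩⟩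
  · -- compare h with g (· - z) on the top edge, then use g (· - z)
    have hneg : -z.im ∈ Set.uIcc 0 y.im := by
      apply neg_mem_of (u := z.im) (v := y.im)
      rwa [hσ, add_comm] at hO2
    have hm2c : ∀ v ∈ Set.uIcc 0 ((y + z).im), v + (-z).im ∈ Set.uIcc 0 y.im := by
      intro v hv
      have h1 := mem_uIcc_add (-z.im) hv
      rw [zero_add, show (y + z).im + -z.im = y.im from by rw [hσ]; ring] at h1
      have h2 := Set.uIcc_subset_uIcc hneg Set.right_mem_uIcc h1
      simpa using h2
    have hm2d : ∀ v ∈ Set.uIoo 0 ((y + z).im), v + (-z).im ∈ Set.uIoo 0 y.im := by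
      intro v hv
      have h1 := mem_uIoo_add (-z.im) hv
      rw [zero_add, show (y + z).im + -z.im = y.im from by rw [hσ]; ring] at h1
      have h2 := uIoo_subset_uIoo_of_mem hneg Set.right_mem_uIcc h1
      simpa using h2
    have hfp := strip_unique (a := (y + z).im) (b := 0)
      (by rw [Set.uIcc_comm]; exact hh.1) (by rw [Set.uIoo_comm]; exact hh.2.1)
      (by rw [Set.uIcc_comm]; exact contOn_comp_add hg.1 (-z) hm2c)
      (by rw [Set.uIoo_comm]; exact diffOn_comp_add hg.2.1 (-z) hm2d)
      hmt
    have hreal : ∀ t : ℝ, g ((t : ℂ) + -z) = α t a' := by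
      intro t
      have h1 := hfp (t : ℂ) (by simp only [Complex.ofReal_im]; exact Set.right_mem_uIcc)
      rw [hh.2.2] at h1
      exact h1.symm
    have hm1c : ∀ v ∈ Set.uIcc 0 z.im, v + (-z).im ∈ Set.uIcc 0 y.im := by
      intro v hv
      have h1 := mem_uIcc_add (-z.im) hv
      rw [zero_add, add_neg_cancel] at h1
      have h2 := Set.uIcc_subset_uIcc hneg Set.left_mem_uIcc h1
      simpa using h2
    have hm1d : ∀ v ∈ Set.uIoo 0 z.im, v + (-z).im ∈ Set.uIoo 0 y.im := by
      intro v hv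
      have h1 := mem_uIoo_add (-z.im) hv
      rw [zero_add, add_neg_cancel] at h1
      have h2 := uIoo_subset_uIoo_of_mem hneg Set.left_mem_uIcc h1
      simpa using h2
    have hpz : g (z + -z) = b := by
      rw [show z + -z = ((0 : ℝ) : ℂ) from by push_cast; ring, hg.2.2, hα.map_zero]
      rfl
    exact ⟨a', b,
      hasContVal_iff.mpr ⟨fun w => g (w + -z),
        ⟨contOn_comp_add hg.1 (-z) hm1c, diffOn_comp_add hg.2.1 (-z) hm1d, hreal⟩, hpz⟩,
      hasContVal_iff.mpr ⟨g, hg, hgy⟩⟩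

end Main

end OPR

/-- For arbitrary `y, z ∈ ℂ` one has `α_y α_z ⊆ α_{y+z}`, with
`D(α_y α_z) = D(α_z) ∩ D(α_{y+z})` and `Ran (α_y α_z) = Ran α_y ∩ Ran α_{y+z}`. -/
theorem cont_comp_subset
    {E : Type*} [NormedAddCommGroup E] [NormedSpace ℂ E] [CompleteSpace E]
    {α : ℝ → E →L[ℂ] E} (hα : IsOneParamRep α) (y z : ℂ) :
    (∀ a b c : E, HasContVal α z a b → HasContVal α y b c →
        HasContVal α (y + z) a c) ∧
    {a : E | ∃ b c, HasContVal α z a b ∧ HasContVal α y b c}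
      = {a : E | ∃ b, HasContVal α z a b} ∩ {a : E | ∃ c, HasContVal α (y + z) a c} ∧
    {c : E | ∃ a b, HasContVal α z a b ∧ HasContVal α y b c}
      = {c : E | ∃ b, HasContVal α y b c} ∩ {c : E | ∃ a, HasContVal α (y + z) a c} := by
  refine ⟨OPR.comp_subset hα y z, ?_, ?_⟩
  · ext a
    constructor
    · rintro ⟨b, c, h1, h2⟩
      exact ⟨⟨b, h1⟩, ⟨c, OPR.comp_subset hα y z a b c h1 h2⟩⟩
    · rintro ⟨⟨b, h1⟩, ⟨c', h2⟩⟩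
      obtain ⟨b', c, hb, hc⟩ := OPR.domain_sup hα y z h1 h2
      exact ⟨b', c, hb, hc⟩
  · ext c
    constructor
    · rintro ⟨a, b, h1, h2⟩
      exact ⟨⟨b, h2⟩, ⟨a, OPR.comp_subset hα y z a b c h1 h2⟩⟩
    · rintro ⟨⟨b, h1⟩, ⟨a', h2⟩⟩
      obtain ⟨a'', b'', ha, hb⟩ := OPR.range_sup hα y z h1 h2
      exact ⟨a'', b'', ha, hb⟩
end
end

section
/- Let α be a strongly continuous one-parameter isometric representation on a Banach space E. For a ∈ E, r > 0, z ∈ ℂ define the smeared element a(r,z) = (r/√π) ∫_ℝ exp(-r²(t-z)²) α_t(a) dt. Then a(r,z) belongs to D(α_y) for every y ∈ ℂ (it is entire analytic for α), and α_y(a(r,z)) = a(r, z+y) for every y ∈ ℂ. In particular ‖a(r,z)‖ ≤ ‖a‖ exp(r² (Im z)²). -/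
open Complex MeasureTheory Filter Topology Set

noncomputable section

/-- The smeared element `a(r,z) = (r/√π) ∫ exp (-r²(t-z)²) α_t a dt`. -/
def smear {E : Type*} [NormedAddCommGroup E] [NormedSpace ℂ E]
    (α : ℝ → E →L[ℂ] E) (a : E) (r : ℝ) (z : ℂ) : E :=
  ((r / Real.sqrt Real.pi : ℝ) : ℂ) •
    ∫ t : ℝ, Complex.exp (-(r : ℂ) ^ 2 * ((t : ℂ) - z) ^ 2) • α t a

section Aux

variable {E : Type*} [NormedAddCommGroup E] [NormedSpace ℂ E] [CompleteSpace E]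
  {α : ℝ → E →L[ℂ] E}

lemma exp_bound_aux (r t c wre wim B : ℝ) (h1 : wim ^ 2 ≤ B ^ 2)
    (h2 : (t - c) ^ 2 / 2 - 2 ≤ (t - wre) ^ 2) :
    -(r ^ 2 * (t - wre) ^ 2) + r ^ 2 * wim ^ 2
      ≤ r ^ 2 * B ^ 2 + 2 * r ^ 2 + -(r ^ 2 / 2) * (t - c) ^ 2 := by
  nlinarith [mul_le_mul_of_nonneg_left h2 (sq_nonneg r),
    mul_le_mul_of_nonneg_left h1 (sq_nonneg r)]

lemma gauss_re (r t : ℝ) (w : ℂ) :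
    (-(r : ℂ) ^ 2 * ((t : ℂ) - w) ^ 2).re
      = -(r ^ 2 * (t - w.re) ^ 2) + r ^ 2 * w.im ^ 2 := by
  simp [pow_two, Complex.mul_re, Complex.mul_im, Complex.sub_re, Complex.sub_im]
  ring

lemma norm_gauss (r t : ℝ) (w : ℂ) :
    ‖Complex.exp (-(r : ℂ) ^ 2 * ((t : ℂ) - w) ^ 2)‖
      = Real.exp (-(r ^ 2 * (t - w.re) ^ 2) + r ^ 2 * w.im ^ 2) := by
  rw [Complex.norm_exp, gauss_re]

lemma norm_apply_le (hα : IsOneParamRep α) (t : ℝ) (a : E) : ‖α t a‖ ≤ ‖a‖ := by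
  calc ‖α t a‖ ≤ ‖α t‖ * ‖a‖ := (α t).le_opNorm a
    _ ≤ 1 * ‖a‖ := mul_le_mul_of_nonneg_right (hα.norm_le t) (norm_nonneg a)
    _ = ‖a‖ := one_mul _

lemma cont_integrand (hα : IsOneParamRep α) (a : E) (r : ℝ) (w : ℂ) :
    Continuous fun t : ℝ => Complex.exp (-(r : ℂ) ^ 2 * ((t : ℂ) - w) ^ 2) • α t a := by
  apply Continuous.smul _ (hα.strong_cont a)
  exact Complex.continuous_exp.comp (by fun_prop)

lemma integrable_integrand (hα : IsOneParamRep α) (a : E) {r : ℝ} (hr : 0 < r) (w : ℂ) :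
    Integrable (fun t : ℝ => Complex.exp (-(r : ℂ) ^ 2 * ((t : ℂ) - w) ^ 2) • α t a) := by
  refine Integrable.mono'
      (g := fun t => Real.exp (r ^ 2 * w.im ^ 2) * ‖a‖ * Real.exp (-(r ^ 2) * (t - w.re) ^ 2))
      ?_ (cont_integrand hα a r w).aestronglyMeasurable ?_
  · exact ((integrable_exp_neg_mul_sq (by positivity)).comp_sub_right w.re).const_mul _
  · filter_upwards with t
    rw [norm_smul, norm_gauss]
    calc Real.exp (-(r ^ 2 * (t - w.re) ^ 2) + r ^ 2 * w.im ^ 2) * ‖α t a‖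
        ≤ Real.exp (-(r ^ 2 * (t - w.re) ^ 2) + r ^ 2 * w.im ^ 2) * ‖a‖ := by
          gcongr; exact norm_apply_le hα t a
      _ = Real.exp (r ^ 2 * w.im ^ 2) * ‖a‖ * Real.exp (-(r ^ 2) * (t - w.re) ^ 2) := by
          rw [Real.exp_add]; ring

lemma alpha_smear (hα : IsOneParamRep α) (a : E) {r : ℝ} (hr : 0 < r) (z : ℂ) (s : ℝ) :
    α s (smear α a r z) = smear α a r (z + s) := by
  unfold smear
  rw [ContinuousLinearMap.map_smul]
  congr 1
  rw [← ContinuousLinearMap.integral_comp_comm (α s) (integrable_integrand hα a hr z)]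
  have key : ∀ t : ℝ, α s (Complex.exp (-(r : ℂ) ^ 2 * ((t : ℂ) - z) ^ 2) • α t a)
      = (fun u : ℝ => Complex.exp (-(r : ℂ) ^ 2 * ((u : ℂ) - (z + s)) ^ 2) • α u a) (t + s) := by
    intro t
    have h1 : α s (α t a) = α (s + t) a := by rw [hα.map_add s t]; rfl
    simp only [_root_.map_smul, h1]
    have : (((t + s : ℝ) : ℂ) - (z + (s : ℂ))) = (t : ℂ) - z := by push_cast; ring
    rw [this, add_comm s t]
  simp only [key]
  exact integral_add_right_eq_self
    (fun u : ℝ => Complex.exp (-(r : ℂ) ^ 2 * ((u : ℂ) - (z + s)) ^ 2) • α u a) s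

lemma hasDerivAt_integrand (a : E) (r : ℝ) (t : ℝ) (w : ℂ) :
    HasDerivAt (fun w : ℂ => Complex.exp (-(r : ℂ) ^ 2 * ((t : ℂ) - w) ^ 2) • α t a)
      ((2 * (r : ℂ) ^ 2 * ((t : ℂ) - w) * Complex.exp (-(r : ℂ) ^ 2 * ((t : ℂ) - w) ^ 2))
        • α t a) w := by
  have h1 : HasDerivAt (fun w : ℂ => (t : ℂ) - w) (-1) w := (hasDerivAt_id w).const_sub _
  have h2 : HasDerivAt (fun w : ℂ => -(r : ℂ) ^ 2 * ((t : ℂ) - w) ^ 2)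
      (-(r : ℂ) ^ 2 * (2 * ((t : ℂ) - w) ^ 1 * (-1))) w := ((h1.pow 2)).const_mul _
  have h3 := (h2.cexp).smul_const (α t a)
  convert h3 using 2
  ring

lemma differentiable_integral (hα : IsOneParamRep α) (a : E) {r : ℝ} (hr : 0 < r) :
    Differentiable ℂ
      (fun w : ℂ => ∫ t : ℝ, Complex.exp (-(r : ℂ) ^ 2 * ((t : ℂ) - w) ^ 2) • α t a) := by
  intro w₀
  set c := w₀.re
  set B := |w₀.im| + 1
  have hB : 0 < B := by positivity
  set bound : ℝ → ℝ := fun t =>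
    2 * r ^ 2 * Real.exp (r ^ 2 * B ^ 2 + 2 * r ^ 2) * ‖a‖ *
      ((|t - c| + (1 + B)) * Real.exp (-(r ^ 2 / 2) * (t - c) ^ 2)) with hbound
  have bound_int : Integrable bound := by
    apply Integrable.const_mul
    have h1 : Integrable (fun t : ℝ => |t - c| * Real.exp (-(r ^ 2 / 2) * (t - c) ^ 2)) := by
      have := (integrable_mul_exp_neg_mul_sq (b := r ^ 2 / 2) (by positivity)).abs
      have h2 := this.comp_sub_right c
      refine h2.congr (Eventually.of_forall fun t => ?_)
      simp [abs_mul, abs_of_pos (Real.exp_pos _)]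
    have h2 : Integrable (fun t : ℝ => (1 + B) * Real.exp (-(r ^ 2 / 2) * (t - c) ^ 2)) :=
      ((integrable_exp_neg_mul_sq (by positivity)).comp_sub_right c).const_mul _
    refine (h1.add h2).congr (Eventually.of_forall fun t => ?_)
    simp only [Pi.add_apply]
    ring
  have key := hasDerivAt_integral_of_dominated_loc_of_deriv_le (μ := volume)
    (F := fun w t => Complex.exp (-(r : ℂ) ^ 2 * ((t : ℂ) - w) ^ 2) • α t a)
    (F' := fun w t =>
      (2 * (r : ℂ) ^ 2 * ((t : ℂ) - w) * Complex.exp (-(r : ℂ) ^ 2 * ((t : ℂ) - w) ^ 2)) • α t a)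
    (x₀ := w₀) (bound := bound) (Metric.ball_mem_nhds w₀ one_pos)
    (Eventually.of_forall fun w => (cont_integrand hα a r w).aestronglyMeasurable)
    (integrable_integrand hα a hr w₀)
    ?_ ?_ bound_int
    (Eventually.of_forall fun t w _ => hasDerivAt_integrand a r t w)
  · exact ⟨_, key.2⟩
  · apply Continuous.aestronglyMeasurable
    apply Continuous.smul _ (hα.strong_cont a)
    fun_prop
  · filter_upwards with t w hw
    rw [norm_smul, norm_mul, norm_mul, norm_gauss]
    have hwre : |w.re - c| ≤ 1 := by
      have := Complex.abs_re_le_norm (w - w₀)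
      simp only [Complex.sub_re] at this
      have h := (mem_ball_iff_norm.mp hw).le
      simpa [c] using this.trans h
    have hwim : |w.im| ≤ B := by
      have h1 := Complex.abs_im_le_norm (w - w₀)
      simp only [Complex.sub_im] at h1
      have h := (mem_ball_iff_norm.mp hw).le
      have := h1.trans h
      have := abs_sub_abs_le_abs_sub w.im w₀.im
      simp only [B]; linarith
    have hnr : ‖(2 : ℂ) * (r : ℂ) ^ 2‖ = 2 * r ^ 2 := by
      simp [abs_of_pos hr]
    have habs : ‖(t : ℂ) - w‖ ≤ |t - c| + (1 + B) := by
      calc ‖(t : ℂ) - w‖ ≤ |((t : ℂ) - w).re| + |((t : ℂ) - w).im| :=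
            Complex.norm_le_abs_re_add_abs_im _
        _ = |t - w.re| + |w.im| := by simp
        _ ≤ (|t - c| + |c - w.re|) + B :=
            add_le_add (abs_sub_le t c w.re) hwim
        _ ≤ |t - c| + (1 + B) := by
            rw [abs_sub_comm] at hwre; linarith
    have hexp : Real.exp (-(r ^ 2 * (t - w.re) ^ 2) + r ^ 2 * w.im ^ 2)
        ≤ Real.exp (r ^ 2 * B ^ 2 + 2 * r ^ 2) * Real.exp (-(r ^ 2 / 2) * (t - c) ^ 2) := by
      rw [← Real.exp_add]
      apply Real.exp_le_exp.mpr
      have h1 : w.im ^ 2 ≤ B ^ 2 := by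
        have := pow_le_pow_left₀ (abs_nonneg w.im) hwim 2
        rwa [_root_.sq_abs] at this
      have h2 : (t - c) ^ 2 / 2 - 2 ≤ (t - w.re) ^ 2 := by
        have hd : |c - w.re| ≤ 1 := by rwa [abs_sub_comm]
        have hd1 : -1 ≤ c - w.re := by cases abs_le.mp hd; linarith
        have hd2 : c - w.re ≤ 1 := by cases abs_le.mp hd; linarith
        nlinarith [sq_nonneg (t - c + 2 * (c - w.re)), sq_nonneg (t - c - 2),
          sq_nonneg (t - c + 2), sq_nonneg (c - w.re)]
      exact exp_bound_aux r t c w.re w.im B h1 h2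
    calc ‖(2 : ℂ) * (r : ℂ) ^ 2‖ * ‖(t : ℂ) - w‖ *
          Real.exp (-(r ^ 2 * (t - w.re) ^ 2) + r ^ 2 * w.im ^ 2) * ‖α t a‖
        ≤ (2 * r ^ 2) * (|t - c| + (1 + B)) *
          (Real.exp (r ^ 2 * B ^ 2 + 2 * r ^ 2) * Real.exp (-(r ^ 2 / 2) * (t - c) ^ 2)) *
          ‖a‖ := by
          rw [hnr]
          gcongr <;>
            first
              | positivity
              | exact habs
              | exact hexp
              | exact norm_apply_le hα t a
      _ = bound t := by rw [hbound]; ring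

lemma differentiable_smear (hα : IsOneParamRep α) (a : E) {r : ℝ} (hr : 0 < r) (z : ℂ) :
    Differentiable ℂ (fun w : ℂ => smear α a r (z + w)) := by
  have h := differentiable_integral hα a hr
  have : (fun w : ℂ => smear α a r (z + w)) =
      fun w : ℂ => ((r / Real.sqrt Real.pi : ℝ) : ℂ) •
        (fun v : ℂ => ∫ t : ℝ, Complex.exp (-(r : ℂ) ^ 2 * ((t : ℂ) - v) ^ 2) • α t a)
          (z + w) := rfl
  rw [this]
  exact ((h.comp ((differentiable_id.const_add z)))).const_smul _

lemma smear_norm_le (hα : IsOneParamRep α) (a : E) {r : ℝ} (hr : 0 < r) (z : ℂ) :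
    ‖smear α a r z‖ ≤ ‖a‖ * Real.exp (r ^ 2 * z.im ^ 2) := by
  have hπ : (0 : ℝ) < Real.sqrt Real.pi := Real.sqrt_pos.mpr Real.pi_pos
  unfold smear
  rw [norm_smul]
  have hsc : ‖(((r / Real.sqrt Real.pi : ℝ)) : ℂ)‖ = r / Real.sqrt Real.pi := by
    rw [Complex.norm_real, Real.norm_eq_abs, abs_of_pos (by positivity)]
  rw [hsc]
  have hInorm : ‖∫ t : ℝ, Complex.exp (-(r : ℂ) ^ 2 * ((t : ℂ) - z) ^ 2) • α t a‖
      ≤ ∫ t : ℝ, Real.exp (r ^ 2 * z.im ^ 2) * ‖a‖ * Real.exp (-(r ^ 2) * (t - z.re) ^ 2) := by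
    apply norm_integral_le_of_norm_le
      (((integrable_exp_neg_mul_sq (by positivity : (0:ℝ) < r ^ 2)).comp_sub_right
        z.re).const_mul _)
    filter_upwards with t
    rw [norm_smul, norm_gauss]
    calc Real.exp (-(r ^ 2 * (t - z.re) ^ 2) + r ^ 2 * z.im ^ 2) * ‖α t a‖
        ≤ Real.exp (-(r ^ 2 * (t - z.re) ^ 2) + r ^ 2 * z.im ^ 2) * ‖a‖ := by
          gcongr; exact norm_apply_le hα t a
      _ = Real.exp (r ^ 2 * z.im ^ 2) * ‖a‖ * Real.exp (-(r ^ 2) * (t - z.re) ^ 2) := by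
          rw [Real.exp_add]; ring
  have hIval : ∫ t : ℝ, Real.exp (r ^ 2 * z.im ^ 2) * ‖a‖ * Real.exp (-(r ^ 2) * (t - z.re) ^ 2)
      = Real.exp (r ^ 2 * z.im ^ 2) * ‖a‖ * (Real.sqrt Real.pi / r) := by
    rw [MeasureTheory.integral_const_mul]
    congr 1
    have : (fun t : ℝ => Real.exp (-(r ^ 2) * (t - z.re) ^ 2))
        = fun t : ℝ => (fun u : ℝ => Real.exp (-(r ^ 2) * u ^ 2)) (t - z.re) := rfl
    rw [this, integral_sub_right_eq_self (fun u : ℝ => Real.exp (-(r ^ 2) * u ^ 2)) z.re,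
      integral_gaussian, Real.sqrt_div Real.pi_pos.le, Real.sqrt_sq hr.le]
  calc r / Real.sqrt Real.pi * ‖∫ t : ℝ, Complex.exp (-(r : ℂ) ^ 2 * ((t : ℂ) - z) ^ 2) • α t a‖
      ≤ r / Real.sqrt Real.pi *
        (Real.exp (r ^ 2 * z.im ^ 2) * ‖a‖ * (Real.sqrt Real.pi / r)) := by
        rw [← hIval]; gcongr
    _ = ‖a‖ * Real.exp (r ^ 2 * z.im ^ 2) := by
        field_simp

end Aux

/-- The smeared element `a(r,z)` is entire analytic for `α`, with
`α_y (a(r,z)) = a(r, z+y)` for all `y ∈ ℂ`, and `‖a(r,z)‖ ≤ ‖a‖ exp (r² (Im z)²)`. -/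
theorem smear_analytic
    {E : Type*} [NormedAddCommGroup E] [NormedSpace ℂ E] [CompleteSpace E]
    {α : ℝ → E →L[ℂ] E} (hα : IsOneParamRep α) (a : E) {r : ℝ} (hr : 0 < r) (z : ℂ) :
    (∀ y : ℂ, HasContVal α y (smear α a r z) (smear α a r (z + y))) ∧
    ‖smear α a r z‖ ≤ ‖a‖ * Real.exp (r ^ 2 * z.im ^ 2) := by
  constructor
  · intro y
    refine ⟨fun w => smear α a r (z + w), ?_, ?_, ?_, rfl⟩
    · exact (differentiable_smear hα a hr z).continuous.continuousOn
    · exact (differentiable_smear hα a hr z).differentiableOn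
    · intro t
      exact (alpha_smear hα a hr z t).symm
  · exact smear_norm_le hα a hr z
end
end

section
/- Let α be a strongly continuous one-parameter isometric representation on a Banach space E and z ∈ ℂ. Then the analytic continuation α_z is a densely defined operator with dense range. -/
open Complex MeasureTheory Filter Topology Set

noncomputable section

section AuxOneParam

open scoped Real

set_option linter.unusedSectionVars false

variable {E : Type*} [NormedAddCommGroup E] [NormedSpace ℂ E] [CompleteSpace E]

lemma OneParamAux.norm_ker (r : ℝ) (d : ℂ) (t : ℝ) :
    ‖Complex.exp (-(r:ℂ)^2 * ((t:ℂ) + d)^2)‖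
      = Real.exp (r^2 * d.im^2 - r^2 * (t + d.re)^2) := by
  rw [Complex.norm_exp]
  congr 1
  simp [pow_two, Complex.mul_re, Complex.mul_im, Complex.add_re, Complex.add_im]
  ring

open OneParamAux in
lemma OneParamAux.cont_ker (r : ℝ) (d : ℂ) {v : ℝ → E} (hv : Continuous v) :
    Continuous fun t : ℝ => Complex.exp (-(r:ℂ)^2 * ((t:ℂ) + d)^2) • v t :=
  (Complex.continuous_exp.comp (by fun_prop)).smul hv

open OneParamAux in
lemma OneParamAux.integrable_ker {r : ℝ} (hr : 0 < r) (d : ℂ) {v : ℝ → E} (hv : Continuous v)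
    {M : ℝ} (hM : ∀ t, ‖v t‖ ≤ M) :
    Integrable fun t : ℝ => Complex.exp (-(r:ℂ)^2 * ((t:ℂ) + d)^2) • v t := by
  have hint : Integrable fun t : ℝ =>
      (Real.exp (r^2 * d.im^2) * M) * Real.exp (-(r^2) * (t + d.re)^2) :=
    (((integrable_exp_neg_mul_sq (by positivity : (0:ℝ) < r^2)).comp_add_right d.re).const_mul _)
  refine hint.mono' ((cont_ker r d hv).aestronglyMeasurable) ?_
  filter_upwards with t
  rw [norm_smul, norm_ker]
  calc Real.exp (r^2 * d.im^2 - r^2 * (t + d.re)^2) * ‖v t‖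
      ≤ Real.exp (r^2 * d.im^2 - r^2 * (t + d.re)^2) * M :=
        mul_le_mul_of_nonneg_left (hM t) (Real.exp_pos _).le
    _ = Real.exp (r^2 * d.im^2) * M * Real.exp (-(r^2) * (t + d.re)^2) := by
        rw [show r^2 * d.im^2 - r^2*(t+d.re)^2 = r^2*d.im^2 + (-(r^2)*(t+d.re)^2) by ring,
          Real.exp_add]; ring

lemma OneParamAux.hasDerivAt_ker (r : ℝ) (c : ℂ) (t : ℝ) (v : E) (w : ℂ) :
    HasDerivAt (fun w : ℂ => Complex.exp (-(r:ℂ)^2 * ((t:ℂ) + (c - w))^2) • v)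
      ((Complex.exp (-(r:ℂ)^2 * ((t:ℂ) + (c - w))^2) * (2*(r:ℂ)^2*((t:ℂ) + (c - w)))) • v) w := by
  have h1 : HasDerivAt (fun w : ℂ => (t:ℂ) + (c - w)) (-1) w := by
    have := ((hasDerivAt_id w).const_sub ((t:ℂ) + c))
    refine this.congr_of_eventuallyEq ?_
    filter_upwards with x
    simp only [id]
    ring
  have h2 : HasDerivAt (fun w : ℂ => -(r:ℂ)^2 * ((t:ℂ) + (c - w))^2)
      (2*(r:ℂ)^2*((t:ℂ) + (c - w))) w := by
    have := ((h1.pow 2).const_mul (-(r:ℂ)^2))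
    refine this.congr_deriv ?_
    norm_num
    ring
  exact (h2.cexp).smul_const v

open OneParamAux in
lemma OneParamAux.differentiable_integral_ker {α : ℝ → E →L[ℂ] E}
    (hcont : ∀ a : E, Continuous fun t : ℝ => α t a) (hnorm : ∀ t : ℝ, ‖α t‖ ≤ 1)
    (a : E) {r : ℝ} (hr : 0 < r) (c : ℂ) :
    Differentiable ℂ fun w : ℂ => ∫ t : ℝ, Complex.exp (-(r:ℂ)^2 * ((t:ℂ) + (c - w))^2) • α t a := by
  intro w₀
  have haM : ∀ t : ℝ, ‖α t a‖ ≤ ‖a‖ := fun t =>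
    ((α t).le_opNorm a).trans (by nlinarith [hnorm t, norm_nonneg a, norm_nonneg (α t a)])
  set C : ℝ := ‖c - w₀‖ + 1 with hC
  have hC0 : 0 < C := by positivity
  clear_value C
  set bound : ℝ → ℝ := fun t =>
    Real.exp (2*r^2*C^2) * (2*r^2*(|t| + C)) * ‖a‖ * Real.exp (-(r^2/2) * t^2) with hbd
  have bound_int : Integrable bound := by
    have h1 : Integrable fun t : ℝ => |t| * Real.exp (-(r^2/2) * t^2) := by
      have := (integrable_mul_exp_neg_mul_sq (by positivity : (0:ℝ) < r^2/2)).abs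
      refine this.congr ?_
      filter_upwards with t
      rw [abs_mul, _root_.abs_of_nonneg (Real.exp_pos _).le]
    have h2 : Integrable fun t : ℝ => Real.exp (-(r^2/2) * t^2) :=
      integrable_exp_neg_mul_sq (by positivity)
    have := (h1.add (h2.const_mul C)).const_mul (Real.exp (2*r^2*C^2) * (2*r^2) * ‖a‖)
    refine this.congr ?_
    filter_upwards with t
    simp only [hbd, Pi.add_apply]
    ring
  have key := hasDerivAt_integral_of_dominated_loc_of_deriv_le (F := fun w t =>
      Complex.exp (-(r:ℂ)^2 * ((t:ℂ) + (c - w))^2) • α t a)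
      (F' := fun w t =>
      (Complex.exp (-(r:ℂ)^2 * ((t:ℂ) + (c - w))^2) * (2*(r:ℂ)^2*((t:ℂ) + (c - w)))) • α t a)
      (x₀ := w₀) (bound := bound) (Metric.ball_mem_nhds w₀ one_pos)
      ?_ ?_ ?_ ?_ bound_int ?_
  · exact key.2.differentiableAt
  · filter_upwards with w
    exact (cont_ker r (c - w) (hcont a)).aestronglyMeasurable
  · exact integrable_ker hr (c - w₀) (hcont a) haM
  · refine Continuous.aestronglyMeasurable ?_
    exact ((Complex.continuous_exp.comp (by fun_prop)).mul (by fun_prop)).smul (hcont a)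
  · filter_upwards with t
    intro w hw
    have h3 : ‖c - w‖ ≤ C := by
      have hball : ‖w₀ - w‖ ≤ 1 := by
        have := Metric.mem_ball.1 hw
        rw [dist_eq_norm] at this
        have h := this.le
        calc ‖w₀ - w‖ = ‖w - w₀‖ := by
              exact norm_sub_rev _ _
          _ ≤ 1 := h
      calc ‖c - w‖ = ‖(c - w₀) + (w₀ - w)‖ := by ring_nf
        _ ≤ ‖c - w₀‖ + ‖w₀ - w‖ := norm_add_le _ _
        _ ≤ C := by rw [hC]; linarith
    have hre : |(c - w).re| ≤ C := (Complex.abs_re_le_norm _).trans h3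
    have him : |(c - w).im| ≤ C := (Complex.abs_im_le_norm _).trans h3
    have habs : ‖(t:ℂ) + (c - w)‖ ≤ |t| + C := by
      calc ‖(t:ℂ) + (c - w)‖ ≤ ‖(t:ℂ)‖ + ‖c-w‖ :=
            norm_add_le _ _
        _ ≤ |t| + C := by rw [Complex.norm_real, Real.norm_eq_abs]; exact add_le_add_right h3 _
    rw [norm_smul, norm_mul, norm_ker]
    have hbound1 : Real.exp (r^2*(c-w).im^2 - r^2*(t + (c-w).re)^2)
        ≤ Real.exp (2*r^2*C^2) * Real.exp (-(r^2/2) * t^2) := by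
      rw [← Real.exp_add]
      apply Real.exp_le_exp.2
      have h4 : (t + (c-w).re)^2 ≥ t^2/2 - (c-w).re^2 := by
        nlinarith [sq_nonneg (t + 2*(c-w).re)]
      have h5 : (c-w).re^2 ≤ C^2 := by
        rw [← _root_.sq_abs]
        exact pow_le_pow_left₀ (abs_nonneg _) hre 2
      have h6 : (c-w).im^2 ≤ C^2 := by
        rw [← _root_.sq_abs]
        exact pow_le_pow_left₀ (abs_nonneg _) him 2
      have p4 : r^2 * (t^2/2 - (c-w).re^2) ≤ r^2 * (t + (c-w).re)^2 :=
        mul_le_mul_of_nonneg_left h4 (sq_nonneg r)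
      have p5 : r^2 * (c-w).re^2 ≤ r^2 * C^2 := mul_le_mul_of_nonneg_left h5 (sq_nonneg r)
      have p6 : r^2 * (c-w).im^2 ≤ r^2 * C^2 := mul_le_mul_of_nonneg_left h6 (sq_nonneg r)
      nlinarith [p4, p5, p6]
    have hbound2 : ‖2*(r:ℂ)^2*((t:ℂ) + (c - w))‖ ≤ 2*r^2*(|t| + C) := by
      rw [norm_mul]
      have h7 : (2*(r:ℂ)^2) = ((2*r^2:ℝ):ℂ) := by push_cast; ring
      rw [h7, Complex.norm_real, Real.norm_eq_abs, _root_.abs_of_nonneg (by positivity)]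
      exact mul_le_mul_of_nonneg_left habs (by positivity)
    calc Real.exp (r^2*(c-w).im^2 - r^2*(t + (c-w).re)^2) * ‖2*(r:ℂ)^2*((t:ℂ) + (c - w))‖ * ‖α t a‖
        ≤ (Real.exp (2*r^2*C^2) * Real.exp (-(r^2/2) * t^2)) * (2*r^2*(|t| + C)) * ‖a‖ := by
          apply mul_le_mul ?_ (haM t) (norm_nonneg _) (by positivity)
          exact mul_le_mul hbound1 hbound2 (norm_nonneg _) (by positivity)
      _ = bound t := by simp only [hbd]; ring
  · filter_upwards with t
    intro w hw
    exact hasDerivAt_ker r c t (α t a) w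

section WithRep

variable {α : ℝ → E →L[ℂ] E}
  (hmap_add : ∀ s t : ℝ, α (s + t) = (α s).comp (α t))
  (hcont : ∀ a : E, Continuous fun t : ℝ => α t a)
  (hnorm : ∀ t : ℝ, ‖α t‖ ≤ 1)

include hnorm in
lemma OneParamAux.haM (a : E) : ∀ t : ℝ, ‖α t a‖ ≤ ‖a‖ := fun t =>
  ((α t).le_opNorm a).trans (by nlinarith [hnorm t, norm_nonneg a, norm_nonneg ((α t) a)])

open OneParamAux in
include hmap_add hcont hnorm in
lemma OneParamAux.translation_ker (a : E) {r : ℝ} (hr : 0 < r) (c : ℂ) (s : ℝ) :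
    (∫ t : ℝ, Complex.exp (-(r:ℂ)^2 * ((t:ℂ) + (c - (s:ℂ)))^2) • α t a)
      = α s (∫ t : ℝ, Complex.exp (-(r:ℂ)^2 * ((t:ℂ) + c)^2) • α t a) := by
  rw [← ContinuousLinearMap.integral_comp_comm (α s) (integrable_ker hr c (hcont a) (haM hnorm a))]
  have step1 : ∀ t : ℝ, α s (Complex.exp (-(r:ℂ)^2 * ((t:ℂ) + c)^2) • α t a)
      = Complex.exp (-(r:ℂ)^2 * ((t:ℂ) + c)^2) • α (s + t) a := by
    intro t
    rw [(α s).map_smul, hmap_add s t]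
    rfl
  simp_rw [step1]
  have step2 : (∫ t : ℝ, Complex.exp (-(r:ℂ)^2 * ((t:ℂ) + c)^2) • α (s + t) a)
      = ∫ t : ℝ, (fun u : ℝ => Complex.exp (-(r:ℂ)^2 * ((u:ℂ) + (c - (s:ℂ)))^2) • α u a) (s + t) := by
    congr 1
    ext t
    simp only
    have : ((s + t : ℝ) : ℂ) + (c - (s:ℂ)) = (t:ℂ) + c := by push_cast; ring
    rw [this]
  rw [step2, integral_add_left_eq_self
    (fun u : ℝ => Complex.exp (-(r:ℂ)^2 * ((u:ℂ) + (c - (s:ℂ)))^2) • α u a) s]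

end WithRep

open OneParamAux in
lemma OneParamAux.integrable_ker0 {r : ℝ} (hr : 0 < r) {v : ℝ → E} (hv : Continuous v)
    {M : ℝ} (hM : ∀ t, ‖v t‖ ≤ M) :
    Integrable fun t : ℝ => Complex.exp (-(r:ℂ)^2 * (t:ℂ)^2) • v t := by
  have := integrable_ker hr 0 hv hM
  simpa using this

lemma OneParamAux.norm_ker0 (r : ℝ) (t : ℝ) :
    ‖Complex.exp (-(r:ℂ)^2 * (t:ℂ)^2)‖ = Real.exp (-(r^2) * t^2) := by
  rw [show ((r:ℂ)^2) = ((r^2:ℝ):ℂ) by push_cast; ring, norm_cexp_neg_mul_sq,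
    Complex.ofReal_re]

lemma OneParamAux.gauss_normalization {r : ℝ} (hr : 0 < r) (a : E) :
    (r / Real.sqrt π) • (∫ t : ℝ, Complex.exp (-(r:ℂ)^2 * (t:ℂ)^2) • a) = a := by
  rw [integral_smul_const]
  have h1 : (∫ t : ℝ, Complex.exp (-(r:ℂ)^2 * (t:ℂ)^2))
      = ((∫ t : ℝ, Real.exp (-(r^2) * t^2) : ℝ) : ℂ) := by
    calc (∫ t : ℝ, Complex.exp (-(r:ℂ)^2 * (t:ℂ)^2))
        = ∫ t : ℝ, ((Real.exp (-(r^2) * t^2) : ℝ) : ℂ) := by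
          congr 1
          ext t
          rw [Complex.ofReal_exp]
          push_cast
          ring_nf
      _ = ((∫ t : ℝ, Real.exp (-(r^2) * t^2) : ℝ) : ℂ) := integral_ofReal
  rw [h1, integral_gaussian]
  have h2 : Real.sqrt (π / r^2) = Real.sqrt π / r := by
    rw [Real.sqrt_div Real.pi_pos.le, Real.sqrt_sq hr.le]
  rw [h2]
  rw [Complex.coe_smul, smul_smul]
  have h4 : r / Real.sqrt π * (Real.sqrt π / r) = 1 := by
    field_simp
  rw [h4, one_smul]

open OneParamAux in
lemma OneParamAux.approx {α : ℝ → E →L[ℂ] E}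
    (hz : α 0 = ContinuousLinearMap.id ℂ E)
    (hcont : ∀ a : E, Continuous fun t : ℝ => α t a)
    (hnorm : ∀ t : ℝ, ‖α t‖ ≤ 1)
    (a : E) {ε : ℝ} (hε : 0 < ε) :
    ∃ r : ℝ, 0 < r ∧
      ‖(r / Real.sqrt π) • (∫ t : ℝ, Complex.exp (-(r:ℂ)^2 * (t:ℂ)^2) • α t a) - a‖ < ε := by
  have haM : ∀ t : ℝ, ‖α t a‖ ≤ ‖a‖ := fun t =>
    ((α t).le_opNorm a).trans (by nlinarith [hnorm t, norm_nonneg a, norm_nonneg ((α t) a)])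
  have haM2 : ∀ t : ℝ, ‖α t a - a‖ ≤ 2 * ‖a‖ := fun t => by
    calc ‖α t a - a‖ ≤ ‖α t a‖ + ‖a‖ := norm_sub_le _ _
      _ ≤ 2 * ‖a‖ := by linarith [haM t]
  have hcont0 : ContinuousAt (fun t : ℝ => α t a) 0 := (hcont a).continuousAt
  rw [Metric.continuousAt_iff] at hcont0
  obtain ⟨δ, hδ0, hδ⟩ := hcont0 (ε/4) (by positivity)
  have hδ' : ∀ t : ℝ, |t| < δ → ‖α t a - a‖ ≤ ε/4 := by
    intro t ht
    have := hδ (x := t) (by simpa [Real.dist_eq] using ht)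
    rw [dist_eq_norm] at this
    have h0 : α (0:ℝ) a = a := by rw [hz]; rfl
    rw [h0] at this
    exact this.le
  set ε' : ℝ := ε / (4 * Real.sqrt 2 * (‖a‖ + 1)) with hε'def
  have hε'0 : 0 < ε' := by
    have := Real.sqrt_pos.2 (by norm_num : (0:ℝ) < 2)
    positivity
  have htend : Tendsto (fun r : ℝ => Real.exp (-(r^2*δ^2)/2)) atTop (𝓝 0) := by
    have h1 : Tendsto (fun r : ℝ => r^2 * (δ^2/2)) atTop atTop :=
      (tendsto_pow_atTop two_ne_zero).atTop_mul_const (by positivity)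
    have h2 : Tendsto (fun r : ℝ => -(r^2*δ^2)/2) atTop atBot := by
      have := tendsto_neg_atTop_atBot.comp h1
      refine this.congr fun r => ?_
      simp only [Function.comp]
      ring
    exact Real.tendsto_exp_atBot.comp h2
  obtain ⟨r, hrbig, hr1⟩ := ((htend.eventually (gt_mem_nhds hε'0)).and
    (eventually_ge_atTop (1:ℝ))).exists
  have hr : 0 < r := lt_of_lt_of_le one_pos hr1
  refine ⟨r, hr, ?_⟩
  have I1 : Integrable fun t : ℝ => Complex.exp (-(r:ℂ)^2 * (t:ℂ)^2) • α t a :=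
    integrable_ker0 hr (hcont a) haM
  have I2 : Integrable fun t : ℝ => Complex.exp (-(r:ℂ)^2 * (t:ℂ)^2) • a :=
    integrable_ker0 hr continuous_const (fun _ => le_refl ‖a‖)
  have hdiff : (r / Real.sqrt π) • (∫ t : ℝ, Complex.exp (-(r:ℂ)^2 * (t:ℂ)^2) • (α t a - a))
      = (r / Real.sqrt π) • (∫ t : ℝ, Complex.exp (-(r:ℂ)^2 * (t:ℂ)^2) • α t a) - a := by
    simp_rw [smul_sub]
    rw [integral_sub I1 I2, smul_sub, gauss_normalization hr a]
  rw [← hdiff]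
  set T : ℝ := 2 * ‖a‖ * Real.exp (-(r^2*δ^2)/2) with hT
  set bound : ℝ → ℝ := fun t =>
    ε/4 * Real.exp (-(r^2) * t^2) + T * Real.exp (-(r^2/2) * t^2) with hbound
  have hb_int1 : Integrable fun t : ℝ => Real.exp (-(r^2) * t^2) :=
    integrable_exp_neg_mul_sq (by positivity)
  have hb_int2 : Integrable fun t : ℝ => Real.exp (-(r^2/2) * t^2) :=
    integrable_exp_neg_mul_sq (by positivity)
  have hb_int : Integrable bound := (hb_int1.const_mul _).add (hb_int2.const_mul _)
  have hptwise : ∀ t : ℝ, ‖Complex.exp (-(r:ℂ)^2 * (t:ℂ)^2) • (α t a - a)‖ ≤ bound t := by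
    intro t
    rw [norm_smul, norm_ker0]
    have hT0 : 0 ≤ T := by positivity
    rcases lt_or_ge (|t|) δ with ht | ht
    · have h1 : Real.exp (-(r^2) * t^2) * ‖α t a - a‖ ≤ Real.exp (-(r^2) * t^2) * (ε/4) :=
        mul_le_mul_of_nonneg_left (hδ' t ht) (Real.exp_pos _).le
      have h2 : 0 ≤ T * Real.exp (-(r^2/2) * t^2) := by positivity
      simp only [hbound]
      linarith
    · have hsq : δ^2 ≤ t^2 := by nlinarith [_root_.sq_abs t, abs_nonneg t]
      have h1 : Real.exp (-(r^2) * t^2) ≤ Real.exp (-(r^2*δ^2)/2) * Real.exp (-(r^2/2) * t^2) := by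
        rw [← Real.exp_add]
        apply Real.exp_le_exp.2
        nlinarith [sq_nonneg r]
      have h2 : Real.exp (-(r^2) * t^2) * ‖α t a - a‖
          ≤ (Real.exp (-(r^2*δ^2)/2) * Real.exp (-(r^2/2) * t^2)) * (2*‖a‖) := by
        apply mul_le_mul h1 (haM2 t) (norm_nonneg _) (by positivity)
      have h3 : 0 ≤ ε/4 * Real.exp (-(r^2) * t^2) := by positivity
      simp only [hbound, hT]
      nlinarith [Real.exp_pos (-(r^2/2) * t^2)]
  have hnormint : ‖∫ t : ℝ, Complex.exp (-(r:ℂ)^2 * (t:ℂ)^2) • (α t a - a)‖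
      ≤ ∫ t : ℝ, bound t :=
    norm_integral_le_of_norm_le hb_int (Eventually.of_forall hptwise)
  have hintbound : (∫ t : ℝ, bound t)
      = ε/4 * Real.sqrt (π / r^2) + T * Real.sqrt (π / (r^2/2)) := by
    simp only [hbound]
    rw [integral_add (hb_int1.const_mul _) (hb_int2.const_mul _),
      integral_const_mul, integral_const_mul, integral_gaussian, integral_gaussian]
  have hsqrt1 : Real.sqrt (π / r^2) = Real.sqrt π / r := by
    rw [Real.sqrt_div Real.pi_pos.le, Real.sqrt_sq hr.le]
  have hsqrt2 : Real.sqrt (π / (r^2/2)) = Real.sqrt 2 * Real.sqrt π / r := by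
    rw [show π / (r^2/2) = 2 * π / r^2 by ring, Real.sqrt_div (by positivity) _,
      Real.sqrt_sq hr.le, Real.sqrt_mul (by norm_num) π]
  have hπ : 0 < Real.sqrt π := Real.sqrt_pos.2 Real.pi_pos
  have h2pos : 0 < Real.sqrt 2 := Real.sqrt_pos.2 (by norm_num)
  calc ‖(r / Real.sqrt π) • ∫ t : ℝ, Complex.exp (-(r:ℂ)^2 * (t:ℂ)^2) • (α t a - a)‖
      = (r / Real.sqrt π) * ‖∫ t : ℝ, Complex.exp (-(r:ℂ)^2 * (t:ℂ)^2) • (α t a - a)‖ := by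
        rw [norm_smul, Real.norm_eq_abs, abs_of_pos (by positivity)]
    _ ≤ (r / Real.sqrt π) * (ε/4 * Real.sqrt (π / r^2) + T * Real.sqrt (π / (r^2/2))) := by
        rw [← hintbound]
        exact mul_le_mul_of_nonneg_left hnormint (by positivity)
    _ = ε/4 + Real.sqrt 2 * T := by
        rw [hsqrt1, hsqrt2]
        field_simp
    _ < ε := by
        have hTlt : T < 2 * ‖a‖ * ε' + ε' * 1 := by
          have h4 : Real.exp (-(r^2*δ^2)/2) < ε' := hrbig
          have h5 : 0 ≤ 2 * ‖a‖ := by positivity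
          nlinarith [Real.exp_pos (-(r^2*δ^2)/2)]
        have hkey : Real.sqrt 2 * T < Real.sqrt 2 * (2*‖a‖+1) * ε' := by
          have := mul_lt_mul_of_pos_left hTlt h2pos
          nlinarith
        have hval : Real.sqrt 2 * (2*‖a‖+1) * ε' ≤ ε/2 := by
          rw [hε'def]
          have h6 : Real.sqrt 2 * (2*‖a‖+1) ≤ (4 * Real.sqrt 2 * (‖a‖+1)) / 2 := by
            nlinarith [norm_nonneg a]
          calc Real.sqrt 2 * (2*‖a‖+1) * (ε / (4 * Real.sqrt 2 * (‖a‖ + 1)))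
              ≤ ((4 * Real.sqrt 2 * (‖a‖+1)) / 2) * (ε / (4 * Real.sqrt 2 * (‖a‖ + 1))) :=
                mul_le_mul_of_nonneg_right h6 (by positivity)
            _ = ε/2 := by
                have hD : (4 * Real.sqrt 2 * (‖a‖ + 1)) ≠ 0 := by positivity
                field_simp
        linarith

/-- The smeared analytic family. -/
def OneParamAux.smeared (α : ℝ → E →L[ℂ] E) (a : E) (r : ℝ) (c : ℂ) : ℂ → E := fun w =>
  (r / Real.sqrt π) • ∫ t : ℝ, Complex.exp (-(r:ℂ)^2 * ((t:ℂ) + (c - w))^2) • α t a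

open OneParamAux in
lemma OneParamAux.smeared_differentiable {α : ℝ → E →L[ℂ] E}
    (hcont : ∀ a : E, Continuous fun t : ℝ => α t a) (hnorm : ∀ t : ℝ, ‖α t‖ ≤ 1)
    (a : E) {r : ℝ} (hr : 0 < r) (c : ℂ) :
    Differentiable ℂ (smeared α a r c) :=
  fun w => ((differentiable_integral_ker hcont hnorm a hr c) w).const_smul _

open OneParamAux in
lemma OneParamAux.smeared_real {α : ℝ → E →L[ℂ] E}
    (hmap_add : ∀ s t : ℝ, α (s + t) = (α s).comp (α t))
    (hcont : ∀ a : E, Continuous fun t : ℝ => α t a) (hnorm : ∀ t : ℝ, ‖α t‖ ≤ 1)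
    (a : E) {r : ℝ} (hr : 0 < r) (c : ℂ) (s : ℝ) :
    smeared α a r c s = α s (smeared α a r c 0) := by
  unfold smeared
  rw [ContinuousLinearMap.map_smul_of_tower]
  congr 1
  rw [sub_zero]
  exact translation_ker hmap_add hcont hnorm a hr c s

open OneParamAux in
lemma OneParamAux.smeared_diag {α : ℝ → E →L[ℂ] E} (a : E) (r : ℝ) (c : ℂ) :
    smeared α a r c c
      = (r / Real.sqrt π) • ∫ t : ℝ, Complex.exp (-(r:ℂ)^2 * (t:ℂ)^2) • α t a := by
  unfold smeared
  simp

open OneParamAux in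
lemma OneParamAux.smeared_hasContVal {α : ℝ → E →L[ℂ] E}
    (hmap_add : ∀ s t : ℝ, α (s + t) = (α s).comp (α t))
    (hcont : ∀ a : E, Continuous fun t : ℝ => α t a) (hnorm : ∀ t : ℝ, ‖α t‖ ≤ 1)
    (a : E) {r : ℝ} (hr : 0 < r) (c : ℂ) (z : ℂ) :
    HasContVal α z (smeared α a r c 0) (smeared α a r c z) := by
  have hd := smeared_differentiable hcont hnorm a hr c
  exact ⟨smeared α a r c, hd.continuous.continuousOn, hd.differentiableOn,
    fun t => smeared_real hmap_add hcont hnorm a hr c t, rfl⟩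

end AuxOneParam

/-- `α_z` is densely defined and has dense range. -/
theorem cont_densely_defined_dense_range
    {E : Type*} [NormedAddCommGroup E] [NormedSpace ℂ E] [CompleteSpace E]
    {α : ℝ → E →L[ℂ] E} (hα : IsOneParamRep α) (z : ℂ) :
    Dense {a : E | ∃ b, HasContVal α z a b} ∧
    Dense {b : E | ∃ a, HasContVal α z a b} := by
  open OneParamAux in
  constructor
  · rw [Metric.dense_iff]
    intro x ε hε
    obtain ⟨r, hr, hclose⟩ :=
      OneParamAux.approx hα.map_zero hα.strong_cont hα.norm_le x hε
    refine ⟨OneParamAux.smeared α x r 0 0, ?_, ?_⟩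
    · rw [Metric.mem_ball, dist_eq_norm]
      rw [OneParamAux.smeared_diag x r 0]
      exact hclose
    · exact ⟨OneParamAux.smeared α x r 0 z,
        OneParamAux.smeared_hasContVal hα.map_add hα.strong_cont hα.norm_le x hr 0 z⟩
  · rw [Metric.dense_iff]
    intro x ε hε
    obtain ⟨r, hr, hclose⟩ :=
      OneParamAux.approx hα.map_zero hα.strong_cont hα.norm_le x hε
    refine ⟨OneParamAux.smeared α x r z z, ?_, ?_⟩
    · rw [Metric.mem_ball, dist_eq_norm]
      rw [OneParamAux.smeared_diag x r z]
      exact hclose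
    · exact ⟨OneParamAux.smeared α x r z 0,
        OneParamAux.smeared_hasContVal hα.map_add hα.strong_cont hα.norm_le x hr z z⟩
end
end
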